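/- arXiv:1311.1020 — 7 statements merged into one kernel-verified Lean document; each statement's English description precedes it below -/
import Mathlib

section
/- Let à be a d×d real non-singular matrix. Suppose à is diagonalizable over ℂ and all its eigenvalues have absolute value 1. Then there exist a real orthogonal d×d matrix U and a real symmetric positive definite d×d matrix Q such that à = Q U Q⁻¹. -/
open Matrix Finset Filter Topology

namespace EllipticAux

lemma eval_charpoly_eq {n : Type*} [Fintype n] [DecidableEq n] (M : Matrix n n ℂ) (z : ℂ) :
    M.charpoly.eval z = (Matrix.diagonal (fun _ => z) - M).det := by
  rw [Matrix.charpoly, ← Polynomial.coe_evalRingHom, RingHom.map_det]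
  congr 1
  ext i j
  by_cases h : i = j <;>
    simp [h, Matrix.charmatrix_apply, Matrix.diagonal_apply, Matrix.sub_apply]

lemma conj_mul {n : Type*} [Fintype n] [DecidableEq n] {P Pi : Matrix n n ℂ}
    (h1 : P * Pi = 1) (M N : Matrix n n ℂ) :
    (P * M * Pi) * (P * N * Pi) = P * (M * N) * Pi := by
  have h2 : Pi * P = 1 := mul_eq_one_comm.mp h1
  calc (P * M * Pi) * (P * N * Pi) = P * M * (Pi * P) * N * Pi := by noncomm_ring
    _ = P * (M * N) * Pi := by rw [h2]; noncomm_ring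

lemma conj_pow {n : Type*} [Fintype n] [DecidableEq n] {P Pi M : Matrix n n ℂ}
    (h1 : P * Pi = 1) (k : ℕ) : (P * M * Pi) ^ k = P * M ^ k * Pi := by
  induction k with
  | zero => simp [h1]
  | succ k ih => rw [pow_succ, ih, conj_mul h1, pow_succ]

lemma conj_diag_entry_bound {d : ℕ} (P Pi : Matrix (Fin d) (Fin d) ℂ) (w : Fin d → ℂ)
    (hw : ∀ k, ‖w k‖ ≤ 1) (i j : Fin d) :
    ‖(P * Matrix.diagonal w * Pi) i j‖ ≤
      ∑ k, ‖P i k‖ * ‖Pi k j‖ := by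
  have : (P * Matrix.diagonal w * Pi) i j = ∑ k, P i k * w k * Pi k j := by
    rw [Matrix.mul_apply]
    exact Finset.sum_congr rfl fun k _ => by rw [Matrix.mul_diagonal]
  rw [this]
  refine le_trans (norm_sum_le _ _) (Finset.sum_le_sum fun k _ => ?_)
  rw [norm_mul, norm_mul]
  calc ‖P i k‖ * ‖w k‖ * ‖Pi k j‖
      ≤ ‖P i k‖ * 1 * ‖Pi k j‖ := by
        gcongr; exact hw k
    _ = ‖P i k‖ * ‖Pi k j‖ := by ring

lemma dotProduct_sum_mulVec {d : ℕ} {ι : Type*} (s : Finset ι)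
    (F : ι → Matrix (Fin d) (Fin d) ℝ) (x : Fin d → ℝ) :
    x ⬝ᵥ ((∑ n ∈ s, F n) *ᵥ x) = ∑ n ∈ s, x ⬝ᵥ (F n *ᵥ x) := by
  classical
  induction s using Finset.cons_induction with
  | empty => simp [Matrix.mulVec, dotProduct]
  | cons a s ha ih =>
      rw [Finset.sum_cons, Finset.sum_cons, Matrix.add_mulVec, dotProduct_add, ih]

lemma tendsto_quad {d : ℕ} (S : ℕ → Matrix (Fin d) (Fin d) ℝ) (T : Matrix (Fin d) (Fin d) ℝ)
    (h : ∀ i j, Tendsto (fun k => S k i j) atTop (𝓝 (T i j))) (x y : Fin d → ℝ) :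
    Tendsto (fun k => x ⬝ᵥ (S k *ᵥ y)) atTop (𝓝 (x ⬝ᵥ (T *ᵥ y))) := by
  simp only [dotProduct, Matrix.mulVec]
  exact tendsto_finset_sum _ fun i _ =>
    ((tendsto_finset_sum _ fun j _ => (h i j).mul_const (y j)).const_mul (x i))

lemma tendsto_conj {d : ℕ} (A : Matrix (Fin d) (Fin d) ℝ) (S : ℕ → Matrix (Fin d) (Fin d) ℝ)
    (T : Matrix (Fin d) (Fin d) ℝ)
    (h : ∀ i j, Tendsto (fun k => S k i j) atTop (𝓝 (T i j))) (i j : Fin d) :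
    Tendsto (fun k => (Aᵀ * S k * A) i j) atTop (𝓝 ((Aᵀ * T * A) i j)) := by
  simp only [Matrix.mul_apply, Matrix.transpose_apply]
  exact tendsto_finset_sum _ fun l _ =>
    ((tendsto_finset_sum _ fun m _ => (h m l).const_mul (A m i)).mul_const (A l j))

lemma mulVec_sq_bound {d : ℕ} (M : Matrix (Fin d) (Fin d) ℝ) (c : ℝ)
    (hM : ∀ i j, |M i j| ≤ c) (y : Fin d → ℝ) :
    (M *ᵥ y) ⬝ᵥ (M *ᵥ y) ≤ (d : ℝ) ^ 2 * c ^ 2 * (y ⬝ᵥ y) := by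
  have key : ∀ i, (M *ᵥ y) i * (M *ᵥ y) i ≤ ((d : ℝ) * c ^ 2) * (y ⬝ᵥ y) := by
    intro i
    have h1 : (M *ᵥ y) i = ∑ j, M i j * y j := rfl
    calc (M *ᵥ y) i * (M *ᵥ y) i = (∑ j, M i j * y j) ^ 2 := by rw [h1]; ring
      _ ≤ (∑ j, (M i j) ^ 2) * (∑ j, (y j) ^ 2) := Finset.sum_mul_sq_le_sq_mul_sq _ _ _
      _ ≤ ((d : ℝ) * c ^ 2) * (∑ j, (y j) ^ 2) := by
          refine mul_le_mul_of_nonneg_right ?_ (Finset.sum_nonneg fun j _ => sq_nonneg _)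
          calc ∑ j, (M i j) ^ 2 ≤ ∑ _j : Fin d, c ^ 2 := Finset.sum_le_sum fun j _ => by
                rw [← sq_abs]; exact pow_le_pow_left₀ (abs_nonneg _) (hM i j) 2
            _ = (d : ℝ) * c ^ 2 := by
                simp [Finset.sum_const, nsmul_eq_mul, Finset.card_univ]
      _ = ((d : ℝ) * c ^ 2) * (y ⬝ᵥ y) := by simp [dotProduct, sq]
  calc (M *ᵥ y) ⬝ᵥ (M *ᵥ y) = ∑ i, (M *ᵥ y) i * (M *ᵥ y) i := rfl
    _ ≤ ∑ _i : Fin d, ((d : ℝ) * c ^ 2) * (y ⬝ᵥ y) := Finset.sum_le_sum fun i _ => key i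
    _ = (d : ℝ) ^ 2 * c ^ 2 * (y ⬝ᵥ y) := by
        simp [Finset.sum_const, nsmul_eq_mul, Finset.card_univ]; ring

end EllipticAux

open EllipticAux

/-- Any real non-singular matrix that is diagonalizable over ℂ with all
eigenvalues of absolute value 1 can be written as `Q * U * Q⁻¹` with `U` real orthogonal
and `Q` real symmetric positive definite. -/
theorem elliptic_stmt0 (d : ℕ) (A : Matrix (Fin d) (Fin d) ℝ)
    (hA : A.det ≠ 0)
    (hAdiag : ∃ Pm D : Matrix (Fin d) (Fin d) ℂ, IsUnit Pm ∧ D.IsDiag ∧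
      A.map Complex.ofReal = Pm * D * Pm⁻¹)
    (hAeig : ∀ z : ℂ, (Matrix.charpoly (A.map Complex.ofReal)).IsRoot z →
      ‖z‖ = 1) :
    ∃ U Q : Matrix (Fin d) (Fin d) ℝ,
      Uᵀ * U = 1 ∧ Qᵀ = Q ∧ (∀ x : Fin d → ℝ, x ≠ 0 → 0 < x ⬝ᵥ (Q *ᵥ x)) ∧
      A = Q * U * Q⁻¹ := by
  classical
  obtain ⟨Pm, D, hPu, hDdiag, hfact⟩ := hAdiag
  set B : Matrix (Fin d) (Fin d) ℂ := A.map Complex.ofReal with hB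
  clear_value B
  set v : Fin d → ℂ := D.diag with hv
  clear_value v
  have hD : D = Matrix.diagonal v := by rw [hv]; exact hDdiag.diagonal_diag.symm
  have hPdet : IsUnit Pm.det := (Matrix.isUnit_iff_isUnit_det _).mp hPu
  have hPP : Pm * Pm⁻¹ = 1 := Matrix.mul_nonsing_inv _ hPdet
  have hdet1 : Pm.det * Pm⁻¹.det = 1 := by
    rw [← Matrix.det_mul, hPP, Matrix.det_one]
  -- all eigenvalues have modulus 1
  have hv1 : ∀ k, ‖v k‖ = 1 := by
    intro k
    apply hAeig
    rw [Polynomial.IsRoot, eval_charpoly_eq]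
    have hscal : Matrix.diagonal (fun _ : Fin d => v k) - B
        = Pm * (Matrix.diagonal (fun _ => v k) - D) * Pm⁻¹ := by
      rw [Matrix.mul_sub, Matrix.sub_mul, hfact]
      congr 1
      have h1 : Matrix.diagonal (fun _ : Fin d => v k) = (v k) • (1 : Matrix (Fin d) (Fin d) ℂ) := by
        rw [smul_one_eq_diagonal]
      rw [h1, Matrix.mul_smul, Matrix.mul_one, Matrix.smul_mul, hPP]
    have hzero : (Matrix.diagonal (fun _ : Fin d => v k) - Matrix.diagonal v).det = 0 := by
      rw [Matrix.diagonal_sub, Matrix.det_diagonal]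
      exact Finset.prod_eq_zero (Finset.mem_univ k) (sub_self _)
    rw [hscal, hD, Matrix.det_mul, Matrix.det_mul, hzero]
    ring
  have hvne : ∀ k, v k ≠ 0 := by
    intro k h
    have := hv1 k
    rw [h] at this
    simp at this
  -- powers of B and B⁻¹
  have hBn : ∀ n : ℕ, B ^ n = Pm * Matrix.diagonal (v ^ n) * Pm⁻¹ := by
    intro n
    rw [hfact, hD, conj_pow hPP, Matrix.diagonal_pow]
  have hdiaginv : Matrix.diagonal v * Matrix.diagonal v⁻¹ = 1 := by
    rw [Matrix.diagonal_mul_diagonal]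
    have h : (fun i => v i * v⁻¹ i) = fun _ => (1 : ℂ) :=
      funext fun k => mul_inv_cancel₀ (hvne k)
    rw [h]
    exact Matrix.diagonal_one
  have hBinv : B⁻¹ = Pm * Matrix.diagonal v⁻¹ * Pm⁻¹ := by
    apply Matrix.inv_eq_right_inv
    rw [hfact, hD, conj_mul hPP, hdiaginv, Matrix.mul_one, hPP]
  have hBin : ∀ n : ℕ, (B⁻¹) ^ n = Pm * Matrix.diagonal (v⁻¹ ^ n) * Pm⁻¹ := by
    intro n
    rw [hBinv, conj_pow hPP, Matrix.diagonal_pow]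
  -- the uniform entry bound
  set c : ℝ := (∑ i, ∑ j, ∑ k, ‖Pm i k‖ * ‖Pm⁻¹ k j‖) + 1 with hc
  clear_value c
  have hsum_nonneg : 0 ≤ ∑ i, ∑ j, ∑ k, ‖Pm i k‖ * ‖Pm⁻¹ k j‖ := by
    positivity
  have hc1 : (1 : ℝ) ≤ c := by rw [hc]; linarith
  have hc0 : (0 : ℝ) < c := lt_of_lt_of_le one_pos hc1
  have keyentry : ∀ (w : Fin d → ℂ), (∀ k, ‖w k‖ ≤ 1) →
      ∀ i j, ‖(Pm * Matrix.diagonal w * Pm⁻¹) i j‖ ≤ c := by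
    intro w hw i j
    refine le_trans (conj_diag_entry_bound _ _ _ hw i j) ?_
    have h1 : (∑ k, ‖Pm i k‖ * ‖Pm⁻¹ k j‖)
        ≤ ∑ j', ∑ k, ‖Pm i k‖ * ‖Pm⁻¹ k j'‖ := by
      refine Finset.single_le_sum (f := fun j' => ∑ k, ‖Pm i k‖ * ‖Pm⁻¹ k j'‖)
        (fun j' _ => ?_) (Finset.mem_univ j)
      positivity
    have h2 : (∑ j', ∑ k, ‖Pm i k‖ * ‖Pm⁻¹ k j'‖)
        ≤ ∑ i', ∑ j', ∑ k, ‖Pm i' k‖ * ‖Pm⁻¹ k j'‖ := by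
      refine Finset.single_le_sum
        (f := fun i' => ∑ j', ∑ k, ‖Pm i' k‖ * ‖Pm⁻¹ k j'‖)
        (fun i' _ => ?_) (Finset.mem_univ i)
      positivity
    rw [hc]
    linarith
  -- transferring to real powers
  have hmappow : ∀ (M : Matrix (Fin d) (Fin d) ℝ) (n : ℕ),
      (M ^ n).map Complex.ofReal = (M.map Complex.ofReal) ^ n := by
    intro M n
    induction n with
    | zero =>
        simp only [pow_zero]
        exact Matrix.map_one _ Complex.ofReal_zero Complex.ofReal_one
    | succ n ih =>
        rw [pow_succ, pow_succ, ← ih]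
        exact Matrix.map_mul (f := Complex.ofRealHom)
  have hAdet : IsUnit A.det := isUnit_iff_ne_zero.mpr hA
  have hAA : A * A⁻¹ = 1 := Matrix.mul_nonsing_inv _ hAdet
  have hAiA : A⁻¹ * A = 1 := Matrix.nonsing_inv_mul _ hAdet
  have hAinvmap : (A⁻¹).map Complex.ofReal = B⁻¹ := by
    symm
    apply Matrix.inv_eq_right_inv
    have h3 : (A * A⁻¹).map (⇑Complex.ofRealHom)
        = A.map (⇑Complex.ofRealHom) * A⁻¹.map (⇑Complex.ofRealHom) :=
      Matrix.map_mul
    rw [hAA] at h3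
    have h4 : A.map (⇑Complex.ofRealHom) * A⁻¹.map (⇑Complex.ofRealHom) = 1 :=
      h3.symm.trans (Matrix.map_one _ Complex.ofReal_zero Complex.ofReal_one)
    rw [hB]
    exact h4
  have habs : ∀ (n : ℕ) i j, |(A ^ n) i j| ≤ c := by
    intro n i j
    have h1 : (((A ^ n) i j : ℝ) : ℂ) = (B ^ n) i j := by
      have h2 := congrFun (congrFun (hmappow A n) i) j
      rw [← hB] at h2
      exact h2
    calc |(A ^ n) i j| = ‖(((A ^ n) i j : ℝ) : ℂ)‖ := by rw [Complex.norm_real, Real.norm_eq_abs]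
      _ = ‖(B ^ n) i j‖ := by rw [h1]
      _ ≤ c := by
          rw [hBn n]
          refine keyentry _ (fun k => ?_) i j
          rw [Pi.pow_apply, norm_pow, hv1 k, one_pow]
  have habsinv : ∀ (n : ℕ) i j, |((A⁻¹) ^ n) i j| ≤ c := by
    intro n i j
    have h1 : ((((A⁻¹) ^ n) i j : ℝ) : ℂ) = ((B⁻¹) ^ n) i j := by
      have h2 := congrFun (congrFun (hmappow A⁻¹ n) i) j
      rw [hAinvmap] at h2
      exact h2
    calc |((A⁻¹) ^ n) i j| = ‖((((A⁻¹) ^ n) i j : ℝ) : ℂ)‖ :=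
          by rw [Complex.norm_real, Real.norm_eq_abs]
      _ = ‖((B⁻¹) ^ n) i j‖ := by rw [h1]
      _ ≤ c := by
          rw [hBin n]
          refine keyentry _ (fun k => ?_) i j
          rw [Pi.pow_apply, Pi.inv_apply, norm_pow, norm_inv, hv1 k, inv_one, one_pow]
  -- the Cesàro averages
  set Mq : ℕ → Matrix (Fin d) (Fin d) ℝ := fun n => (Aᵀ) ^ n * A ^ n with hMq
  have hMqdef : ∀ n, Mq n = (Aᵀ) ^ n * A ^ n := fun n => by rw [hMq]
  clear_value Mq
  set S : ℕ → Matrix (Fin d) (Fin d) ℝ :=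
    fun N => (N : ℝ)⁻¹ • ∑ n ∈ Finset.range N, Mq n with hS
  have hSdef : ∀ N, S N = ((N : ℕ) : ℝ)⁻¹ • ∑ n ∈ Finset.range N, Mq n := fun N => by rw [hS]
  clear_value S
  have hMqentry : ∀ (n : ℕ) i j, |Mq n i j| ≤ (d : ℝ) * c ^ 2 := by
    intro n i j
    have h1 : Mq n i j = ∑ k, (A ^ n) k i * (A ^ n) k j := by
      rw [hMqdef n, ← Matrix.transpose_pow, Matrix.mul_apply]
      rfl
    calc |Mq n i j| ≤ ∑ k, |(A ^ n) k i * (A ^ n) k j| := by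
          rw [h1]; exact Finset.abs_sum_le_sum_abs _ _
      _ ≤ ∑ _k : Fin d, c * c := Finset.sum_le_sum fun k _ => by
          rw [abs_mul]
          exact mul_le_mul (habs n k i) (habs n k j) (abs_nonneg _) hc0.le
      _ = (d : ℝ) * c ^ 2 := by
          rw [Finset.sum_const, Finset.card_univ, Fintype.card_fin, nsmul_eq_mul]
          ring
  have hSentry : ∀ (N : ℕ) i j, |S N i j| ≤ (d : ℝ) * c ^ 2 := by
    intro N i j
    rcases Nat.eq_zero_or_pos N with h | h
    · subst h
      have h0 : S 0 = 0 := by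
        rw [hSdef 0]
        simp
      rw [h0]
      simp only [Matrix.zero_apply, abs_zero]
      positivity
    · have h1 : S N i j = (N : ℝ)⁻¹ * ∑ n ∈ Finset.range N, Mq n i j := by
        rw [hSdef N, Matrix.smul_apply, Matrix.sum_apply, smul_eq_mul]
      have hN0 : (0 : ℝ) < N := by exact_mod_cast h
      rw [h1, abs_mul, abs_inv, Nat.abs_cast]
      calc (N : ℝ)⁻¹ * |∑ n ∈ Finset.range N, Mq n i j|
          ≤ (N : ℝ)⁻¹ * ((N : ℝ) * ((d : ℝ) * c ^ 2)) := by
            refine mul_le_mul_of_nonneg_left ?_ (by positivity)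
            calc |∑ n ∈ Finset.range N, Mq n i j| ≤ ∑ n ∈ Finset.range N, |Mq n i j| :=
                  Finset.abs_sum_le_sum_abs _ _
              _ ≤ ∑ _n ∈ Finset.range N, (d : ℝ) * c ^ 2 :=
                  Finset.sum_le_sum fun n _ => hMqentry n i j
              _ = (N : ℝ) * ((d : ℝ) * c ^ 2) := by
                  rw [Finset.sum_const, Finset.card_range, nsmul_eq_mul]
        _ = (d : ℝ) * c ^ 2 := by field_simp
  -- Bolzano-Weierstrass: extract a limit point T (in the plain Pi space)
  obtain ⟨a, -, φ, hφ, halim⟩ :=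
    tendsto_subseq_of_bounded
      (Metric.isBounded_closedBall (x := (0 : Fin d → Fin d → ℝ)) (r := (d : ℝ) * c ^ 2))
      (x := fun N => (fun i j => S N i j : Fin d → Fin d → ℝ))
      (fun N => by
        rw [Metric.mem_closedBall, dist_zero_right]
        refine (pi_norm_le_iff_of_nonneg (by positivity)).mpr fun i => ?_
        refine (pi_norm_le_iff_of_nonneg (by positivity)).mpr fun j => ?_
        rw [Real.norm_eq_abs]
        exact hSentry N i j)
  set T : Matrix (Fin d) (Fin d) ℝ := Matrix.of a with hT
  have hTa : ∀ i j, T i j = a i j := fun i j => by rw [hT]; rfl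
  clear_value T
  have hTentry : ∀ i j, Tendsto (fun k => S (φ k) i j) atTop (𝓝 (T i j)) := by
    intro i j
    rw [hTa i j]
    have h0 := (tendsto_pi_nhds.mp halim) i
    exact (tendsto_pi_nhds.mp h0) j
  -- symmetry of the limit
  have hMqsymm : ∀ n, (Mq n)ᵀ = Mq n := by
    intro n
    rw [hMqdef n, Matrix.transpose_mul, Matrix.transpose_pow, Matrix.transpose_pow,
      Matrix.transpose_transpose]
  have hSsymm : ∀ N, (S N)ᵀ = S N := by
    intro N
    rw [hSdef N, Matrix.transpose_smul, Matrix.transpose_sum]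
    congr 1
    exact Finset.sum_congr rfl fun n _ => hMqsymm n
  have hTsymm : Tᵀ = T := by
    ext i j
    have h1 : Tendsto (fun k => S (φ k) j i) atTop (𝓝 (T j i)) := hTentry j i
    have h2 : (fun k => S (φ k) j i) = fun k => S (φ k) i j := by
      funext k
      have := hSsymm (φ k)
      calc S (φ k) j i = (S (φ k))ᵀ i j := rfl
        _ = S (φ k) i j := by rw [this]
    rw [h2] at h1
    have : T j i = T i j := tendsto_nhds_unique h1 (hTentry i j)
    simpa [Matrix.transpose_apply] using this
  -- invariance of the limit
  have hMq0 : Mq 0 = 1 := by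
    rw [hMqdef 0]
    simp
  have hconjS : ∀ N, Aᵀ * S N * A = S N + ((N : ℝ)⁻¹ • (Mq N - 1)) := by
    intro N
    have h1 : Aᵀ * S N * A = (N : ℝ)⁻¹ • ∑ n ∈ Finset.range N, Mq (n + 1) := by
      rw [hSdef N, Matrix.mul_smul, Matrix.smul_mul, Finset.mul_sum, Finset.sum_mul]
      congr 1
      refine Finset.sum_congr rfl fun n _ => ?_
      rw [hMqdef n, hMqdef (n + 1)]
      rw [pow_succ A n, pow_succ' (Aᵀ) n]
      noncomm_ring
    have h2 : ∑ n ∈ Finset.range N, Mq (n + 1)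
        = (∑ n ∈ Finset.range N, Mq n) + (Mq N - 1) := by
      have ha := Finset.sum_range_succ Mq N
      have hb := Finset.sum_range_succ' Mq N
      rw [ha] at hb
      rw [hMq0] at hb
      -- hb : (∑ n in range N, Mq n) + Mq N = (∑ n in range N, Mq (n+1)) + 1
      calc ∑ n ∈ Finset.range N, Mq (n + 1)
          = (∑ n ∈ Finset.range N, Mq (n + 1)) + 1 - 1 := by abel
        _ = ((∑ n ∈ Finset.range N, Mq n) + Mq N) - 1 := by rw [← hb]
        _ = (∑ n ∈ Finset.range N, Mq n) + (Mq N - 1) := by abel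
    rw [h1, h2, smul_add, ← hSdef N]
  have hTinvariant : Aᵀ * T * A = T := by
    ext i j
    have h1 : Tendsto (fun k => (Aᵀ * S (φ k) * A) i j) atTop (𝓝 ((Aᵀ * T * A) i j)) :=
      tendsto_conj A (fun k => S (φ k)) T hTentry i j
    have herr : Tendsto (fun k => ((φ k : ℝ))⁻¹ * ((Mq (φ k) - 1) i j)) atTop (𝓝 0) := by
      have hφtop : Tendsto (fun k => ((φ k : ℕ) : ℝ)) atTop atTop :=
        tendsto_natCast_atTop_atTop.comp hφ.tendsto_atTop
      have hinv : Tendsto (fun k => ((φ k : ℝ))⁻¹) atTop (𝓝 0) := hφtop.inv_tendsto_atTop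
      have hbound : ∀ k, ‖((φ k : ℝ))⁻¹ * ((Mq (φ k) - 1) i j)‖
          ≤ ((d : ℝ) * c ^ 2 + 1) * ((φ k : ℝ))⁻¹ := by
        intro k
        rw [Real.norm_eq_abs, abs_mul, abs_inv, Nat.abs_cast, mul_comm]
        refine mul_le_mul_of_nonneg_right ?_ (by positivity)
        calc |(Mq (φ k) - 1) i j| = |Mq (φ k) i j - (1 : Matrix (Fin d) (Fin d) ℝ) i j| := by
              rw [Matrix.sub_apply]
          _ ≤ |Mq (φ k) i j| + |(1 : Matrix (Fin d) (Fin d) ℝ) i j| := abs_sub _ _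
          _ ≤ (d : ℝ) * c ^ 2 + 1 := by
              refine add_le_add (hMqentry (φ k) i j) ?_
              by_cases h : i = j <;> simp [h, Matrix.one_apply]
      have hlim0 : Tendsto (fun k => ((d : ℝ) * c ^ 2 + 1) * ((φ k : ℝ))⁻¹) atTop (𝓝 0) := by
        have := hinv.const_mul ((d : ℝ) * c ^ 2 + 1)
        simpa using this
      exact squeeze_zero_norm hbound hlim0
    have h2 : (fun k => (Aᵀ * S (φ k) * A) i j)
        = fun k => S (φ k) i j + ((φ k : ℝ))⁻¹ * ((Mq (φ k) - 1) i j) := by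
      funext k
      rw [hconjS (φ k)]
      simp [Matrix.add_apply, Matrix.smul_apply]
    rw [h2] at h1
    have h3 : Tendsto (fun k => S (φ k) i j + ((φ k : ℝ))⁻¹ * ((Mq (φ k) - 1) i j)) atTop
        (𝓝 (T i j + 0)) := (hTentry i j).add herr
    have := tendsto_nhds_unique h1 h3
    rw [this, add_zero]
  -- quadratic form of the averages
  have hquadS : ∀ (N : ℕ) (x : Fin d → ℝ), x ⬝ᵥ (S N *ᵥ x)
      = (N : ℝ)⁻¹ * ∑ n ∈ Finset.range N, (A ^ n *ᵥ x) ⬝ᵥ (A ^ n *ᵥ x) := by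
    intro N x
    rw [hSdef N, Matrix.smul_mulVec, dotProduct_smul, smul_eq_mul, dotProduct_sum_mulVec]
    congr 1
    refine Finset.sum_congr rfl fun n _ => ?_
    rw [hMqdef n, ← Matrix.transpose_pow, ← Matrix.mulVec_mulVec, Matrix.dotProduct_mulVec,
      Matrix.vecMul_transpose]
  -- lower bound for the quadratic form
  have hq : ∀ (x : Fin d → ℝ) (n : ℕ),
      (x ⬝ᵥ x) / ((d : ℝ) ^ 2 * c ^ 2) ≤ (A ^ n *ᵥ x) ⬝ᵥ (A ^ n *ᵥ x) := by
    intro x n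
    have hqnn : 0 ≤ (A ^ n *ᵥ x) ⬝ᵥ (A ^ n *ᵥ x) :=
      Finset.sum_nonneg fun i _ => mul_self_nonneg _
    rcases Nat.eq_zero_or_pos d with hd | hd
    · subst hd
      have : x ⬝ᵥ x = 0 := by simp [dotProduct]
      rw [this, zero_div]
      exact hqnn
    · have hdd : (0 : ℝ) < (d : ℝ) ^ 2 * c ^ 2 := by
        have : (0 : ℝ) < (d : ℝ) := by exact_mod_cast hd
        positivity
      have hcomm : Commute A⁻¹ A := hAiA.trans hAA.symm
      have hid : (A⁻¹) ^ n * A ^ n = 1 := by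
        rw [← hcomm.mul_pow, hAiA, one_pow]
      have hxeq : x = (A⁻¹) ^ n *ᵥ (A ^ n *ᵥ x) := by
        rw [Matrix.mulVec_mulVec, hid, Matrix.one_mulVec]
      have hb := mulVec_sq_bound ((A⁻¹) ^ n) c (habsinv n) (A ^ n *ᵥ x)
      rw [← hxeq] at hb
      rw [div_le_iff₀ hdd]
      calc x ⬝ᵥ x ≤ (d : ℝ) ^ 2 * c ^ 2 * ((A ^ n *ᵥ x) ⬝ᵥ (A ^ n *ᵥ x)) := hb
        _ = (A ^ n *ᵥ x) ⬝ᵥ (A ^ n *ᵥ x) * ((d : ℝ) ^ 2 * c ^ 2) := by ring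
  have hlow : ∀ (x : Fin d → ℝ) (N : ℕ), 1 ≤ N →
      (x ⬝ᵥ x) / ((d : ℝ) ^ 2 * c ^ 2) ≤ x ⬝ᵥ (S N *ᵥ x) := by
    intro x N hN
    have hN0 : (0 : ℝ) < N := by exact_mod_cast hN
    rw [hquadS N x]
    have h1 : (N : ℝ) * ((x ⬝ᵥ x) / ((d : ℝ) ^ 2 * c ^ 2))
        ≤ ∑ n ∈ Finset.range N, (A ^ n *ᵥ x) ⬝ᵥ (A ^ n *ᵥ x) := by
      calc (N : ℝ) * ((x ⬝ᵥ x) / ((d : ℝ) ^ 2 * c ^ 2))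
          = ∑ _n ∈ Finset.range N, (x ⬝ᵥ x) / ((d : ℝ) ^ 2 * c ^ 2) := by
            rw [Finset.sum_const, Finset.card_range, nsmul_eq_mul]
        _ ≤ _ := Finset.sum_le_sum fun n _ => hq x n
    calc (x ⬝ᵥ x) / ((d : ℝ) ^ 2 * c ^ 2)
        = (N : ℝ)⁻¹ * ((N : ℝ) * ((x ⬝ᵥ x) / ((d : ℝ) ^ 2 * c ^ 2))) := by
          field_simp
      _ ≤ (N : ℝ)⁻¹ * ∑ n ∈ Finset.range N, (A ^ n *ᵥ x) ⬝ᵥ (A ^ n *ᵥ x) :=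
          mul_le_mul_of_nonneg_left h1 (by positivity)
  -- positivity of the limit
  have hTpos : ∀ x : Fin d → ℝ, x ≠ 0 → 0 < x ⬝ᵥ (T *ᵥ x) := by
    intro x hx
    have hd : 0 < d := by
      rcases Nat.eq_zero_or_pos d with h | h
      · exfalso
        subst h
        exact hx (Subsingleton.elim x 0)
      · exact h
    have hdd : (0 : ℝ) < (d : ℝ) ^ 2 * c ^ 2 := by
      have : (0 : ℝ) < (d : ℝ) := by exact_mod_cast hd
      positivity
    have hxx : 0 < x ⬝ᵥ x := by
      have h1 : 0 ≤ x ⬝ᵥ x := Finset.sum_nonneg fun i _ => mul_self_nonneg _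
      have h2 : x ⬝ᵥ x ≠ 0 := fun h => hx (dotProduct_self_eq_zero.mp h)
      exact h1.lt_of_ne' h2
    have hlim : Tendsto (fun k => x ⬝ᵥ (S (φ k) *ᵥ x)) atTop (𝓝 (x ⬝ᵥ (T *ᵥ x))) :=
      tendsto_quad (fun k => S (φ k)) T hTentry x x
    have hev : ∀ᶠ k in atTop, (x ⬝ᵥ x) / ((d : ℝ) ^ 2 * c ^ 2) ≤ x ⬝ᵥ (S (φ k) *ᵥ x) := by
      filter_upwards [eventually_ge_atTop 1] with k hk
      exact hlow x (φ k) (le_trans hk hφ.le_apply)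
    have hge : (x ⬝ᵥ x) / ((d : ℝ) ^ 2 * c ^ 2) ≤ x ⬝ᵥ (T *ᵥ x) :=
      ge_of_tendsto hlim hev
    exact lt_of_lt_of_le (div_pos hxx hdd) hge
  -- T is positive definite
  have hTherm : T.IsHermitian := by
    show Tᴴ = T
    rw [Matrix.conjTranspose_eq_transpose_of_trivial, hTsymm]
  have hTPD : T.PosDef := by
    refine Matrix.PosDef.of_dotProduct_mulVec_pos hTherm fun x hx => ?_
    have := hTpos x hx
    simpa using this
  have hTdet : IsUnit T.det := isUnit_iff_ne_zero.mpr hTPD.det_pos.ne'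
  have hWPD : (T⁻¹).PosDef := hTPD.inv
  open scoped MatrixOrder in
  set Q : Matrix (Fin d) (Fin d) ℝ := CFC.sqrt (T⁻¹) with hQdef
  open scoped MatrixOrder in
  have hQQ : Q * Q = T⁻¹ := CFC.sqrt_mul_sqrt_self _ hWPD.posSemidef.nonneg
  open scoped MatrixOrder in
  have hQpsd : Q.PosSemidef := (CFC.sqrt_nonneg _).posSemidef
  have hQherm : Q.IsHermitian := hQpsd.1
  have hQsymm : Qᵀ = Q := by
    rw [← Matrix.conjTranspose_eq_transpose_of_trivial, hQherm]
  have hQpos : ∀ x : Fin d → ℝ, x ≠ 0 → 0 < x ⬝ᵥ (Q *ᵥ x) := by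
    intro x hx
    have h0 : 0 ≤ x ⬝ᵥ (Q *ᵥ x) := by
      have := hQpsd.dotProduct_mulVec_nonneg x
      simpa using this
    rcases h0.lt_or_eq with h | h
    · exact h
    · exfalso
      have hzero : Q *ᵥ x = 0 := by
        refine (hQpsd.dotProduct_mulVec_zero_iff x).mp ?_
        simpa using h.symm
      have hTix : T⁻¹ *ᵥ x = 0 := by
        rw [← hQQ, ← Matrix.mulVec_mulVec, hzero, Matrix.mulVec_zero]
      have hposx := hWPD.dotProduct_mulVec_pos hx
      rw [hTix] at hposx
      simp at hposx
  have hQPD : Q.PosDef := by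
    refine Matrix.PosDef.of_dotProduct_mulVec_pos hQherm fun x hx => ?_
    have := hQpos x hx
    simpa using this
  have hQdet : IsUnit Q.det := isUnit_iff_ne_zero.mpr hQPD.det_pos.ne'
  have hQQi : Q * Q⁻¹ = 1 := Matrix.mul_nonsing_inv _ hQdet
  have hQiQ : Q⁻¹ * Q = 1 := Matrix.nonsing_inv_mul _ hQdet
  have hQiQi : Q⁻¹ * Q⁻¹ = T := by
    rw [← Matrix.mul_inv_rev, hQQ, Matrix.nonsing_inv_nonsing_inv _ hTdet]
  have hQit : (Q⁻¹)ᵀ = Q⁻¹ := by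
    rw [Matrix.transpose_nonsing_inv, hQsymm]
  refine ⟨Q⁻¹ * A * Q, Q, ?_, hQsymm, hQpos, ?_⟩
  · calc (Q⁻¹ * A * Q)ᵀ * (Q⁻¹ * A * Q)
        = Q * (Aᵀ * (Q⁻¹ * Q⁻¹) * A) * Q := by
          rw [Matrix.transpose_mul, Matrix.transpose_mul, hQit, hQsymm]
          noncomm_ring
      _ = Q * T * Q := by rw [hQiQi, hTinvariant]
      _ = Q * (Q⁻¹ * Q⁻¹) * Q := by rw [hQiQi]
      _ = (Q * Q⁻¹) * (Q⁻¹ * Q) := by noncomm_ring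
      _ = 1 := by rw [hQQi, hQiQ, one_mul]
  · calc A = (Q * Q⁻¹) * A * (Q * Q⁻¹) := by rw [hQQi]; noncomm_ring
      _ = Q * (Q⁻¹ * A * Q) * Q⁻¹ := by noncomm_ring
end

section
/- Let A be a d×d dilation matrix with integer entries, i.e. all eigenvalues of A are greater than 1 in absolute value. Let S(A) := {s ∈ [0,1)^d : As ∈ ℤ^d}. Then ⋃_{j=1}^∞ ⋃_{s ∈ S(A)\{0}} A^j{k + s : k ∈ ℤ^d} = ℤ^d \ {0}, and the sets A^j{k + s : k ∈ ℤ^d} and A^{j'}{k + s' : k ∈ ℤ^d} are disjoint whenever j ≠ j' or s ≠ s' (j, j' ≥ 1, s, s' ∈ S(A)\{0}). -/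
open Matrix Filter
open scoped NNReal ENNReal

attribute [local instance] Matrix.linftyOpNormedRing Matrix.linftyOpNormedAlgebra



lemma spec_iff_root {n : ℕ} (M : Matrix (Fin n) (Fin n) ℂ) (μ : ℂ) :
    μ ∈ spectrum ℂ M ↔ M.charpoly.IsRoot μ := by
  rw [spectrum.mem_iff, Matrix.isUnit_iff_isUnit_det, isUnit_iff_ne_zero, not_not,
    Polynomial.IsRoot]
  have h : M.charpoly.eval μ = (algebraMap ℂ (Matrix (Fin n) (Fin n) ℂ) μ - M).det := by
    rw [Matrix.charpoly, eval_det, Matrix.matPolyEquiv_charmatrix]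
    simp [Matrix.algebraMap_eq_diagonal, Matrix.scalar]
  rw [h]

lemma matrix_decay {d : ℕ} (A : Matrix (Fin d) (Fin d) ℝ)
    (hdet : IsUnit A.det)
    (hAeig : ∀ z : ℂ, (Matrix.charpoly (A.map Complex.ofReal)).IsRoot z →
      1 < ‖z‖)
    (v : Fin d → ℝ) : ∃ n : ℕ, 1 ≤ n ∧ ‖(A ^ n)⁻¹ *ᵥ v‖ < 1 := by
  classical
  set Ac : Matrix (Fin d) (Fin d) ℂ := A.map Complex.ofReal with hAc
  have hAcdet : IsUnit Ac.det := by
    have : Ac.det = (A.det : ℂ) := (RingHom.map_det Complex.ofRealHom A).symm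
    rw [this, isUnit_iff_ne_zero]
    exact_mod_cast hdet.ne_zero ∘ Complex.ofReal_eq_zero.mp
  have hAcunit : IsUnit Ac := (Matrix.isUnit_iff_isUnit_det Ac).mpr hAcdet
  -- each element of spectrum of Ac⁻¹ has nnnorm < 1
  have hspec : ∀ μ ∈ spectrum ℂ Ac⁻¹, ‖μ‖₊ < 1 := by
    intro μ hμ
    have hu : (↑hAcunit.unit⁻¹ : Matrix (Fin d) (Fin d) ℂ) = Ac⁻¹ := by
      rw [Matrix.coe_units_inv, hAcunit.unit_spec]
    have hμ0 : μ ≠ 0 := by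
      intro h0
      rw [h0, ← hu] at hμ
      exact (spectrum.zero_notMem_iff ℂ).mpr (hAcunit.unit⁻¹).isUnit hμ
    have hinv : μ⁻¹ ∈ spectrum ℂ Ac := by
      have := (spectrum.inv₀_mem_inv_iff (R := ℂ) (a := hAcunit.unit) (r := μ⁻¹)).mp
      rw [inv_inv, hu, hAcunit.unit_spec] at this
      exact this hμ
    have hroot := hAeig μ⁻¹ ((spec_iff_root Ac μ⁻¹).mp hinv)
    have habs : ‖μ‖ < 1 := by
      rw [norm_inv] at hroot
      have h0 : 0 < ‖μ‖ := by simpa using hμ0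
      rw [lt_inv_comm₀ zero_lt_one h0] at hroot
      simpa using hroot
    exact_mod_cast habs
  -- spectral radius < 1
  have hfin : (spectrum ℂ Ac⁻¹).Finite := by
    apply Set.Finite.subset (Polynomial.finite_setOf_isRoot (Matrix.charpoly_monic Ac⁻¹).ne_zero)
    intro μ hμ
    exact (spec_iff_root Ac⁻¹ μ).mp hμ
  have hρ : spectralRadius ℂ Ac⁻¹ < 1 := by
    set F : Finset ℝ≥0 := hfin.toFinset.image fun μ => ‖μ‖₊ with hF
    set r : ℝ≥0 := F.sup id with hrdef
    have hr1 : r < 1 := by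
      rw [Finset.sup_lt_iff (by norm_num : (⊥ : ℝ≥0) < 1)]
      intro b hb
      rw [hF, Finset.mem_image] at hb
      obtain ⟨μ, hμ, rfl⟩ := hb
      exact hspec μ (hfin.mem_toFinset.mp hμ)
    calc spectralRadius ℂ Ac⁻¹ ≤ (r : ℝ≥0∞) := by
          rw [spectralRadius]
          refine iSup₂_le fun μ hμ => ?_
          exact_mod_cast Finset.le_sup (f := id)
            (Finset.mem_image_of_mem _ (hfin.mem_toFinset.mpr hμ))
      _ < 1 := ENNReal.coe_lt_one_iff.mpr hr1
  -- Gelfand formula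
  haveI : CompleteSpace (Matrix (Fin d) (Fin d) ℂ) := FiniteDimensional.complete ℂ _
  have htend := spectrum.pow_nnnorm_pow_one_div_tendsto_nhds_spectralRadius (Ac⁻¹)
  obtain ⟨c, hc1, hc2⟩ := exists_between hρ
  set ε : ℝ := 1 / (‖v‖ + 1) with hε
  have hεpos : 0 < ε := by positivity
  have hev1 : ∀ᶠ n : ℕ in atTop, (‖Ac⁻¹ ^ n‖₊ : ℝ≥0∞) ^ (1 / (n:ℝ)) < c :=
    htend.eventually_lt_const hc1
  have hev2 : ∀ᶠ n : ℕ in atTop, c ^ n < ENNReal.ofReal ε :=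
    (ENNReal.tendsto_pow_atTop_nhds_zero_of_lt_one hc2).eventually_lt_const
      (ENNReal.ofReal_pos.mpr hεpos)
  have hev3 : ∀ᶠ n : ℕ in atTop, 1 ≤ n := Filter.eventually_ge_atTop 1
  obtain ⟨n, hn1, hn2, hn3⟩ := (hev1.and (hev2.and hev3)).exists
  have hnpos : (0:ℝ) < n := by exact_mod_cast hn3
  have hxc : (‖Ac⁻¹ ^ n‖₊ : ℝ≥0∞) < c ^ n := by
    have h1 := ENNReal.rpow_lt_rpow hn1 hnpos
    rw [← ENNReal.rpow_mul, one_div, inv_mul_cancel₀ (ne_of_gt hnpos), ENNReal.rpow_one,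
      ENNReal.rpow_natCast] at h1
    exact h1
  have hxε : (‖Ac⁻¹ ^ n‖₊ : ℝ≥0∞) < ENNReal.ofReal ε := hxc.trans hn2
  have hlt : ‖Ac⁻¹ ^ n‖ < ε := by
    rw [ENNReal.ofReal] at hxε
    have h2 := ENNReal.coe_lt_coe.mp hxε
    calc ‖Ac⁻¹ ^ n‖ = ((‖Ac⁻¹ ^ n‖₊ : ℝ≥0) : ℝ) := (coe_nnnorm _).symm
      _ < (ε.toNNReal : ℝ) := by exact_mod_cast h2
      _ = ε := Real.coe_toNNReal ε hεpos.le
  -- transfer to the real matrix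
  have hco : (Complex.ofReal : ℝ → ℂ) = ⇑Complex.ofRealHom := rfl
  have hmap : ∀ M : Matrix (Fin d) (Fin d) ℝ, IsUnit M.det →
      (M⁻¹).map Complex.ofReal = (M.map Complex.ofReal)⁻¹ := by
    intro M hM
    refine (Matrix.inv_eq_left_inv ?_).symm
    rw [hco, ← Matrix.map_mul, Matrix.nonsing_inv_mul M hM,
      Matrix.map_one _ (map_zero _) (map_one _)]
  have hpow : (A ^ n).map Complex.ofReal = Ac ^ n := by
    rw [hAc, hco]
    exact map_pow (Complex.ofRealHom.mapMatrix) A n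
  have hcomm : Commute Ac⁻¹ Ac := by
    show Ac⁻¹ * Ac = Ac * Ac⁻¹
    rw [Matrix.nonsing_inv_mul Ac hAcdet, Matrix.mul_nonsing_inv Ac hAcdet]
  have hinvpow : (Ac ^ n)⁻¹ = Ac⁻¹ ^ n := by
    refine Matrix.inv_eq_left_inv ?_
    rw [← hcomm.mul_pow, Matrix.nonsing_inv_mul Ac hAcdet, one_pow]
  have hAninv : ((A ^ n)⁻¹).map Complex.ofReal = Ac⁻¹ ^ n := by
    rw [hmap (A ^ n) (by simpa [Matrix.det_pow] using hdet.pow n), hpow, hinvpow]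
  have hnrm : ∀ M : Matrix (Fin d) (Fin d) ℝ, ‖M.map Complex.ofReal‖ = ‖M‖ := by
    intro M
    rw [← coe_nnnorm, ← coe_nnnorm]
    congr 1
    rw [Matrix.linfty_opNNNorm_def, Matrix.linfty_opNNNorm_def]
    simp [Matrix.map_apply]
  have hnorm : ‖(A ^ n)⁻¹‖ = ‖Ac⁻¹ ^ n‖ := by rw [← hAninv, hnrm]
  have hbound : ‖(A ^ n)⁻¹ *ᵥ v‖ ≤ ‖(A ^ n)⁻¹‖ * ‖v‖ := Matrix.linfty_opNorm_mulVec _ _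
  refine ⟨n, hn3, lt_of_le_of_lt hbound ?_⟩
  rw [hnorm]
  have h1 : ‖Ac⁻¹ ^ n‖ * ‖v‖ ≤ ε * ‖v‖ := mul_le_mul_of_nonneg_right hlt.le (norm_nonneg v)
  have h3 : ε * (‖v‖ + 1) = 1 := by
    rw [hε]
    field_simp
  nlinarith [norm_nonneg v, hεpos]

variable {d : ℕ}

/-- a vector with integer entries -/
def IntVec (v : Fin d → ℝ) : Prop := ∃ k : Fin d → ℤ, v = fun i => (k i : ℝ)

lemma intVec_add {v w : Fin d → ℝ} (hv : IntVec v) (hw : IntVec w) : IntVec (v + w) := by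
  obtain ⟨k, rfl⟩ := hv; obtain ⟨l, rfl⟩ := hw
  exact ⟨k + l, by funext i; push_cast; simp⟩

lemma intVec_sub {v w : Fin d → ℝ} (hv : IntVec v) (hw : IntVec w) : IntVec (v - w) := by
  obtain ⟨k, rfl⟩ := hv; obtain ⟨l, rfl⟩ := hw
  exact ⟨k - l, by funext i; push_cast; simp⟩

lemma intVec_small {v : Fin d → ℝ} (hv : IntVec v) (h : ‖v‖ < 1) : v = 0 := by
  obtain ⟨k, rfl⟩ := hv
  funext i
  have h1 : |(k i : ℝ)| < 1 := by
    calc |(k i : ℝ)| = ‖(fun i => (k i : ℝ)) i‖ := by simp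
      _ ≤ ‖fun i => (k i : ℝ)‖ := norm_le_pi_norm (fun i => (k i : ℝ)) i
      _ < 1 := h
  have h2 : k i = 0 := by
    have : |k i| < 1 := by exact_mod_cast h1
    exact Int.abs_lt_one_iff.mp this
  simp [h2]

lemma intVec_Ico {v : Fin d → ℝ} (hv : IntVec v) (h : ∀ i, v i ∈ Set.Ico (0:ℝ) 1) : v = 0 := by
  obtain ⟨k, rfl⟩ := hv
  funext i
  obtain ⟨h0, h1⟩ := h i
  have h2 : k i = 0 := by
    have h0' : (0:ℝ) ≤ ((k i : ℤ) : ℝ) := h0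
    have h1' : ((k i : ℤ) : ℝ) < 1 := h1
    have l0 : (0:ℤ) ≤ k i := by exact_mod_cast h0'
    have l1 : k i < 1 := by exact_mod_cast h1'
    omega
  simp [h2]

lemma intVec_mulVec {A : Matrix (Fin d) (Fin d) ℝ} (hAint : ∀ i j, ∃ z : ℤ, A i j = (z : ℝ))
    {v : Fin d → ℝ} (hv : IntVec v) : IntVec (A *ᵥ v) := by
  obtain ⟨k, rfl⟩ := hv
  choose Z hZ using hAint
  refine ⟨fun i => ∑ j, Z i j * k j, ?_⟩
  funext i
  simp only [Matrix.mulVec, dotProduct]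
  push_cast
  exact Finset.sum_congr rfl fun j _ => by rw [hZ]

/-- For an integer dilation matrix `A` (all complex eigenvalues of absolute
value `> 1`) and `S(A) = {s ∈ [0,1)^d : A s ∈ ℤ^d}`, the sets `A^j {k + s : k ∈ ℤ^d}`,
`j ≥ 1`, `s ∈ S(A) \ {0}`, form a partition of `ℤ^d \ {0}` (viewed inside `ℝ^d`). -/
theorem elliptic_stmt5 (d : ℕ) (A : Matrix (Fin d) (Fin d) ℝ)
    (hAint : ∀ i j, ∃ z : ℤ, A i j = (z : ℝ))
    (hAeig : ∀ z : ℂ, (Matrix.charpoly (A.map Complex.ofReal)).IsRoot z →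
      1 < ‖z‖)
    (SA : Set (Fin d → ℝ))
    (hSA : SA = {s | (∀ i, s i ∈ Set.Ico (0:ℝ) 1) ∧
      ∃ k : Fin d → ℤ, A *ᵥ s = fun i => (k i : ℝ)})
    (T : ℕ → (Fin d → ℝ) → Set (Fin d → ℝ))
    (hT : ∀ j s, T j s =
      {v | ∃ k : Fin d → ℤ, v = (A ^ j) *ᵥ ((fun i => (k i : ℝ)) + s)}) :
    (⋃ j ∈ {j : ℕ | 1 ≤ j}, ⋃ s ∈ SA \ {0}, T j s)
        = {v : Fin d → ℝ | ∃ k : Fin d → ℤ, v = fun i => (k i : ℝ)} \ {0} ∧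
    ∀ j, 1 ≤ j → ∀ j', 1 ≤ j' → ∀ s ∈ SA \ {0}, ∀ s' ∈ SA \ {0},
      (j ≠ j' ∨ s ≠ s') → Disjoint (T j s) (T j' s') := by
  classical
  -- A is invertible
  have hdet : IsUnit A.det := by
    rw [isUnit_iff_ne_zero]
    intro h0
    have h1 : (A.map Complex.ofReal).det = 0 := by
      have := (RingHom.map_det Complex.ofRealHom A).symm
      rw [h0] at this
      exact (by simpa using this : (A.map ⇑Complex.ofRealHom).det = 0)
    have hroot : (A.map Complex.ofReal).charpoly.IsRoot 0 := by
      rw [Polynomial.IsRoot, ← Polynomial.coeff_zero_eq_eval_zero]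
      have h2 := Matrix.det_eq_sign_charpoly_coeff (A.map Complex.ofReal)
      rw [h1] at h2
      rcases mul_eq_zero.mp h2.symm with h | h
      · exact absurd h (pow_ne_zero _ (by norm_num))
      · exact h
    have h3 : (1:ℝ) < 0 := by simpa using hAeig 0 hroot
    linarith
  have hdetpow : ∀ m : ℕ, IsUnit (A ^ m).det := fun m => by
    simpa [Matrix.det_pow] using hdet.pow m
  -- integer vectors are preserved by powers of A
  have hIpow : ∀ (m : ℕ) (v : Fin d → ℝ), IntVec v → IntVec (A ^ m *ᵥ v) := by
    intro m
    induction m with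
    | zero => intro v hv; simpa [Matrix.one_mulVec] using hv
    | succ t ih =>
      intro v hv
      have : A ^ (t + 1) *ᵥ v = A ^ t *ᵥ (A *ᵥ v) := by
        rw [Matrix.mulVec_mulVec, ← pow_succ]
      rw [this]
      exact ih _ (intVec_mulVec hAint hv)
  -- cancellation
  have hcancel : ∀ (m : ℕ) (w : Fin d → ℝ), (A ^ m)⁻¹ *ᵥ (A ^ m *ᵥ w) = w := by
    intro m w
    rw [Matrix.mulVec_mulVec, Matrix.nonsing_inv_mul _ (hdetpow m), Matrix.one_mulVec]
  have hcancel' : ∀ (m : ℕ) (w : Fin d → ℝ), A ^ m *ᵥ ((A ^ m)⁻¹ *ᵥ w) = w := by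
    intro m w
    rw [Matrix.mulVec_mulVec, Matrix.mul_nonsing_inv _ (hdetpow m), Matrix.one_mulVec]
  -- elements of T (t+1) s with A s integral are integer vectors
  have hTint : ∀ (t : ℕ) (k : Fin d → ℤ) (s : Fin d → ℝ), IntVec (A *ᵥ s) →
      IntVec (A ^ (t + 1) *ᵥ ((fun i => (k i : ℝ)) + s)) := by
    intro t k s hAs
    have h1 : A ^ (t + 1) *ᵥ ((fun i => (k i : ℝ)) + s)
        = A ^ t *ᵥ (A *ᵥ ((fun i => (k i : ℝ)) + s)) := by
      rw [Matrix.mulVec_mulVec, ← pow_succ]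
    rw [h1, Matrix.mulVec_add]
    exact hIpow t _ (intVec_add (intVec_mulVec hAint ⟨k, rfl⟩) hAs)
  -- s + integer vector = 0 with s ∈ [0,1)^d forces s = 0
  have hfrac : ∀ (k : Fin d → ℤ) (s : Fin d → ℝ), (∀ i, s i ∈ Set.Ico (0:ℝ) 1) →
      (fun i => (k i : ℝ)) + s = 0 → s = 0 := by
    intro k s hIco h0
    apply intVec_Ico _ hIco
    refine ⟨fun i => -k i, ?_⟩
    funext i
    have := congrFun h0 i
    simp only [Pi.add_apply, Pi.zero_apply] at this
    push_cast
    linarith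
  -- key injectivity claim
  have key : ∀ (j j' : ℕ), j ≤ j' → ∀ (k k' : Fin d → ℤ) (s s' : Fin d → ℝ),
      s ∈ SA \ {0} → s' ∈ SA \ {0} →
      A ^ j *ᵥ ((fun i => (k i : ℝ)) + s) = A ^ j' *ᵥ ((fun i => (k' i : ℝ)) + s') →
      j = j' ∧ s = s' := by
    intro j j' hle k k' s s' hs hs' heq
    obtain ⟨hsSA, hs0⟩ := hs
    obtain ⟨hs'SA, hs'0⟩ := hs'
    rw [hSA] at hsSA hs'SA
    obtain ⟨hsIco, hsInt⟩ := hsSA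
    obtain ⟨hs'Ico, hs'Int⟩ := hs'SA
    have heq2 : (fun i => (k i : ℝ)) + s = A ^ (j' - j) *ᵥ ((fun i => (k' i : ℝ)) + s') := by
      have h1 := congrArg (fun w => (A ^ j)⁻¹ *ᵥ w) heq
      rw [hcancel] at h1
      rw [h1, Matrix.mulVec_mulVec]
      have h2 : A ^ j' = A ^ j * A ^ (j' - j) := by
        rw [← pow_add, Nat.add_sub_cancel' hle]
      rw [h2, ← Matrix.mul_assoc, Matrix.nonsing_inv_mul _ (hdetpow j), Matrix.one_mul]
    rcases Nat.lt_or_ge j j' with hlt | hge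
    · -- impossible: then k + s would be an integer vector, so s = 0
      exfalso
      obtain ⟨t, ht⟩ : ∃ t, j' - j = t + 1 := ⟨j' - j - 1, by omega⟩
      rw [ht] at heq2
      have hint : IntVec ((fun i => (k i : ℝ)) + s) := by
        rw [heq2]
        exact hTint t k' s' hs'Int
      have : IntVec s := by
        have := intVec_sub hint ⟨k, rfl⟩
        simpa using this
      exact hs0 (intVec_Ico this hsIco)
    · have hjj : j = j' := le_antisymm hle hge
      refine ⟨hjj, ?_⟩
      rw [Nat.sub_eq_zero_of_le hge, pow_zero, Matrix.one_mulVec] at heq2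
      -- s - s' is an integer vector with entries in (-1, 1), hence 0
      funext i
      have h1 := congrFun heq2 i
      simp only [Pi.add_apply] at h1
      have h2 : s i - s' i = ((k' i - k i : ℤ) : ℝ) := by push_cast; linarith
      obtain ⟨hs1, hs2⟩ := hsIco i
      obtain ⟨hs'1, hs'2⟩ := hs'Ico i
      have h3 : |((k' i - k i : ℤ) : ℝ)| < 1 := by rw [← h2]; rw [abs_lt]; constructor <;> linarith
      have h4 : |k' i - k i| < 1 := by exact_mod_cast h3
      have h5 : k' i - k i = 0 := Int.abs_lt_one_iff.mp h4
      have h6 : ((k' i - k i : ℤ) : ℝ) = 0 := by exact_mod_cast h5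
      linarith [h2, h6]
  constructor
  · -- the union equals ℤ^d \ {0}
    ext x
    simp only [Set.mem_iUnion, Set.mem_setOf_eq, Set.mem_diff, Set.mem_singleton_iff]
    constructor
    · rintro ⟨j, hj, s, hs, hx⟩
      rw [hT] at hx
      obtain ⟨k, rfl⟩ := hx
      obtain ⟨hsSA, hs0⟩ := hs
      rw [hSA] at hsSA
      obtain ⟨hsIco, hsInt⟩ := hsSA
      obtain ⟨t, rfl⟩ : ∃ t, j = t + 1 := ⟨j - 1, by omega⟩
      refine ⟨hTint t k s hsInt, ?_⟩
      intro h0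
      apply hs0
      apply hfrac k s hsIco
      have := congrArg (fun w => (A ^ (t+1))⁻¹ *ᵥ w) h0
      rw [hcancel] at this
      rw [this]
      exact Matrix.mulVec_zero _
    · rintro ⟨⟨k, rfl⟩, hx0⟩
      set x : Fin d → ℝ := fun i => (k i : ℝ) with hxdef
      -- find the first n with (A^n)⁻¹ x not an integer vector
      have hex : ∃ n : ℕ, ¬ IntVec ((A ^ n)⁻¹ *ᵥ x) := by
        obtain ⟨n, hn1, hn2⟩ := matrix_decay A hdet hAeig x
        refine ⟨n, fun hIv => ?_⟩
        have h0 := intVec_small hIv hn2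
        apply hx0
        have := hcancel' n x
        rw [h0, Matrix.mulVec_zero] at this
        exact this.symm
      set m := Nat.find hex with hm
      have hmspec : ¬ IntVec ((A ^ m)⁻¹ *ᵥ x) := Nat.find_spec hex
      have hm0 : m ≠ 0 := by
        intro h0
        rw [h0] at hmspec
        apply hmspec
        have hx1 : (A ^ 0)⁻¹ *ᵥ x = x := by
          calc (A ^ 0)⁻¹ *ᵥ x = (A ^ 0)⁻¹ *ᵥ (A ^ 0 *ᵥ x) := by
                rw [pow_zero, Matrix.one_mulVec]
            _ = x := hcancel 0 x
        rw [hx1]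
        exact ⟨k, rfl⟩
      obtain ⟨m0, hm0eq⟩ : ∃ m0, m = m0 + 1 := ⟨m - 1, by omega⟩
      have hw : IntVec ((A ^ m0)⁻¹ *ᵥ x) := by
        by_contra hcon
        exact absurd (Nat.find_min hex (by omega : m0 < m)) (fun h => h hcon)
      set u : Fin d → ℝ := (A ^ m)⁻¹ *ᵥ x with hu
      set kk : Fin d → ℤ := fun i => ⌊u i⌋ with hkk
      set s : Fin d → ℝ := fun i => Int.fract (u i) with hs
      have hdecomp : u = (fun i => (kk i : ℝ)) + s := by
        funext i
        show u i = ((⌊u i⌋ : ℤ) : ℝ) + Int.fract (u i)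
        exact (Int.floor_add_fract (u i)).symm
      have hsIco : ∀ i, s i ∈ Set.Ico (0:ℝ) 1 :=
        fun i => ⟨Int.fract_nonneg _, Int.fract_lt_one _⟩
      have hAu : A *ᵥ u = (A ^ m0)⁻¹ *ᵥ x := by
        rw [hu, Matrix.mulVec_mulVec]
        congr 1
        rw [hm0eq, pow_succ, Matrix.mul_inv_rev]
        rw [← Matrix.mul_assoc, Matrix.mul_nonsing_inv _ hdet, Matrix.one_mul]
      have hAs : IntVec (A *ᵥ s) := by
        have h1 : A *ᵥ s = A *ᵥ u - A *ᵥ (fun i => (kk i : ℝ)) := by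
          rw [hdecomp, Matrix.mulVec_add]
          abel
        rw [h1, hAu]
        exact intVec_sub hw (intVec_mulVec hAint ⟨kk, rfl⟩)
      have hsSA : s ∈ SA \ {0} := by
        constructor
        · rw [hSA]
          exact ⟨hsIco, hAs⟩
        · intro h0
          rw [Set.mem_singleton_iff] at h0
          apply hmspec
          rw [hdecomp, h0, add_zero]
          exact ⟨kk, rfl⟩
      refine ⟨m, ?_, s, hsSA, ?_⟩
      · omega
      · rw [hT]
        refine ⟨kk, ?_⟩
        rw [← hdecomp, hu]
        exact (hcancel' m x).symm
  · -- disjointness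
    intro j hj j' hj' s hs s' hs' hne
    rw [Set.disjoint_left]
    intro x hx hx'
    rw [hT] at hx hx'
    obtain ⟨k, rfl⟩ := hx
    obtain ⟨k', heq⟩ := hx'
    rcases Nat.le_total j j' with hle | hle
    · obtain ⟨hjj, hss⟩ := key j j' hle k k' s s' hs hs' heq
      rcases hne with h | h
      · exact h hjj
      · exact h hss
    · obtain ⟨hjj, hss⟩ := key j' j hle k' k s' s hs' hs heq.symm
      rcases hne with h | h
      · exact h hjj.symm
      · exact h hss.symm
end

section
/- Let A be a d×d dilation matrix with integer entries, i.e. all eigenvalues of A are greater than 1 in absolute value, and let S(A) := {s ∈ [0,1)^d : As ∈ ℤ^d}. For k ∈ ℤ^d and s ∈ S(A)\{0} define Ω_{k,s} := {A^j(k + s) : j ∈ ℕ, j ≥ 1}. Then ℤ^d \ {0} = ⋃_{k ∈ ℤ^d, s ∈ S(A)\{0}} Ω_{k,s}, and Ω_{k,s} ∩ Ω_{k',s'} = ∅ whenever k ≠ k' or s ≠ s'. -/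
open Matrix Filter Topology
attribute [local instance] Matrix.linftyOpNormedRing Matrix.linftyOpNormedAlgebra

namespace Ell6

lemma eval_charpoly' {d : ℕ} (M : Matrix (Fin d) (Fin d) ℂ) (r : ℂ) :
    M.charpoly.eval r = (r • (1 : Matrix (Fin d) (Fin d) ℂ) - M).det := by
  rw [Matrix.charpoly, eval_det, matPolyEquiv_charmatrix]
  simp [smul_one_eq_diagonal]

variable {d : ℕ}

def IsInt (x : Fin d → ℝ) : Prop := ∃ k : Fin d → ℤ, x = fun i => (k i : ℝ)

lemma isInt_add {x y : Fin d → ℝ} (hx : IsInt x) (hy : IsInt y) : IsInt (x + y) := by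
  obtain ⟨k, rfl⟩ := hx; obtain ⟨m, rfl⟩ := hy
  exact ⟨fun i => k i + m i, by funext i; push_cast; rfl⟩

lemma isInt_sub {x y : Fin d → ℝ} (hx : IsInt x) (hy : IsInt y) : IsInt (x - y) := by
  obtain ⟨k, rfl⟩ := hx; obtain ⟨m, rfl⟩ := hy
  exact ⟨fun i => k i - m i, by funext i; push_cast; rfl⟩

lemma isInt_mulVec {A : Matrix (Fin d) (Fin d) ℝ} (hA : ∀ i j, ∃ z : ℤ, A i j = (z : ℝ))
    {x : Fin d → ℝ} (hx : IsInt x) : IsInt (A *ᵥ x) := by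
  choose Z hZ using hA
  obtain ⟨k, rfl⟩ := hx
  refine ⟨fun i => ∑ j, Z i j * k j, ?_⟩
  funext i
  simp only [Matrix.mulVec, dotProduct, hZ]
  push_cast
  rfl

lemma isInt_pow_mulVec {A : Matrix (Fin d) (Fin d) ℝ} (hA : ∀ i j, ∃ z : ℤ, A i j = (z : ℝ))
    (n : ℕ) {x : Fin d → ℝ} (hx : IsInt x) : IsInt ((A ^ n) *ᵥ x) := by
  induction n with
  | zero => simpa using hx
  | succ m ih =>
    rw [pow_succ', ← Matrix.mulVec_mulVec]
    exact isInt_mulVec hA ih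

lemma int_of_Ico {s : Fin d → ℝ} (h : IsInt s) (hs : ∀ i, s i ∈ Set.Ico (0:ℝ) 1) : s = 0 := by
  obtain ⟨k, rfl⟩ := h
  funext i
  obtain ⟨h0, h1⟩ := hs i
  have e0 : (0:ℤ) ≤ k i := by exact_mod_cast show (0:ℝ) ≤ (k i : ℝ) from h0
  have e1 : k i < 1 := by exact_mod_cast show ((k i : ℝ)) < 1 from h1
  have : k i = 0 := by omega
  simp [this]

lemma eq_of_sub_int {s s' : Fin d → ℝ} (h : IsInt (s - s'))
    (hs : ∀ i, s i ∈ Set.Ico (0:ℝ) 1) (hs' : ∀ i, s' i ∈ Set.Ico (0:ℝ) 1) : s = s' := by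
  obtain ⟨m, hm⟩ := h
  funext i
  have e : s i - s' i = (m i : ℝ) := by
    have := congrFun hm i; simpa using this
  obtain ⟨a0, a1⟩ := hs i
  obtain ⟨b0, b1⟩ := hs' i
  have l1 : (-1:ℤ) < m i := by exact_mod_cast (show (-1:ℝ) < (m i : ℝ) by linarith)
  have l2 : m i < 1 := by exact_mod_cast (show (m i : ℝ) < 1 by linarith)
  have : m i = 0 := by omega
  rw [this] at e
  push_cast at e
  linarith

lemma ks_ne_zero {k : Fin d → ℤ} {s : Fin d → ℝ}
    (hs : ∀ i, s i ∈ Set.Ico (0:ℝ) 1) (hs0 : s ≠ 0) :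
    (fun i => (k i : ℝ)) + s ≠ 0 := by
  intro h
  refine hs0 (int_of_Ico ⟨fun i => -k i, ?_⟩ hs)
  funext i
  have := congrFun h i
  simp only [Pi.add_apply, Pi.zero_apply] at this
  push_cast
  linarith

lemma pow_mulVec_inj {A : Matrix (Fin d) (Fin d) ℝ} (hdet : A.det ≠ 0) (j : ℕ) :
    Function.Injective ((A ^ j).mulVec) := by
  apply Matrix.mulVec_injective_iff_isUnit.mpr
  apply (Matrix.isUnit_iff_isUnit_det _).mpr
  rw [Matrix.det_pow]
  exact isUnit_iff_ne_zero.mpr (pow_ne_zero _ hdet)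

lemma spec_bound (B : Matrix (Fin d) (Fin d) ℂ) (hdet : B.det ≠ 0)
    (hroot : ∀ z : ℂ, B.charpoly.IsRoot z → 1 < ‖z‖) :
    ∀ z ∈ spectrum ℂ B⁻¹, ‖z‖₊ < 1 := by
  intro z hz
  rcases eq_or_ne z 0 with rfl | hz0
  · simp
  rw [spectrum.mem_iff, Algebra.algebraMap_eq_smul_one] at hz
  have hdet2 : (z • (1 : Matrix (Fin d) (Fin d) ℂ) - B⁻¹).det = 0 := by
    by_contra h
    exact hz ((Matrix.isUnit_iff_isUnit_det _).mpr (isUnit_iff_ne_zero.mpr h))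
  have hmul : B * (z • (1 : Matrix (Fin d) (Fin d) ℂ) - B⁻¹) = z • B - 1 := by
    rw [Matrix.mul_sub, mul_smul_comm, Matrix.mul_one,
      Matrix.mul_nonsing_inv _ (isUnit_iff_ne_zero.mpr hdet)]
  have h3 : (z • B - 1 : Matrix (Fin d) (Fin d) ℂ).det = 0 := by
    rw [← hmul, Matrix.det_mul, hdet2, mul_zero]
  have h4 : z • B - 1 = z • (B - z⁻¹ • (1 : Matrix (Fin d) (Fin d) ℂ)) := by
    rw [smul_sub, smul_smul, mul_inv_cancel₀ hz0, one_smul]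
  have h5 : (B - z⁻¹ • (1 : Matrix (Fin d) (Fin d) ℂ)).det = 0 := by
    rw [h4, Matrix.det_smul] at h3
    exact (mul_eq_zero.mp h3).resolve_left (pow_ne_zero _ hz0)
  have h6 : B.charpoly.IsRoot z⁻¹ := by
    have heq : (z⁻¹ • (1 : Matrix (Fin d) (Fin d) ℂ) - B) = -(B - z⁻¹ • 1) := (neg_sub _ _).symm
    rw [Polynomial.IsRoot, eval_charpoly', heq, Matrix.det_neg, h5, mul_zero]
  have h7 := hroot _ h6
  rw [norm_inv] at h7
  have h8 : ‖z‖ < 1 := by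
    have h0 : 0 < ‖z‖ := norm_pos_iff.mpr hz0
    rw [one_lt_inv_iff₀] at h7
    exact h7.2
  have h9 : ‖z‖ < 1 := h8
  exact_mod_cast h9

lemma exists_pow_norm_mul_lt (hd : 0 < d) (M : Matrix (Fin d) (Fin d) ℂ)
    (h : ∀ z ∈ spectrum ℂ M, ‖z‖₊ < 1) (C : ℝ) (hC : 0 ≤ C) :
    ∃ n : ℕ, ‖M ^ n‖ * C < 1 := by
  haveI : Nonempty (Fin d) := ⟨⟨0, hd⟩⟩
  have hr : spectralRadius ℂ M < 1 := by
    have := spectrum.spectralRadius_lt_of_forall_lt (a := M) (r := 1) h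
    simpa using this
  obtain ⟨c, hc1, hc2⟩ := ENNReal.lt_iff_exists_nnreal_btwn.mp hr
  have hgel := spectrum.pow_nnnorm_pow_one_div_tendsto_nhds_spectralRadius M
  have hev : ∀ᶠ n : ℕ in atTop, (‖M ^ n‖₊ : ENNReal) ^ (1 / (n:ℝ)) < (c : ENNReal) :=
    hgel.eventually_lt_const hc1
  have hc2' : (c:ℝ) < 1 := by exact_mod_cast hc2
  have hpow : Tendsto (fun n : ℕ => (c:ℝ) ^ n * C) atTop (𝓝 0) := by
    simpa using (tendsto_pow_atTop_nhds_zero_of_lt_one c.coe_nonneg hc2').mul_const C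
  have hev2 : ∀ᶠ n : ℕ in atTop, (c:ℝ) ^ n * C < 1 :=
    hpow.eventually_lt_const (by norm_num)
  obtain ⟨n, h1, h2, h3⟩ := (hev.and (hev2.and (eventually_ge_atTop 1))).exists
  refine ⟨n, ?_⟩
  have hnne : (n:ℝ) ≠ 0 := by positivity
  have hx : (‖M ^ n‖₊ : ENNReal) < (c : ENNReal) ^ (n:ℝ) := by
    have := ENNReal.rpow_lt_rpow h1 (by positivity : (0:ℝ) < (n:ℝ))
    rwa [← ENNReal.rpow_mul, one_div, inv_mul_cancel₀ hnne, ENNReal.rpow_one] at this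
  rw [ENNReal.rpow_natCast, ← ENNReal.coe_pow, ENNReal.coe_lt_coe] at hx
  have hx' : ‖M ^ n‖ < (c:ℝ) ^ n := by exact_mod_cast hx
  calc ‖M ^ n‖ * C ≤ (c:ℝ)^n * C := mul_le_mul_of_nonneg_right hx'.le hC
    _ < 1 := h2

lemma mulVec_map (A : Matrix (Fin d) (Fin d) ℝ) (x : Fin d → ℝ) :
    (A.map Complex.ofReal) *ᵥ (fun i => ((x i : ℝ) : ℂ)) = fun i => (((A *ᵥ x) i : ℝ) : ℂ) := by
  funext i
  simp only [Matrix.mulVec, dotProduct, Matrix.map_apply]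
  push_cast
  rfl

lemma det_map (A : Matrix (Fin d) (Fin d) ℝ) :
    (A.map Complex.ofReal).det = ((A.det : ℝ) : ℂ) := by
  exact (RingHom.map_det Complex.ofRealHom A).symm

lemma descent (hd : 0 < d) (A : Matrix (Fin d) (Fin d) ℝ) (hdet : A.det ≠ 0)
    (hroot : ∀ z : ℂ, ((A.map Complex.ofReal).charpoly).IsRoot z → 1 < ‖z‖)
    (v : Fin d → ℝ) (hv : v ≠ 0) :
    ∃ n : ℕ, ¬ IsInt ((A⁻¹ ^ n) *ᵥ v) := by
  by_contra hcon
  push_neg at hcon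
  choose k hk using hcon
  set B := A.map Complex.ofReal with hB
  have hdetB : B.det ≠ 0 := by
    rw [hB, Ell6.det_map]
    exact_mod_cast hdet
  have huA : IsUnit A.det := isUnit_iff_ne_zero.mpr hdet
  have huB : IsUnit B.det := isUnit_iff_ne_zero.mpr hdetB
  set W : ℕ → (Fin d → ℂ) := fun n i => (((A⁻¹ ^ n *ᵥ v) i : ℝ) : ℂ) with hW
  have hstep : ∀ n, B *ᵥ W (n+1) = W n := by
    intro n
    rw [hW]
    rw [mulVec_map A (A⁻¹ ^ (n+1) *ᵥ v)]
    have : A *ᵥ (A⁻¹ ^ (n+1) *ᵥ v) = A⁻¹ ^ n *ᵥ v := by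
      rw [Matrix.mulVec_mulVec, pow_succ', ← mul_assoc,
        Matrix.mul_nonsing_inv _ huA, one_mul]
    rw [this]
  have hWrec : ∀ n, W n = (B⁻¹ ^ n) *ᵥ W 0 := by
    intro n
    induction n with
    | zero => simp
    | succ m ih =>
      have : W (m+1) = B⁻¹ *ᵥ W m := by
        rw [← hstep m, Matrix.mulVec_mulVec, Matrix.nonsing_inv_mul _ huB, Matrix.one_mulVec]
      rw [this, ih, Matrix.mulVec_mulVec, ← pow_succ']
  have hne : ∀ n, (A⁻¹ ^ n) *ᵥ v ≠ 0 := by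
    intro n h0
    apply hv
    have : (A ^ n) *ᵥ ((A⁻¹ ^ n) *ᵥ v) = v := by
      rw [Matrix.mulVec_mulVec, Matrix.inv_pow', Matrix.mul_nonsing_inv _ (by
        rw [Matrix.det_pow]; exact huA.pow n), Matrix.one_mulVec]
    rw [← this, h0, Matrix.mulVec_zero]
  have hnorm : ∀ n, 1 ≤ ‖W n‖ := by
    intro n
    obtain ⟨i, hi⟩ : ∃ i, (A⁻¹ ^ n *ᵥ v) i ≠ 0 := by
      by_contra hall
      push_neg at hall
      exact hne n (funext hall)
    have hki : k n i ≠ 0 := by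
      intro h0
      apply hi
      rw [congrFun (hk n) i, h0, Int.cast_zero]
    have h1 : (1:ℝ) ≤ ‖W n i‖ := by
      rw [hW]
      simp only [Complex.norm_real]
      rw [congrFun (hk n) i, Real.norm_eq_abs, ← Int.cast_abs]
      exact_mod_cast Int.one_le_abs hki
    exact le_trans h1 (norm_le_pi_norm (W n) i)
  obtain ⟨n, hlt⟩ := exists_pow_norm_mul_lt hd B⁻¹
    (spec_bound B hdetB hroot) ‖W 0‖ (norm_nonneg _)
  have hle : ‖W n‖ ≤ ‖B⁻¹ ^ n‖ * ‖W 0‖ := by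
    rw [hWrec n]
    exact Matrix.linfty_opNorm_mulVec _ _
  have := hnorm n
  linarith

lemma aux_not_lt {A : Matrix (Fin d) (Fin d) ℝ} (hA : ∀ i j, ∃ z : ℤ, A i j = (z:ℝ))
    (hdet : A.det ≠ 0) {j j' : ℕ} (hlt : j < j') {k k' : Fin d → ℤ} {s s' : Fin d → ℝ}
    (hs : ∀ i, s i ∈ Set.Ico (0:ℝ) 1) (hs0 : s ≠ 0) (hsA' : IsInt (A *ᵥ s'))
    (heq : (A ^ j) *ᵥ ((fun i => (k i:ℝ)) + s) = (A ^ j') *ᵥ ((fun i => (k' i:ℝ)) + s')) :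
    False := by
  have hsplit : A ^ j' = A ^ j * A ^ (j' - j) := by
    rw [← pow_add]; congr 1; omega
  rw [hsplit, ← Matrix.mulVec_mulVec] at heq
  have h1 := pow_mulVec_inj hdet j heq
  obtain ⟨m, hm⟩ : ∃ m, j' - j = m + 1 := ⟨j' - j - 1, by omega⟩
  have h2 : IsInt ((A ^ (j' - j)) *ᵥ ((fun i => (k' i:ℝ)) + s')) := by
    rw [hm, pow_succ, ← Matrix.mulVec_mulVec]
    apply isInt_pow_mulVec hA
    rw [Matrix.mulVec_add]
    exact isInt_add (isInt_mulVec hA ⟨k', rfl⟩) hsA'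
  rw [← h1] at h2
  have h3 : IsInt s := by
    have h4 := isInt_sub h2 (⟨k, rfl⟩ : IsInt (fun i => (k i:ℝ)))
    simpa using h4
  exact hs0 (int_of_Ico h3 hs)

lemma uniq {A : Matrix (Fin d) (Fin d) ℝ} (hA : ∀ i j, ∃ z : ℤ, A i j = (z:ℝ))
    (hdet : A.det ≠ 0) {j j' : ℕ} {k k' : Fin d → ℤ} {s s' : Fin d → ℝ}
    (hs : ∀ i, s i ∈ Set.Ico (0:ℝ) 1) (hs0 : s ≠ 0) (hsA : IsInt (A *ᵥ s))
    (hs' : ∀ i, s' i ∈ Set.Ico (0:ℝ) 1) (hs0' : s' ≠ 0) (hsA' : IsInt (A *ᵥ s'))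
    (heq : (A ^ j) *ᵥ ((fun i => (k i:ℝ)) + s) = (A ^ j') *ᵥ ((fun i => (k' i:ℝ)) + s')) :
    j = j' ∧ k = k' ∧ s = s' := by
  have hjj : j = j' := by
    by_contra hne
    rcases Nat.lt_or_ge j j' with hlt | hge
    · exact aux_not_lt hA hdet hlt hs hs0 hsA' heq
    · exact aux_not_lt hA hdet (by omega) hs' hs0' hsA heq.symm
  subst hjj
  have h1 : (fun i => (k i:ℝ)) + s = (fun i => (k' i:ℝ)) + s' := pow_mulVec_inj hdet j heq
  have hss : s = s' := by
    apply eq_of_sub_int _ hs hs'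
    refine ⟨fun i => k' i - k i, ?_⟩
    funext i
    have h2 := congrFun h1 i
    simp only [Pi.add_apply, Pi.sub_apply] at h2 ⊢
    push_cast
    linarith
  refine ⟨rfl, ?_, hss⟩
  funext i
  have h2 := congrFun h1 i
  simp only [Pi.add_apply] at h2
  have h3 : s i = s' i := congrFun hss i
  have h4 : (k i : ℝ) = (k' i : ℝ) := by linarith
  exact_mod_cast h4

lemma mem_int_ne {A : Matrix (Fin d) (Fin d) ℝ} (hA : ∀ i j, ∃ z : ℤ, A i j = (z:ℝ))
    (hdet : A.det ≠ 0) {j : ℕ} (hj : 1 ≤ j) {k : Fin d → ℤ} {s : Fin d → ℝ}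
    (hs : ∀ i, s i ∈ Set.Ico (0:ℝ) 1) (hs0 : s ≠ 0) (hsA : IsInt (A *ᵥ s)) :
    IsInt ((A ^ j) *ᵥ ((fun i => (k i:ℝ)) + s)) ∧ (A ^ j) *ᵥ ((fun i => (k i:ℝ)) + s) ≠ 0 := by
  obtain ⟨m, rfl⟩ : ∃ m, j = m + 1 := ⟨j - 1, by omega⟩
  constructor
  · rw [pow_succ, ← Matrix.mulVec_mulVec]
    apply isInt_pow_mulVec hA
    rw [Matrix.mulVec_add]
    exact isInt_add (isInt_mulVec hA ⟨k, rfl⟩) hsA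
  · intro h0
    apply ks_ne_zero hs hs0 (k := k)
    apply pow_mulVec_inj hdet (m+1)
    rw [h0, Matrix.mulVec_zero]

lemma exists_rep (hd : 0 < d) {A : Matrix (Fin d) (Fin d) ℝ}
    (hA : ∀ i j, ∃ z : ℤ, A i j = (z:ℝ)) (hdet : A.det ≠ 0)
    (hroot : ∀ z : ℂ, ((A.map Complex.ofReal).charpoly).IsRoot z → 1 < ‖z‖)
    {v : Fin d → ℝ} (hvI : IsInt v) (hv : v ≠ 0) :
    ∃ (j : ℕ) (k : Fin d → ℤ) (s : Fin d → ℝ), 1 ≤ j ∧ (∀ i, s i ∈ Set.Ico (0:ℝ) 1)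
      ∧ s ≠ 0 ∧ IsInt (A *ᵥ s) ∧ v = (A ^ j) *ᵥ ((fun i => (k i:ℝ)) + s) := by
  classical
  have H := descent hd A hdet hroot v hv
  set n := Nat.find H with hn_def
  have hn : ¬ IsInt ((A⁻¹ ^ n) *ᵥ v) := Nat.find_spec H
  have hmin : ∀ m, m < n → IsInt ((A⁻¹ ^ m) *ᵥ v) := fun m hm =>
    not_not.mp (Nat.find_min H hm)
  have hn0 : n ≠ 0 := by
    intro h0
    apply hn
    rw [h0, pow_zero, Matrix.one_mulVec]
    exact hvI
  obtain ⟨m, hm⟩ : ∃ m, n = m + 1 := ⟨n - 1, by omega⟩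
  set w := (A⁻¹ ^ n) *ᵥ v with hw
  have hAw : A *ᵥ w = (A⁻¹ ^ m) *ᵥ v := by
    rw [hw, Matrix.mulVec_mulVec, hm, pow_succ', ← mul_assoc,
      Matrix.mul_nonsing_inv _ (isUnit_iff_ne_zero.mpr hdet), one_mul]
  have hAwI : IsInt (A *ᵥ w) := by rw [hAw]; exact hmin m (by omega)
  refine ⟨n, fun i => ⌊w i⌋, fun i => Int.fract (w i), by omega,
    fun i => ⟨Int.fract_nonneg _, Int.fract_lt_one _⟩, ?_, ?_, ?_⟩
  · intro h0
    apply hn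
    refine ⟨fun i => ⌊w i⌋, ?_⟩
    funext i
    have h1 := congrFun h0 i
    simp only [Pi.zero_apply] at h1
    have h2 : w i - (⌊w i⌋ : ℝ) = 0 := by rw [Int.self_sub_floor]; exact h1
    have : w i = (⌊w i⌋ : ℝ) := by linarith
    exact this
  · have hsub : (fun i => Int.fract (w i)) = w - (fun i => ((⌊w i⌋ : ℤ) : ℝ)) := by
      funext i
      simp only [Pi.sub_apply]
      rw [Int.self_sub_floor]
    rw [hsub, Matrix.mulVec_sub]
    exact isInt_sub hAwI (isInt_mulVec hA ⟨fun i => ⌊w i⌋, rfl⟩)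
  · have hks : (fun i => ((fun i => ⌊w i⌋) i : ℝ)) + (fun i => Int.fract (w i)) = w := by
      funext i
      simp only [Pi.add_apply]
      exact Int.floor_add_fract _
    rw [hks, hw, Matrix.mulVec_mulVec, Matrix.inv_pow',
      Matrix.mul_nonsing_inv _ (by rw [Matrix.det_pow]; exact isUnit_iff_ne_zero.mpr (pow_ne_zero _ hdet)),
      Matrix.one_mulVec]

end Ell6

open Ell6

/-- For an integer dilation matrix `A` and `S(A) = {s ∈ [0,1)^d : A s ∈ ℤ^d}`,
the sets `Ω_{k,s} = {A^j (k + s) : j ≥ 1}`, for `k ∈ ℤ^d` and `s ∈ S(A) \ {0}`, form a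
partition of `ℤ^d \ {0}` (viewed inside `ℝ^d`). -/
theorem elliptic_stmt6 (d : ℕ) (A : Matrix (Fin d) (Fin d) ℝ)
    (hAint : ∀ i j, ∃ z : ℤ, A i j = (z : ℝ))
    (hAeig : ∀ z : ℂ, (Matrix.charpoly (A.map Complex.ofReal)).IsRoot z →
      1 < ‖z‖)
    (SA : Set (Fin d → ℝ))
    (hSA : SA = {s | (∀ i, s i ∈ Set.Ico (0:ℝ) 1) ∧
      ∃ k : Fin d → ℤ, A *ᵥ s = fun i => (k i : ℝ)})
    (Ω : (Fin d → ℤ) → (Fin d → ℝ) → Set (Fin d → ℝ))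
    (hΩ : ∀ k s, Ω k s =
      {v | ∃ j : ℕ, 1 ≤ j ∧ v = (A ^ j) *ᵥ ((fun i => (k i : ℝ)) + s)}) :
    {v : Fin d → ℝ | ∃ k : Fin d → ℤ, v = fun i => (k i : ℝ)} \ {0}
        = (⋃ k : Fin d → ℤ, ⋃ s ∈ SA \ {0}, Ω k s) ∧
    ∀ k k' : Fin d → ℤ, ∀ s ∈ SA \ {0}, ∀ s' ∈ SA \ {0},
      (k ≠ k' ∨ s ≠ s') → Ω k s ∩ Ω k' s' = ∅ := by
  subst hSA
  rcases Nat.eq_zero_or_pos d with hd0 | hd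
  · subst hd0
    constructor
    · ext v
      have hv0 : v = 0 := Subsingleton.elim v 0
      simp only [Set.mem_diff, Set.mem_setOf_eq, Set.mem_singleton_iff, Set.mem_iUnion, hv0]
      constructor
      · rintro ⟨-, h⟩; exact absurd trivial h
      · rintro ⟨k, s, ⟨-, hs2⟩, -⟩
        exact absurd (Subsingleton.elim s 0) hs2
    · rintro k k' s ⟨-, hs2⟩ s' hs' hne
      exact absurd (Subsingleton.elim s 0) hs2
  · have hdet : A.det ≠ 0 := by
      intro h
      have hB : (A.map Complex.ofReal).det = 0 := by rw [Ell6.det_map, h, Complex.ofReal_zero]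
      have h0 : (A.map Complex.ofReal).charpoly.IsRoot 0 := by
        rw [Polynomial.IsRoot, eval_charpoly', zero_smul, zero_sub, Matrix.det_neg, hB, mul_zero]
      have h1 := hAeig 0 h0
      rw [norm_zero] at h1
      exact absurd h1 (by norm_num)
    constructor
    · ext v
      simp only [Set.mem_diff, Set.mem_setOf_eq, Set.mem_singleton_iff, Set.mem_iUnion, hΩ]
      constructor
      · rintro ⟨hvI, hv0⟩
        obtain ⟨j, k, s, hj, hIco, hs0, hsA, hrep⟩ := exists_rep hd hAint hdet hAeig hvI hv0
        exact ⟨k, s, ⟨⟨hIco, hsA⟩, hs0⟩, j, hj, hrep⟩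
      · rintro ⟨k, s, ⟨⟨hIco, hsA⟩, hs0⟩, j, hj, rfl⟩
        exact mem_int_ne hAint hdet hj hIco hs0 hsA
    · rintro k k' s ⟨⟨hIco, hsA⟩, hs0⟩ s' ⟨⟨hIco', hsA'⟩, hs0'⟩ hne
      rw [Set.eq_empty_iff_forall_notMem]
      rintro v ⟨hv1, hv2⟩
      rw [hΩ] at hv1 hv2
      obtain ⟨j, hj, rfl⟩ := hv1
      obtain ⟨j', hj', heq⟩ := hv2
      obtain ⟨hjj, hkk, hss⟩ := uniq hAint hdet hIco hs0 hsA hIco' hs0' hsA' heq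
      cases hne with
      | inl h => exact h hkk
      | inr h => exact h hss
end

section
/- Let Q² = (q_{ij}) be a real symmetric positive definite d×d matrix, so that P(ξ) := ξᵀQ²ξ is a positive definite quadratic form, and define G(ξ₁,…,ξ_d) := 4 ∑_{i=1}^d q_{ii} sin²(ξ_i/2) + 2 ∑_{1≤i<j≤d} q_{ij} sin ξ_i sin ξ_j. Then G(ξ) ≥ 0 for all ξ ∈ ℝ^d, and G(ξ) = 0 if and only if ξ ∈ 2πℤ^d. -/
open Matrix

lemma sum_sym_aux (d : ℕ) (F : Fin d → Fin d → ℝ) (hF : ∀ i j, F i j = F j i) :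
    ∑ i, ∑ j, F i j = ∑ i, F i i + 2 * ∑ i, ∑ j, if i < j then F i j else 0 := by
  have h1 : ∀ i j : Fin d, F i j =
      (if i < j then F i j else 0) + (if j < i then F i j else 0)
        + (if i = j then F i j else 0) := by
    intro i j
    rcases lt_trichotomy i j with h | h | h
    · simp [h, asymm h, h.ne]
    · simp [h]
    · simp [h, asymm h, h.ne']
  have h2 : (∑ i, ∑ j, if (j : Fin d) < i then F i j else 0)
      = ∑ i, ∑ j, if i < j then F i j else 0 := by
    rw [Finset.sum_comm]
    refine Finset.sum_congr rfl fun i _ => Finset.sum_congr rfl fun j _ => ?_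
    by_cases h : i < j <;> simp [h, hF]
  have h3 : (∑ i, ∑ j, if (i : Fin d) = j then F i j else 0) = ∑ i, F i i := by
    refine Finset.sum_congr rfl fun i _ => ?_
    simp
  calc ∑ i, ∑ j, F i j
      = ∑ i, ∑ j, ((if i < j then F i j else 0) + (if j < i then F i j else 0)
        + (if i = j then F i j else 0)) := by
        refine Finset.sum_congr rfl fun i _ => Finset.sum_congr rfl fun j _ => h1 i j
    _ = (∑ i, ∑ j, if i < j then F i j else 0) + (∑ i, ∑ j, if j < i then F i j else 0)
        + (∑ i, ∑ j, if i = j then F i j else 0) := by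
        simp [Finset.sum_add_distrib]
    _ = ∑ i, F i i + 2 * ∑ i, ∑ j, if i < j then F i j else 0 := by
        rw [h2, h3]; ring

lemma trig_aux (x : ℝ) : 4 * Real.sin (x / 2) ^ 2 =
    Real.sin x ^ 2 + 4 * Real.sin (x / 2) ^ 4 := by
  have h1 : Real.sin x = 2 * Real.sin (x / 2) * Real.cos (x / 2) := by
    have := Real.sin_two_mul (x / 2)
    rw [show 2 * (x / 2) = x by ring] at this
    linarith
  have h2 := Real.sin_sq_add_cos_sq (x / 2)
  rw [h1]
  linear_combination (-4 * Real.sin (x / 2) ^ 2) * h2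

/-- If `Q2 = (q_{ij})` is real symmetric positive definite and
`G(ξ) = 4 ∑_i q_{ii} sin²(ξ_i/2) + 2 ∑_{i<j} q_{ij} sin ξ_i sin ξ_j`, then `G ≥ 0`
on `ℝ^d` and `G(ξ) = 0` iff `ξ ∈ 2πℤ^d`. -/
theorem elliptic_stmt7 (d : ℕ) (Q2 : Matrix (Fin d) (Fin d) ℝ)
    (hQ2sym : Q2ᵀ = Q2)
    (hQ2pos : ∀ x : Fin d → ℝ, x ≠ 0 → 0 < x ⬝ᵥ (Q2 *ᵥ x))
    (G : (Fin d → ℝ) → ℝ)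
    (hG : ∀ ξ, G ξ = 4 * (∑ i, Q2 i i * Real.sin (ξ i / 2) ^ 2)
      + 2 * (∑ i, ∑ j, if i < j then Q2 i j * Real.sin (ξ i) * Real.sin (ξ j) else 0)) :
    (∀ ξ : Fin d → ℝ, 0 ≤ G ξ) ∧
    (∀ ξ : Fin d → ℝ, G ξ = 0 ↔ ∃ k : Fin d → ℤ, ξ = fun i => 2 * Real.pi * (k i : ℝ)) := by
  have hsym : ∀ i j, Q2 i j = Q2 j i := by
    intro i j
    conv_lhs => rw [← hQ2sym]
    rfl
  have hdiag : ∀ i, 0 < Q2 i i := by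
    intro i
    have hne : (Pi.single i 1 : Fin d → ℝ) ≠ 0 := by
      intro h
      have := congrFun h i
      simp at this
    have := hQ2pos (Pi.single i 1) hne
    simpa [dotProduct, Matrix.mulVec, Pi.single_apply, Finset.mul_sum,
      mul_ite, ite_mul] using this
  have hsemi : ∀ x : Fin d → ℝ, 0 ≤ x ⬝ᵥ (Q2 *ᵥ x) := by
    intro x
    rcases eq_or_ne x 0 with h | h
    · simp [h]
    · exact (hQ2pos x h).le
  -- key decomposition
  have hkey : ∀ ξ : Fin d → ℝ, G ξ =
      (fun i => Real.sin (ξ i)) ⬝ᵥ (Q2 *ᵥ (fun i => Real.sin (ξ i)))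
        + 4 * ∑ i, Q2 i i * Real.sin (ξ i / 2) ^ 4 := by
    intro ξ
    have hdot : ((fun i => Real.sin (ξ i)) ⬝ᵥ (Q2 *ᵥ fun i => Real.sin (ξ i)))
        = ∑ i, ∑ j, Q2 i j * Real.sin (ξ i) * Real.sin (ξ j) := by
      simp only [dotProduct, Matrix.mulVec, Finset.mul_sum]
      exact Finset.sum_congr rfl fun i _ => Finset.sum_congr rfl fun j _ => by ring
    have hsum := sum_sym_aux d (fun i j => Q2 i j * Real.sin (ξ i) * Real.sin (ξ j))
      (fun i j => by rw [hsym i j]; ring)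
    rw [hG, hdot, hsum]
    have hcongr : ∑ i, (4 * (Q2 i i * Real.sin (ξ i / 2) ^ 2))
        = ∑ i, (Q2 i i * Real.sin (ξ i) * Real.sin (ξ i)
            + 4 * (Q2 i i * Real.sin (ξ i / 2) ^ 4)) :=
      Finset.sum_congr rfl fun i _ => by linear_combination Q2 i i * trig_aux (ξ i)
    rw [Finset.sum_add_distrib] at hcongr
    rw [← Finset.mul_sum] at hcongr
    rw [← Finset.mul_sum] at hcongr
    linarith
  have hterm : ∀ ξ : Fin d → ℝ, ∀ i, (0:ℝ) ≤ Q2 i i * Real.sin (ξ i / 2) ^ 4 := by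
    intro ξ i
    have := (hdiag i).le
    positivity
  constructor
  · intro ξ
    rw [hkey ξ]
    have h1 := hsemi (fun i => Real.sin (ξ i))
    have h2 : (0:ℝ) ≤ ∑ i, Q2 i i * Real.sin (ξ i / 2) ^ 4 :=
      Finset.sum_nonneg fun i _ => hterm ξ i
    linarith
  · intro ξ
    constructor
    · intro h0
      rw [hkey ξ] at h0
      have h1 := hsemi (fun i => Real.sin (ξ i))
      have h2 : (∑ i, Q2 i i * Real.sin (ξ i / 2) ^ 4) = 0 := by
        have h2' : (0:ℝ) ≤ ∑ i, Q2 i i * Real.sin (ξ i / 2) ^ 4 :=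
          Finset.sum_nonneg fun i _ => hterm ξ i
        linarith
      have h3 : ∀ i ∈ Finset.univ, Q2 i i * Real.sin (ξ i / 2) ^ 4 = 0 :=
        (Finset.sum_eq_zero_iff_of_nonneg fun i _ => hterm ξ i).mp h2
      have h4 : ∀ i : Fin d, ∃ k : ℤ, ξ i = 2 * Real.pi * k := by
        intro i
        have := h3 i (Finset.mem_univ i)
        have hsin : Real.sin (ξ i / 2) = 0 := by
          have hq := hdiag i
          by_contra hne
          have : Real.sin (ξ i / 2) ^ 4 > 0 := by positivity
          nlinarith
        rw [Real.sin_eq_zero_iff] at hsin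
        obtain ⟨n, hn⟩ := hsin
        exact ⟨n, by linarith⟩
      choose k hk using h4
      exact ⟨k, funext hk⟩
    · rintro ⟨k, rfl⟩
      rw [hG]
      have hz : ∀ i : Fin d, Real.sin (2 * Real.pi * (k i : ℝ) / 2) = 0 := by
        intro i
        rw [show 2 * Real.pi * (k i : ℝ) / 2 = (k i : ℝ) * Real.pi by ring]
        exact Real.sin_int_mul_pi (k i)
      have hz2 : ∀ i : Fin d, Real.sin (2 * Real.pi * (k i : ℝ)) = 0 := by
        intro i
        rw [show 2 * Real.pi * (k i : ℝ) = (2 * k i : ℤ) * Real.pi by push_cast; ring]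
        exact Real.sin_int_mul_pi _
      simp [hz, hz2]
end

section
/- In the elliptic setup, the function μ satisfies: (i) μ is 2π-periodic, i.e. μ(ξ + 2πk) = μ(ξ) for all ξ ∈ ℝ^d and k ∈ ℤ^d; (ii) μ(2πk) = 1 for all k ∈ ℤ^d; (iii) μ is continuous on all of ℝ^d; and (iv) there exist constants 𝒜 > 0 and 1 ≤ ℬ < ∞ such that 𝒜 ≤ μ(ξ) ≤ ℬ for all ξ ∈ ℝ^d. -/
open Matrix Finset

lemma aux_sum_split {d : ℕ} (a : Fin d → Fin d → ℝ) (hsym : ∀ i j, a i j = a j i) :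
    ∑ i, ∑ j, a i j = ∑ i, a i i + 2 * ∑ i, ∑ j, (if i < j then a i j else 0) := by
  have h1 : ∀ i j : Fin d, a i j =
      (if i < j then a i j else 0) + (if j < i then a i j else 0) + (if i = j then a i j else 0) := by
    intro i j
    rcases lt_trichotomy i j with h | h | h
    · simp [h, not_lt.mpr h.le, h.ne]
    · simp [h]
    · simp [h, not_lt.mpr h.le, (ne_of_gt h)]
  calc ∑ i, ∑ j, a i j
      = ∑ i, ∑ j, ((if i < j then a i j else 0) + (if j < i then a i j else 0)
          + (if i = j then a i j else 0)) := by
        refine Finset.sum_congr rfl fun i _ => Finset.sum_congr rfl fun j _ => h1 i j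
    _ = (∑ i, ∑ j, (if i < j then a i j else 0)) + (∑ i, ∑ j, (if j < i then a i j else 0))
          + ∑ i, ∑ j, (if i = j then a i j else 0) := by
        simp [Finset.sum_add_distrib]
    _ = ∑ i, a i i + 2 * ∑ i, ∑ j, (if i < j then a i j else 0) := by
        have h2 : (∑ i, ∑ j, (if j < i then a i j else 0))
            = ∑ i, ∑ j, (if i < j then a i j else 0) := by
          rw [Finset.sum_comm]
          refine Finset.sum_congr rfl fun i _ => Finset.sum_congr rfl fun j _ => ?_
          rw [hsym]
        have h3 : (∑ i, ∑ j, (if i = j then a i j else 0)) = ∑ i, a i i := by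
          refine Finset.sum_congr rfl fun i _ => ?_
          rw [Finset.sum_ite_eq (Finset.univ) i (fun j => a i j)]
          simp
        rw [h2, h3]; ring

lemma aux_abs_sin_sub {x : ℝ} (hx : |x| ≤ 1) : |Real.sin x - x| ≤ |x|^3 := by
  have h := Real.sin_bound hx
  have h2 : |x|^4 ≤ |x|^3 := by
    calc |x|^4 = |x|^3 * |x| := by ring
    _ ≤ |x|^3 * 1 := by
        have := pow_nonneg (abs_nonneg x) 3
        nlinarith
    _ = |x|^3 := by ring
  have h3 : |x^3/6| ≤ |x|^3/6 := by
    rw [abs_div, abs_pow]; simp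
  calc |Real.sin x - x| = |(Real.sin x - (x - x^3/6)) + (-(x^3/6))| := by ring_nf
    _ ≤ |Real.sin x - (x - x^3/6)| + |(-(x^3/6))| := abs_add_le _ _
    _ ≤ |x|^4 * (5/96) + |x|^3/6 := by
      have h5 : |x|^5/100 ≤ |x|^4 * (5/96) := by
        nlinarith [mul_nonneg (pow_nonneg (abs_nonneg x) 4) (sub_nonneg.mpr hx), pow_nonneg (abs_nonneg x) 4, pow_succ |x| 4]
      rw [abs_neg]; gcongr; linarith
    _ ≤ |x|^3 := by nlinarith [pow_nonneg (abs_nonneg x) 3]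

lemma aux_abs_sin_le {x : ℝ} (hx : |x| ≤ 1) : |Real.sin x| ≤ 2 * |x| := by
  have h := aux_abs_sin_sub hx
  have h3 : |x|^2 ≤ 1 := pow_le_one₀ (abs_nonneg x) hx
  have h4 : |x|^3 ≤ |x| := by nlinarith [abs_nonneg x]
  calc |Real.sin x| = |(Real.sin x - x) + x| := by ring_nf
    _ ≤ |Real.sin x - x| + |x| := abs_add_le _ _
    _ ≤ |x|^3 + |x| := by gcongr
    _ ≤ 2 * |x| := by linarith

lemma aux_sin_sq_pi (x : ℝ) (n : ℤ) : Real.sin (x + n * Real.pi) ^ 2 = Real.sin x ^ 2 := by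
  rw [Real.sin_add_int_mul_pi, mul_pow]
  rcases Int.even_or_odd n with h | h
  · rw [h.neg_one_zpow]; ring
  · rw [Odd.neg_one_zpow h]; ring

set_option maxHeartbeats 1000000 in
/-- In the elliptic setup, `μ` is `2π`-periodic, equals `1` on `2πℤ^d`,
is continuous on `ℝ^d`, and is bounded: `𝒜 ≤ μ(ξ) ≤ ℬ` with `𝒜 > 0`, `1 ≤ ℬ < ∞`. -/
theorem elliptic_stmt8
    (d : ℕ) (hd : 0 < d)
    (A U Q : Matrix (Fin d) (Fin d) ℝ)
    (hAint : ∀ i j, ∃ z : ℤ, A i j = (z : ℝ))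
    (hAeig : ∀ z : ℂ, (Matrix.charpoly (A.map Complex.ofReal)).IsRoot z →
      1 < ‖z‖)
    (hAdiag : ∃ Pm D : Matrix (Fin d) (Fin d) ℂ, IsUnit Pm ∧ D.IsDiag ∧
      A.map Complex.ofReal = Pm * D * Pm⁻¹)
    (hAiso : ∀ z w : ℂ, (Matrix.charpoly (A.map Complex.ofReal)).IsRoot z →
      (Matrix.charpoly (A.map Complex.ofReal)).IsRoot w → ‖z‖ = ‖w‖)
    (q : ℝ) (hq : q = |A.det|)
    (hU : Uᵀ * U = 1)
    (hQsym : Qᵀ = Q)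
    (hQpos : ∀ x : Fin d → ℝ, x ≠ 0 → 0 < x ⬝ᵥ (Q *ᵥ x))
    (hfact : (Aᵀ)⁻¹ = (q ^ (-(1:ℝ)/(d:ℝ))) • (Q⁻¹ * U * Q))
    (P : (Fin d → ℝ) → ℝ)
    (hP : ∀ ξ, P ξ = ξ ⬝ᵥ ((Q * Q) *ᵥ ξ))
    (G : (Fin d → ℝ) → ℝ)
    (hG : ∀ ξ, G ξ = 4 * (∑ i, (Q * Q) i i * Real.sin (ξ i / 2) ^ 2)
      + 2 * (∑ i, ∑ j, if i < j then (Q * Q) i j * Real.sin (ξ i) * Real.sin (ξ j) else 0))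
    (SA : Set (Fin d → ℝ))
    (hSA : SA = {s | (∀ i, s i ∈ Set.Ico (0:ℝ) 1) ∧
      ∃ k : Fin d → ℤ, Aᵀ *ᵥ s = fun i => (k i : ℝ)})
    (m0 : (Fin d → ℝ) → ℝ)
    (hm0 : ∀ ξ, m0 ξ = (∏ᶠ s ∈ SA \ {0}, G (ξ + (2 * Real.pi) • s)) /
      (∏ᶠ s ∈ SA \ {0}, G ((2 * Real.pi) • s)))
    (μ : (Fin d → ℝ) → ℝ)
    (hμ1 : ∀ ξ : Fin d → ℝ, (∃ k : Fin d → ℤ, ξ = fun i => 2 * Real.pi * (k i : ℝ)) →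
      μ ξ = 1)
    (hμ2 : ∀ ξ : Fin d → ℝ, ¬ (∃ k : Fin d → ℤ, ξ = fun i => 2 * Real.pi * (k i : ℝ)) →
      μ ξ = q ^ ((2:ℝ)/(d:ℝ)) * m0 ((Aᵀ)⁻¹ *ᵥ ξ) * G ((Aᵀ)⁻¹ *ᵥ ξ) / G ξ)
    :
    (∀ ξ : Fin d → ℝ, ∀ k : Fin d → ℤ, μ (ξ + fun i => 2 * Real.pi * (k i : ℝ)) = μ ξ) ∧
    (∀ k : Fin d → ℤ, μ (fun i => 2 * Real.pi * (k i : ℝ)) = 1) ∧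
    Continuous μ ∧
    (∃ 𝒜 ℬ : ℝ, 0 < 𝒜 ∧ 1 ≤ ℬ ∧ ∀ ξ : Fin d → ℝ, 𝒜 ≤ μ ξ ∧ μ ξ ≤ ℬ) := by
  clear hAdiag hAiso
  have hπ : (0:ℝ) < Real.pi := Real.pi_pos
  -- determinant of A is nonzero
  have hdetA : A.det ≠ 0 := by
    intro h0
    have hc : (A.map Complex.ofReal).det = 0 := by
      have h1 : (A.map Complex.ofReal).det = Complex.ofReal A.det := by
        rw [show A.map Complex.ofReal = Complex.ofRealHom.mapMatrix A from rfl,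
          ← RingHom.map_det]
        rfl
      rw [h1, h0]
      simp
    have hroot : (Matrix.charpoly (A.map Complex.ofReal)).IsRoot 0 := by
      have := Matrix.det_eq_sign_charpoly_coeff (A.map Complex.ofReal)
      rw [hc] at this
      have hcoeff : (Matrix.charpoly (A.map Complex.ofReal)).coeff 0 = 0 := by
        have hne : ((-1 : ℂ) ^ Fintype.card (Fin d)) ≠ 0 := by
          simp
        field_simp at this
        exact (mul_eq_zero.mp this.symm).resolve_left hne
      rwa [Polynomial.IsRoot.def, ← Polynomial.coeff_zero_eq_eval_zero]
    have := hAeig 0 hroot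
    simp at this
    linarith
  have hq0 : 0 < q := by
    rw [hq]
    exact abs_pos.mpr hdetA
  have hdetAT : IsUnit (Aᵀ).det := by
    rw [Matrix.det_transpose]
    exact (isUnit_iff_ne_zero).mpr hdetA
  have hATB : Aᵀ * (Aᵀ)⁻¹ = 1 := Matrix.mul_nonsing_inv _ hdetAT
  have hBAT : (Aᵀ)⁻¹ * Aᵀ = 1 := Matrix.nonsing_inv_mul _ hdetAT
  have hIDl : ∀ v : Fin d → ℝ, Aᵀ *ᵥ ((Aᵀ)⁻¹ *ᵥ v) = v := by
    intro v; rw [Matrix.mulVec_mulVec, hATB, Matrix.one_mulVec]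
  have hIDr : ∀ v : Fin d → ℝ, (Aᵀ)⁻¹ *ᵥ (Aᵀ *ᵥ v) = v := by
    intro v; rw [Matrix.mulVec_mulVec, hBAT, Matrix.one_mulVec]
  have hdetQ : IsUnit Q.det := by
    rw [isUnit_iff_ne_zero]
    intro h0
    obtain ⟨v, hv0, hv⟩ := (Matrix.exists_mulVec_eq_zero_iff).mpr h0
    have := hQpos v hv0
    rw [hv, dotProduct_zero] at this
    exact lt_irrefl 0 this
  -- dot product transpose identity
  have hdot : ∀ (M : Matrix (Fin d) (Fin d) ℝ) (v w : Fin d → ℝ),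
      (M *ᵥ v) ⬝ᵥ w = v ⬝ᵥ (Mᵀ *ᵥ w) := by
    intro M v w
    rw [Matrix.dotProduct_mulVec, Matrix.vecMul_transpose, dotProduct_comm]
  -- P is positive definite
  have hPsq : ∀ x, P x = (Q *ᵥ x) ⬝ᵥ (Q *ᵥ x) := by
    intro x
    rw [hP, show Q * Q = Qᵀ * Q by rw [hQsym], ← Matrix.mulVec_mulVec, ← hdot]
  have hPpos : ∀ x : Fin d → ℝ, x ≠ 0 → 0 < P x := by
    intro x hx
    rw [hPsq]
    have hQx : Q *ᵥ x ≠ 0 := by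
      intro h0
      have := hQpos x hx
      rw [h0, dotProduct_zero] at this
      exact lt_irrefl 0 this
    have h1 : (Q *ᵥ x) ⬝ᵥ (Q *ᵥ x) ≠ 0 := fun hc => hQx (dotProduct_self_eq_zero.mp hc)
    have h2 : 0 ≤ (Q *ᵥ x) ⬝ᵥ (Q *ᵥ x) := by
      rw [dotProduct]
      exact Finset.sum_nonneg fun i _ => mul_self_nonneg _
    exact lt_of_le_of_ne h2 (Ne.symm h1)
  have hP0 : P 0 = 0 := by rw [hP, Matrix.mulVec_zero, dotProduct_zero]
  have hPnonneg : ∀ x, 0 ≤ P x := by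
    intro x
    by_cases hx : x = 0
    · rw [hx, hP0]
    · exact (hPpos x hx).le
  have hPhom : ∀ (a : ℝ) (x : Fin d → ℝ), P (a • x) = a^2 * P x := by
    intro a x
    rw [hP, hP, Matrix.mulVec_smul, smul_dotProduct, dotProduct_smul,
      smul_eq_mul, smul_eq_mul]
    ring
  -- the key identity P(B x) = q^(-2/d) P x
  have hPB : ∀ x, P ((Aᵀ)⁻¹ *ᵥ x) = q ^ (-(2:ℝ)/(d:ℝ)) * P x := by
    intro x
    have hmat : ((Aᵀ)⁻¹)ᵀ * ((Q * Q) * (Aᵀ)⁻¹)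
        = (q ^ (-(1:ℝ)/(d:ℝ)) * q ^ (-(1:ℝ)/(d:ℝ))) • (Q * Q) := by
      rw [hfact]
      simp only [Matrix.transpose_smul, Matrix.smul_mul, Matrix.mul_smul, smul_smul]
      congr 1
      have hQ1 : (Q⁻¹ * U * Q)ᵀ = Q * Uᵀ * Q⁻¹ := by
        rw [Matrix.transpose_mul, Matrix.transpose_mul, hQsym, Matrix.transpose_nonsing_inv, hQsym]
        noncomm_ring
      rw [hQ1]
      have h1 : Q⁻¹ * Q = 1 := Matrix.nonsing_inv_mul Q hdetQ
      have h2 : Q * Q⁻¹ = 1 := Matrix.mul_nonsing_inv Q hdetQ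
      calc (Q * Uᵀ * Q⁻¹) * ((Q * Q) * (Q⁻¹ * U * Q))
          = Q * (Uᵀ * ((Q⁻¹ * Q) * (Q * Q⁻¹) * (U * Q))) := by noncomm_ring
        _ = Q * Q := by
            rw [h1, h2, one_mul, one_mul, ← Matrix.mul_assoc, ← Matrix.mul_assoc,
              Matrix.mul_assoc Q Uᵀ U, hU, Matrix.mul_one]
    have hrpow : q ^ (-(1:ℝ)/(d:ℝ)) * q ^ (-(1:ℝ)/(d:ℝ)) = q ^ (-(2:ℝ)/(d:ℝ)) := by
      rw [← Real.rpow_add hq0]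
      congr 1
      ring
    rw [hP, Matrix.mulVec_mulVec, hdot, Matrix.mulVec_mulVec, hmat, hrpow,
      Matrix.smul_mulVec, dotProduct_smul, smul_eq_mul, ← hP]
  have hq2c2 : q ^ ((2:ℝ)/(d:ℝ)) * q ^ (-(2:ℝ)/(d:ℝ)) = 1 := by
    rw [← Real.rpow_add hq0, show (2:ℝ)/(d:ℝ) + -(2:ℝ)/(d:ℝ) = 0 by ring, Real.rpow_zero]
  have hq2pos : 0 < q ^ ((2:ℝ)/(d:ℝ)) := Real.rpow_pos_of_pos hq0 _
  have hc2pos : 0 < q ^ (-(2:ℝ)/(d:ℝ)) := Real.rpow_pos_of_pos hq0 _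
  -- diagonal entries of Q*Q are positive
  have hqii : ∀ i, 0 < (Q * Q) i i := by
    intro i
    have h1 := hPpos (Pi.single i 1) (by
      intro h0
      have := congrFun h0 i
      simp at this)
    rw [hP] at h1
    have h2 : (Pi.single i 1 : Fin d → ℝ) ⬝ᵥ ((Q * Q) *ᵥ Pi.single i 1) = (Q * Q) i i := by
      simp [dotProduct, Matrix.mulVec, Pi.single_apply]
    rwa [h2] at h1

  have hQ2sym : (Q * Q)ᵀ = Q * Q := by rw [Matrix.transpose_mul, hQsym]
  have hQ2e : ∀ i j, (Q * Q) i j = (Q * Q) j i := by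
    intro i j
    have h := congrFun (congrFun hQ2sym j) i
    simpa [Matrix.transpose_apply] using h
  -- G structure: G = P(sin) + 4 * sum of fourth powers
  have hsq4 : ∀ x : ℝ, 4 * Real.sin (x/2)^2 = Real.sin x ^ 2 + 4 * Real.sin (x/2)^4 := by
    intro x
    have hs : Real.sin x = 2 * Real.sin (x/2) * Real.cos (x/2) := by
      have h2 := Real.sin_two_mul (x/2)
      rw [show 2*(x/2) = x by ring] at h2
      exact h2
    have hc := Real.sin_sq_add_cos_sq (x/2)
    rw [hs]
    nlinarith [hc]
  have hGsplit : ∀ ξ, G ξ = P (fun i => Real.sin (ξ i))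
      + 4 * ∑ i, (Q * Q) i i * Real.sin (ξ i / 2)^4 := by
    intro ξ
    have hPw : P (fun i => Real.sin (ξ i)) = (∑ i, (Q*Q) i i * Real.sin (ξ i)^2)
        + 2 * ∑ i, ∑ j, (if i < j then Real.sin (ξ i) * ((Q*Q) i j * Real.sin (ξ j)) else 0) := by
      rw [hP]
      have hexp : (fun i => Real.sin (ξ i)) ⬝ᵥ ((Q*Q) *ᵥ fun i => Real.sin (ξ i))
          = ∑ i, ∑ j, Real.sin (ξ i) * ((Q*Q) i j * Real.sin (ξ j)) := by
        simp [dotProduct, Matrix.mulVec, Finset.mul_sum]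
      rw [hexp, aux_sum_split (fun i j => Real.sin (ξ i) * ((Q*Q) i j * Real.sin (ξ j)))
        (fun i j => by rw [hQ2e i j]; ring)]
      congr 1
      refine Finset.sum_congr rfl fun i _ => ?_
      ring
    have hdbl : (∑ i, ∑ j, (if i < j then (Q*Q) i j * Real.sin (ξ i) * Real.sin (ξ j) else 0))
        = ∑ i, ∑ j, (if i < j then Real.sin (ξ i) * ((Q*Q) i j * Real.sin (ξ j)) else 0) := by
      refine Finset.sum_congr rfl fun i _ => Finset.sum_congr rfl fun j _ => ?_
      split_ifs with h
      · ring
      · rfl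
    rw [hG, hPw, ← hdbl]
    have hdiag : 4 * (∑ i, (Q*Q) i i * Real.sin (ξ i / 2)^2)
        = (∑ i, (Q*Q) i i * Real.sin (ξ i)^2) + 4 * ∑ i, (Q*Q) i i * Real.sin (ξ i / 2)^4 := by
      rw [Finset.mul_sum, Finset.mul_sum, ← Finset.sum_add_distrib]
      refine Finset.sum_congr rfl fun i _ => ?_
      linear_combination ((Q*Q) i i) * hsq4 (ξ i)
    linarith [hdiag]
  have hGnonneg : ∀ ξ, 0 ≤ G ξ := by
    intro ξ
    rw [hGsplit]
    have h2 : 0 ≤ ∑ i, (Q*Q) i i * Real.sin (ξ i / 2)^4 :=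
      Finset.sum_nonneg fun i _ => mul_nonneg (hqii i).le (by positivity)
    linarith [hPnonneg (fun i => Real.sin (ξ i))]
  -- periodicity of G
  have hGper : ∀ (ξ : Fin d → ℝ) (k : Fin d → ℤ),
      G (ξ + fun i => 2 * Real.pi * (k i : ℝ)) = G ξ := by
    intro ξ k
    rw [hG, hG]
    congr 1
    · congr 1
      refine Finset.sum_congr rfl fun i _ => ?_
      have h1 : (ξ + fun i => 2 * Real.pi * (k i : ℝ)) i / 2 = ξ i / 2 + (k i : ℝ) * Real.pi := by
        simp [Pi.add_apply]; ring
      rw [h1, aux_sin_sq_pi]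
    · congr 1
      refine Finset.sum_congr rfl fun i _ => Finset.sum_congr rfl fun j _ => ?_
      have h2 : ∀ l : Fin d, (ξ + fun i => 2 * Real.pi * (k i : ℝ)) l
          = ξ l + (k l : ℝ) * (2 * Real.pi) := by
        intro l; simp [Pi.add_apply]; ring
      rw [h2 i, h2 j, Real.sin_add_int_mul_two_pi, Real.sin_add_int_mul_two_pi]
  have hG0 : G 0 = 0 := by
    rw [hG]
    simp
  have hGlat : ∀ k : Fin d → ℤ, G (fun i => 2 * Real.pi * (k i : ℝ)) = 0 := by
    intro k
    have h1 : (fun i => 2 * Real.pi * (k i : ℝ)) = (0 : Fin d → ℝ) + fun i => 2 * Real.pi * (k i : ℝ) := by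
      simp
    rw [h1, hGper, hG0]
  have hGzero : ∀ ξ, G ξ = 0 → ∃ k : Fin d → ℤ, ξ = fun i => 2 * Real.pi * (k i : ℝ) := by
    intro ξ h0
    rw [hGsplit] at h0
    have h2 : ∀ i ∈ Finset.univ, (0:ℝ) ≤ (Q*Q) i i * Real.sin (ξ i / 2)^4 :=
      fun i _ => mul_nonneg (hqii i).le (by positivity)
    have hsum0 : ∑ i, (Q*Q) i i * Real.sin (ξ i / 2)^4 = 0 := by
      have := hPnonneg (fun i => Real.sin (ξ i))
      have := Finset.sum_nonneg h2
      linarith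
    have hex : ∀ i, ∃ n : ℤ, ξ i = 2 * Real.pi * (n : ℝ) := by
      intro i
      have ht := (Finset.sum_eq_zero_iff_of_nonneg h2).mp hsum0 i (Finset.mem_univ i)
      have hs4 : Real.sin (ξ i / 2)^4 = 0 := by
        rcases mul_eq_zero.mp ht with h | h
        · exact absurd h (hqii i).ne'
        · exact h
      have hs : Real.sin (ξ i / 2) = 0 := by
        exact pow_eq_zero_iff (by norm_num) |>.mp hs4
      obtain ⟨n, hn⟩ := Real.sin_eq_zero_iff.mp hs
      exact ⟨n, by linarith⟩
    choose kk hkk using hex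
    exact ⟨kk, funext hkk⟩
  have hGpos : ∀ ξ, ¬ (∃ k : Fin d → ℤ, ξ = fun i => 2 * Real.pi * (k i : ℝ)) → 0 < G ξ := by
    intro ξ hξ
    rcases lt_or_eq_of_le (hGnonneg ξ) with h | h
    · exact h
    · exact absurd (hGzero ξ h.symm) hξ
  have hGcont : Continuous G := by
    have hfun : G = fun ξ => 4 * (∑ i, (Q * Q) i i * Real.sin (ξ i / 2) ^ 2)
        + 2 * (∑ i, ∑ j, if i < j then (Q * Q) i j * Real.sin (ξ i) * Real.sin (ξ j) else 0) :=
      funext hG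
    rw [hfun]
    apply Continuous.add
    · apply continuous_const.mul
      apply continuous_finset_sum
      intro i _
      exact continuous_const.mul ((Real.continuous_sin.comp ((continuous_apply i).div_const 2)).pow 2)
    · apply continuous_const.mul
      apply continuous_finset_sum
      intro i _
      apply continuous_finset_sum
      intro j _
      by_cases h : i < j
      · simp only [h, if_true]
        exact (continuous_const.mul (Real.continuous_sin.comp (continuous_apply i))).mul
          (Real.continuous_sin.comp (continuous_apply j))
      · simp only [h, if_false]
        exact continuous_const
  -- integer matrix preserves integer vectors
  have hintmul : ∀ k : Fin d → ℤ, ∃ m : Fin d → ℤ,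
      (Aᵀ *ᵥ fun i => (k i : ℝ)) = fun i => (m i : ℝ) := by
    intro k
    choose Z hZ using hAint
    refine ⟨fun i => ∑ j, Z j i * k j, ?_⟩
    funext i
    have h1 : (Aᵀ *ᵥ fun i => (k i:ℝ)) i = ∑ j, (A j i : ℝ) * (k j : ℝ) := by
      simp [Matrix.mulVec, dotProduct, Matrix.transpose_apply]
    rw [h1]
    push_cast
    exact Finset.sum_congr rfl fun j _ => by rw [hZ]
  have hnotlatB : ∀ ξ : Fin d → ℝ, ¬ (∃ k : Fin d → ℤ, ξ = fun i => 2 * Real.pi * (k i : ℝ)) →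
      ¬ (∃ k : Fin d → ℤ, (Aᵀ)⁻¹ *ᵥ ξ = fun i => 2 * Real.pi * (k i : ℝ)) := by
    intro ξ h hc
    obtain ⟨k, hk⟩ := hc
    apply h
    obtain ⟨m, hm⟩ := hintmul k
    refine ⟨m, ?_⟩
    have h1 : ξ = Aᵀ *ᵥ ((Aᵀ)⁻¹ *ᵥ ξ) := (hIDl ξ).symm
    rw [hk] at h1
    have h2 : (fun i => 2 * Real.pi * (k i : ℝ)) = (2 * Real.pi) • (fun i => (k i : ℝ)) := by
      funext i
      simp [Pi.smul_apply, smul_eq_mul]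
    rw [h2, Matrix.mulVec_smul, hm] at h1
    rw [h1]
    funext i
    simp [Pi.smul_apply, smul_eq_mul]

  classical
  -- SA basics
  have h0SA : (0 : Fin d → ℝ) ∈ SA := by
    rw [hSA]
    refine ⟨fun i => ?_, ⟨0, ?_⟩⟩
    · simp [Set.mem_Ico]
    · rw [Matrix.mulVec_zero]
      funext i
      simp
  have hSAfin : SA.Finite := by
    have hKfin : {k : Fin d → ℤ | ∀ i, |(k i : ℝ)| ≤ ∑ i, ∑ j, |A i j|}.Finite := by
      have hsub2 : {k : Fin d → ℤ | ∀ i, |(k i : ℝ)| ≤ ∑ i, ∑ j, |A i j|} ⊆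
          Set.pi Set.univ (fun _ : Fin d => {z : ℤ | |(z:ℝ)| ≤ ∑ i, ∑ j, |A i j|}) := by
        intro k hk
        exact fun i _ => hk i
      refine Set.Finite.subset (Set.Finite.pi fun i => ?_) hsub2
      refine Set.Finite.subset (Set.finite_Icc (-(⌈(∑ i, ∑ j, |A i j|)⌉)) ⌈(∑ i, ∑ j, |A i j|)⌉) ?_
      intro z hz
      simp only [Set.mem_setOf_eq] at hz
      have h1 : (z:ℝ) ≤ (⌈(∑ i, ∑ j, |A i j|)⌉ : ℝ) := (le_of_abs_le hz).trans (Int.le_ceil _)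
      have h2 : ((-(⌈(∑ i, ∑ j, |A i j|)⌉) : ℤ) : ℝ) ≤ (z:ℝ) := by
        push_cast
        have := neg_abs_le (z:ℝ)
        have h3 := (Int.le_ceil (∑ i, ∑ j, |A i j|))
        have h4 := hz
        linarith
      constructor
      · exact_mod_cast h2
      · exact_mod_cast h1
    have hsub : SA ⊆ (fun k : Fin d → ℤ => (Aᵀ)⁻¹ *ᵥ fun i => (k i : ℝ)) ''
        {k : Fin d → ℤ | ∀ i, |(k i : ℝ)| ≤ ∑ i, ∑ j, |A i j|} := by
      intro s hs
      rw [hSA] at hs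
      obtain ⟨hs1, k, hk⟩ := hs
      refine ⟨k, fun i => ?_, ?_⟩
      swap
      · show (Aᵀ)⁻¹ *ᵥ (fun i => (k i : ℝ)) = s
        rw [← hk, hIDr]
      have h1 : (k i : ℝ) = (Aᵀ *ᵥ s) i := by rw [hk]
      have h2 : |(Aᵀ *ᵥ s) i| ≤ ∑ j, |A j i| := by
        calc |(Aᵀ *ᵥ s) i| = |∑ j, Aᵀ i j * s j| := by rw [Matrix.mulVec, dotProduct]
          _ ≤ ∑ j, |Aᵀ i j * s j| := Finset.abs_sum_le_sum_abs _ _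
          _ ≤ ∑ j, |A j i| := by
            refine Finset.sum_le_sum fun j _ => ?_
            rw [abs_mul, Matrix.transpose_apply]
            have h3 := hs1 j
            simp only [Set.mem_Ico] at h3
            have h4 : |s j| ≤ 1 := by
              rw [abs_le]
              constructor <;> linarith [h3.1, h3.2]
            nlinarith [abs_nonneg (A j i)]
      have h5 : ∑ j, |A j i| ≤ ∑ i', ∑ j, |A i' j| := by
        refine Finset.sum_le_sum fun j _ => ?_
        exact Finset.single_le_sum (f := fun j' => |A j j'|) (fun _ _ => abs_nonneg _)
          (Finset.mem_univ i)
      rw [h1]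
      exact h2.trans h5
    exact Set.Finite.subset (Set.Finite.image _ hKfin) hsub
  set T : Finset (Fin d → ℝ) := hSAfin.toFinset.erase 0 with hT
  have h0D : (0 : Fin d → ℝ) ∈ hSAfin.toFinset := by
    rw [Set.Finite.mem_toFinset]
    exact h0SA
  have hTset : SA \ {0} = ↑T := by
    ext x
    simp only [hT, Set.mem_diff, Set.mem_singleton_iff, Finset.coe_erase,
      Set.Finite.coe_toFinset, Set.mem_diff, Set.mem_singleton_iff]
    try tauto
  have hTmem : ∀ s ∈ T, s ∈ SA ∧ s ≠ 0 := by
    intro s hs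
    have h1 : s ∈ SA \ {0} := by
      rw [hTset]
      exact_mod_cast hs
    exact ⟨h1.1, h1.2⟩
  have hm0T : ∀ ξ, m0 ξ = (∏ s ∈ T, G (ξ + (2*Real.pi) • s)) / (∏ s ∈ T, G ((2*Real.pi) • s)) := by
    intro ξ
    rw [hm0, hTset, finprod_mem_coe_finset, finprod_mem_coe_finset]
  have hdenfac : ∀ s ∈ T, 0 < G ((2*Real.pi) • s) := by
    intro s hs
    obtain ⟨hsSA, hs0⟩ := hTmem s hs
    apply hGpos
    rintro ⟨k, hk⟩
    apply hs0
    rw [hSA] at hsSA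
    obtain ⟨hIco, -⟩ := hsSA
    funext i
    have h1 : 2 * Real.pi * s i = 2 * Real.pi * (k i : ℝ) := by
      have h0 := congrFun hk i
      simpa [Pi.smul_apply, smul_eq_mul] using h0
    have h2 : s i = (k i : ℝ) := mul_left_cancel₀ (by positivity : (2*Real.pi) ≠ 0) h1
    have h3 := hIco i
    simp only [Set.mem_Ico] at h3
    have h4 : k i = 0 := by
      have h5 : (0:ℝ) ≤ (k i : ℝ) := h2 ▸ h3.1
      have h6 : ((k i : ℝ)) < 1 := h2 ▸ h3.2
      have h7 : (0:ℤ) ≤ k i := by exact_mod_cast h5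
      have h8 : k i < 1 := by exact_mod_cast h6
      omega
    rw [h2, h4]
    simp
  have hdenpos : 0 < ∏ s ∈ T, G ((2*Real.pi) • s) := Finset.prod_pos hdenfac
  have hm0cont : Continuous m0 := by
    have hfun : m0 = fun ξ => (∏ s ∈ T, G (ξ + (2*Real.pi) • s)) / (∏ s ∈ T, G ((2*Real.pi) • s)) :=
      funext hm0T
    rw [hfun]
    apply Continuous.div_const
    apply continuous_finset_prod
    intro s _
    exact hGcont.comp (continuous_id.add continuous_const)
  have hm0zero : m0 0 = 1 := by
    rw [hm0T]
    rw [Finset.prod_congr rfl (fun s _ => by rw [zero_add] :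
      ∀ s ∈ T, G ((0:Fin d → ℝ) + (2*Real.pi) • s) = G ((2*Real.pi) • s))]
    exact div_self hdenpos.ne'
  have hm0pos : ∀ ξ : Fin d → ℝ, ¬(∃ k : Fin d → ℤ, ξ = fun i => 2*Real.pi*(k i:ℝ)) →
      0 < m0 ((Aᵀ)⁻¹ *ᵥ ξ) := by
    intro ξ hξ
    rw [hm0T]
    apply div_pos _ hdenpos
    apply Finset.prod_pos
    intro s hs
    obtain ⟨hsSA, -⟩ := hTmem s hs
    apply hGpos
    rintro ⟨k, hk⟩
    apply hξ
    rw [hSA] at hsSA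
    obtain ⟨-, ks, hks⟩ := hsSA
    have h1 : (Aᵀ)⁻¹ *ᵥ ξ = (fun i => 2*Real.pi*(k i:ℝ)) - (2*Real.pi) • s :=
      eq_sub_of_add_eq hk
    have h2 : ξ = Aᵀ *ᵥ ((fun i => 2*Real.pi*(k i:ℝ)) - (2*Real.pi) • s) := by
      rw [← h1, hIDl]
    obtain ⟨m, hm⟩ := hintmul k
    refine ⟨fun i => m i - ks i, ?_⟩
    rw [h2, Matrix.mulVec_sub]
    have h3 : (fun i => 2*Real.pi*(k i:ℝ)) = (2*Real.pi) • (fun i => (k i:ℝ)) := by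
      funext i
      simp [Pi.smul_apply, smul_eq_mul]
    rw [h3, Matrix.mulVec_smul, Matrix.mulVec_smul, hm, hks]
    funext i
    simp only [Pi.sub_apply, Pi.smul_apply, smul_eq_mul]
    push_cast
    ring
  have hμpos : ∀ ξ, 0 < μ ξ := by
    intro ξ
    by_cases hξ : ∃ k : Fin d → ℤ, ξ = fun i => 2*Real.pi*(k i:ℝ)
    · rw [hμ1 ξ hξ]
      norm_num
    · rw [hμ2 ξ hξ]
      exact div_pos (mul_pos (mul_pos hq2pos (hm0pos ξ hξ)) (hGpos _ (hnotlatB ξ hξ)))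
        (hGpos ξ hξ)
  -- fractional-shift machinery on SA
  have hfract_mem : ∀ t' : Fin d → ℝ, (∃ m : Fin d → ℤ, Aᵀ *ᵥ t' = fun i => (m i:ℝ)) →
      ∀ s ∈ SA, (fun i => Int.fract (s i + t' i)) ∈ SA := by
    rintro t' ⟨m, hm⟩ s hs
    rw [hSA] at hs ⊢
    obtain ⟨hIco, ks, hks⟩ := hs
    refine ⟨fun i => Set.mem_Ico.mpr ⟨Int.fract_nonneg _, Int.fract_lt_one _⟩, ?_⟩
    have hsplit : (fun i => Int.fract (s i + t' i))
        = (s + t') - (fun i => ((⌊s i + t' i⌋ : ℤ):ℝ)) := by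
      funext i
      simp only [Pi.sub_apply, Pi.add_apply]
      rw [← Int.self_sub_floor]
    obtain ⟨mf, hmf⟩ := hintmul (fun i => ⌊s i + t' i⌋)
    refine ⟨fun i => ks i + m i - mf i, ?_⟩
    rw [hsplit, Matrix.mulVec_sub, Matrix.mulVec_add, hks, hm, hmf]
    funext i
    simp only [Pi.sub_apply, Pi.add_apply]
    push_cast
    ring
  have hfract_inj : ∀ t' : Fin d → ℝ,
      Set.InjOn (fun s : Fin d → ℝ => fun i => Int.fract (s i + t' i)) SA := by
    intro t' s hs s' hs' heq
    rw [hSA] at hs hs'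
    funext i
    have h1 : Int.fract (s i + t' i) = Int.fract (s' i + t' i) := congrFun heq i
    obtain ⟨z, hz⟩ := Int.fract_eq_fract.mp h1
    have h3 := hs.1 i
    have h4 := hs'.1 i
    simp only [Set.mem_Ico] at h3 h4
    have h5 : z = 0 := by
      have h6 : (-1:ℝ) < (z:ℝ) := by linarith
      have h7 : (z:ℝ) < 1 := by linarith
      have h8 : (-1:ℤ) < z := by exact_mod_cast h6
      have h9 : z < 1 := by exact_mod_cast h7
      omega
    rw [h5] at hz
    simp only [Int.cast_zero] at hz
    linarith
  -- periodicity of μ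
  have hper : ∀ (ξ : Fin d → ℝ) (k : Fin d → ℤ),
      μ (ξ + fun i => 2 * Real.pi * (k i : ℝ)) = μ ξ := by
    intro ξ k
    by_cases hξ : ∃ m : Fin d → ℤ, ξ = fun i => 2 * Real.pi * (m i : ℝ)
    · obtain ⟨m, hm⟩ := hξ
      rw [hμ1 ξ ⟨m, hm⟩, hμ1 _ ⟨m + k, ?_⟩]
      rw [hm]
      funext i
      simp only [Pi.add_apply]
      push_cast
      ring
    · have hξk : ¬ ∃ m : Fin d → ℤ, (ξ + fun i => 2 * Real.pi * (k i : ℝ))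
          = fun i => 2 * Real.pi * (m i : ℝ) := by
        rintro ⟨m, hm⟩
        apply hξ
        refine ⟨fun i => m i - k i, ?_⟩
        funext i
        have h1 := congrFun hm i
        simp only [Pi.add_apply] at h1
        push_cast
        linarith
      rw [hμ2 _ hξk, hμ2 _ hξ, hGper]
      set t : Fin d → ℝ := (Aᵀ)⁻¹ *ᵥ (fun i => (k i:ℝ)) with ht
      have hAt : Aᵀ *ᵥ t = fun i => (k i:ℝ) := hIDl _
      have hAmt : ∃ m : Fin d → ℤ, Aᵀ *ᵥ (-t) = fun i => (m i:ℝ) := by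
        refine ⟨fun i => -(k i), ?_⟩
        rw [Matrix.mulVec_neg, hAt]
        funext i
        simp only [Pi.neg_apply]
        push_cast
        ring
      set σ : (Fin d → ℝ) → (Fin d → ℝ) := fun s => fun i => Int.fract (s i + t i) with hσ
      set τ : (Fin d → ℝ) → (Fin d → ℝ) := fun s => fun i => Int.fract (s i + (-t) i) with hτ
      have hστ : ∀ s ∈ SA, σ (τ s) = s := by
        intro s hs
        rw [hSA] at hs
        funext i
        show Int.fract (Int.fract (s i + (-t) i) + t i) = s i
        have h1 : Int.fract (s i + (-t) i) + t i = (s i) - ((⌊s i + (-t) i⌋ : ℤ) : ℝ) := by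
          rw [← Int.self_sub_floor]
          simp only [Pi.neg_apply]
          ring
        rw [h1, Int.fract_sub_intCast, Int.fract_eq_self.mpr]
        have h2 := hs.1 i
        simp only [Set.mem_Ico] at h2
        exact ⟨h2.1, h2.2⟩
      have hmapsto : ∀ s ∈ SA, σ s ∈ SA := fun s hs => hfract_mem t ⟨k, hAt⟩ s hs
      have hsurj : Set.SurjOn σ SA SA := by
        intro s hs
        exact ⟨τ s, hfract_mem (-t) hAmt s hs, hστ s hs⟩
      -- the product identity
      have hprod : ∀ η : Fin d → ℝ,
          (∏ s ∈ T, G (η + (2*Real.pi) • t + (2*Real.pi) • s)) * G (η + (2*Real.pi) • t)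
          = (∏ s ∈ T, G (η + (2*Real.pi) • s)) * G η := by
        intro η
        have hshift : ∀ s : Fin d → ℝ, G (η + (2*Real.pi) • t + (2*Real.pi) • s)
            = G (η + (2*Real.pi) • (σ s)) := by
          intro s
          have h1 : η + (2*Real.pi) • t + (2*Real.pi) • s
              = (η + (2*Real.pi) • (σ s)) + fun i => 2 * Real.pi * ((⌊s i + t i⌋ : ℤ) : ℝ) := by
            funext i
            simp only [Pi.add_apply, Pi.smul_apply, smul_eq_mul, hσ]
            rw [← Int.self_sub_floor]
            ring
          rw [h1, hGper]
        have hDmem : ∀ s : Fin d → ℝ, s ∈ hSAfin.toFinset ↔ s ∈ SA := fun s =>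
          Set.Finite.mem_toFinset _
        have hσ0 : G (η + (2*Real.pi) • t) = G (η + (2*Real.pi) • (σ 0)) := by
          have h2 := hshift 0
          rw [smul_zero, add_zero] at h2
          exact h2
        calc (∏ s ∈ T, G (η + (2*Real.pi) • t + (2*Real.pi) • s)) * G (η + (2*Real.pi) • t)
            = (∏ s ∈ T, G (η + (2*Real.pi) • (σ s))) * G (η + (2*Real.pi) • (σ 0)) := by
              rw [Finset.prod_congr rfl (fun s _ => hshift s), hσ0]
          _ = ∏ s ∈ hSAfin.toFinset, G (η + (2*Real.pi) • (σ s)) :=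
              Finset.prod_erase_mul _ _ h0D
          _ = ∏ s ∈ hSAfin.toFinset, G (η + (2*Real.pi) • s) := by
              refine Finset.prod_nbij σ ?_ ?_ ?_ ?_
              · intro a ha
                rw [hDmem] at ha ⊢
                exact hmapsto a ha
              · rw [Set.Finite.coe_toFinset]
                exact hfract_inj t
              · rw [Set.Finite.coe_toFinset]
                exact hsurj
              · intro a _
                rfl
          _ = (∏ s ∈ T, G (η + (2*Real.pi) • s)) * G (η + (2*Real.pi) • (0:Fin d → ℝ)) :=
              (Finset.prod_erase_mul _ _ h0D).symm
          _ = (∏ s ∈ T, G (η + (2*Real.pi) • s)) * G η := by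
              rw [smul_zero, add_zero]
      have hBsum : (Aᵀ)⁻¹ *ᵥ (ξ + fun i => 2 * Real.pi * (k i : ℝ))
          = (Aᵀ)⁻¹ *ᵥ ξ + (2*Real.pi) • t := by
        rw [Matrix.mulVec_add]
        congr 1
        rw [show (fun i => 2 * Real.pi * (k i:ℝ)) = (2*Real.pi) • (fun i => (k i:ℝ)) from
          funext fun i => by simp [smul_eq_mul], Matrix.mulVec_smul]
      rw [hBsum]
      have hkey : m0 ((Aᵀ)⁻¹ *ᵥ ξ + (2*Real.pi) • t) * G ((Aᵀ)⁻¹ *ᵥ ξ + (2*Real.pi) • t)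
          = m0 ((Aᵀ)⁻¹ *ᵥ ξ) * G ((Aᵀ)⁻¹ *ᵥ ξ) := by
        rw [hm0T, hm0T, div_mul_eq_mul_div, div_mul_eq_mul_div, hprod]
      rw [mul_assoc, mul_assoc, hkey]

  -- P expansion and continuity
  have hPexp : ∀ v : Fin d → ℝ, P v = (∑ i, (Q*Q) i i * v i^2)
      + 2 * ∑ i, ∑ j, (if i < j then v i * ((Q*Q) i j * v j) else 0) := by
    intro v
    rw [hP]
    have hexp : v ⬝ᵥ ((Q*Q) *ᵥ v) = ∑ i, ∑ j, v i * ((Q*Q) i j * v j) := by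
      simp [dotProduct, Matrix.mulVec, Finset.mul_sum]
    rw [hexp, aux_sum_split (fun i j => v i * ((Q*Q) i j * v j))
      (fun i j => by rw [hQ2e i j]; ring)]
    congr 1
    refine Finset.sum_congr rfl fun i _ => ?_
    ring
  have hPcont : Continuous P := by
    have hfun : P = fun v => ∑ i, v i * ∑ j, (Q*Q) i j * v j := by
      funext v
      rw [hP]
      simp [dotProduct, Matrix.mulVec]
    rw [hfun]
    apply continuous_finset_sum
    intro i _
    exact (continuous_apply i).mul
      (continuous_finset_sum _ fun j _ => continuous_const.mul (continuous_apply j))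
  haveI : Nonempty (Fin d) := ⟨⟨0, hd⟩⟩
  have hcoer : ∃ c : ℝ, 0 < c ∧ ∀ x : Fin d → ℝ, c * ‖x‖^2 ≤ P x := by
    have hsne : (Metric.sphere (0 : Fin d → ℝ) 1).Nonempty :=
      NormedSpace.sphere_nonempty.mpr zero_le_one
    obtain ⟨x0, hx0, hmin⟩ := (isCompact_sphere (0 : Fin d → ℝ) 1).exists_isMinOn hsne
      hPcont.continuousOn
    have hx0n : ‖x0‖ = 1 := mem_sphere_zero_iff_norm.mp hx0
    have hx00 : x0 ≠ 0 := by
      intro h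
      rw [h, norm_zero] at hx0n
      norm_num at hx0n
    refine ⟨P x0, hPpos x0 hx00, fun x => ?_⟩
    by_cases hx : x = 0
    · rw [hx, norm_zero, hP0]
      norm_num
    · have hn : ‖x‖ ≠ 0 := norm_ne_zero_iff.mpr hx
      have hun : ‖(‖x‖⁻¹ • x : Fin d → ℝ)‖ = 1 := by
        rw [norm_smul, norm_inv, norm_norm, inv_mul_cancel₀ hn]
      have h2 : P x = ‖x‖^2 * P (‖x‖⁻¹ • x) := by
        conv_lhs => rw [← smul_inv_smul₀ hn x]
        rw [hPhom]
      have h3 : P x0 ≤ P (‖x‖⁻¹ • x) :=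
        isMinOn_iff.mp hmin _ (mem_sphere_zero_iff_norm.mpr hun)
      calc P x0 * ‖x‖^2 ≤ P (‖x‖⁻¹ • x) * ‖x‖^2 := by
            have := sq_nonneg ‖x‖
            nlinarith
        _ = P x := by rw [h2]; ring
  obtain ⟨c, hcpos, hcoer⟩ := hcoer
  -- Taylor-type bound |G - P| ≤ C ‖ξ‖⁴
  have hCnonneg : (0:ℝ) ≤ ∑ i, ∑ j, 7 * |(Q*Q) i j| :=
    Finset.sum_nonneg fun i _ => Finset.sum_nonneg fun j _ => by positivity
  have hGPbound : ∀ ξ : Fin d → ℝ, ‖ξ‖ ≤ 1 →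
      |G ξ - P ξ| ≤ (∑ i, ∑ j, 7 * |(Q*Q) i j|) * ‖ξ‖^4 := by
    intro ξ hξ1
    have hNi : ∀ i, |ξ i| ≤ ‖ξ‖ := fun i => by
      have := norm_le_pi_norm ξ i
      rwa [Real.norm_eq_abs] at this
    have hN0 : (0:ℝ) ≤ ‖ξ‖ := norm_nonneg ξ
    have hi1 : ∀ i, |ξ i| ≤ 1 := fun i => (hNi i).trans hξ1
    -- difference decomposition
    have hdiff : G ξ - P ξ = (∑ i, (Q*Q) i i * (4*Real.sin (ξ i/2)^2 - ξ i^2))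
        + 2 * ∑ i, ∑ j, (if i < j
            then (Q*Q) i j * (Real.sin (ξ i)*Real.sin (ξ j) - ξ i * ξ j) else 0) := by
      rw [hG, hPexp ξ]
      have e1 : (∑ i, (Q*Q) i i * (4*Real.sin (ξ i/2)^2 - ξ i^2))
          = 4*(∑ i, (Q*Q) i i * Real.sin (ξ i/2)^2) - ∑ i, (Q*Q) i i * ξ i^2 := by
        rw [Finset.mul_sum, ← Finset.sum_sub_distrib]
        exact Finset.sum_congr rfl fun i _ => by ring
      have e2 : (∑ i, ∑ j, (if i < j
            then (Q*Q) i j * (Real.sin (ξ i)*Real.sin (ξ j) - ξ i * ξ j) else 0))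
          = (∑ i, ∑ j, (if i < j then (Q*Q) i j * Real.sin (ξ i) * Real.sin (ξ j) else 0))
            - ∑ i, ∑ j, (if i < j then ξ i * ((Q*Q) i j * ξ j) else 0) := by
        rw [← Finset.sum_sub_distrib]
        refine Finset.sum_congr rfl fun i _ => ?_
        rw [← Finset.sum_sub_distrib]
        refine Finset.sum_congr rfl fun j _ => ?_
        split_ifs with h
        · ring
        · simp
      rw [e1, e2]
      ring
    -- per-term bounds
    have hdterm : ∀ i, |(Q*Q) i i * (4*Real.sin (ξ i/2)^2 - ξ i^2)|
        ≤ |(Q*Q) i i| * ‖ξ‖^4 := by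
      intro i
      rw [abs_mul]
      have hhalf : |ξ i / 2| ≤ 1 := by
        rw [abs_div]
        have := hi1 i
        simp only [abs_two]
        linarith
      have hb1 : |2*Real.sin (ξ i/2) - ξ i| ≤ |ξ i|^3/4 := by
        have h5 := aux_abs_sin_sub hhalf
        have h6 : 2*Real.sin (ξ i/2) - ξ i = 2*(Real.sin (ξ i / 2) - ξ i/2) := by ring
        rw [h6, abs_mul, abs_two]
        have h7 : |ξ i / 2|^3 = |ξ i|^3/8 := by
          rw [abs_div, abs_two]
          ring
        rw [h7] at h5
        linarith
      have hb2 : |2*Real.sin (ξ i/2) + ξ i| ≤ 3*|ξ i| := by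
        have h5 := aux_abs_sin_le hhalf
        have h7 : |ξ i / 2| = |ξ i|/2 := by rw [abs_div, abs_two]
        rw [h7] at h5
        calc |2*Real.sin (ξ i/2) + ξ i| ≤ |2*Real.sin (ξ i/2)| + |ξ i| := abs_add_le _ _
          _ = 2*|Real.sin (ξ i/2)| + |ξ i| := by rw [abs_mul, abs_two]
          _ ≤ 3*|ξ i| := by linarith
      have hfac : 4*Real.sin (ξ i/2)^2 - ξ i^2
          = (2*Real.sin (ξ i/2) - ξ i) * (2*Real.sin (ξ i/2) + ξ i) := by ring
      have hb3 : |4*Real.sin (ξ i/2)^2 - ξ i^2| ≤ ‖ξ‖^4 := by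
        rw [hfac, abs_mul]
        have h8 : |ξ i|^3/4 * (3*|ξ i|) = (3/4) * |ξ i|^4 := by ring
        calc |2*Real.sin (ξ i/2) - ξ i| * |2*Real.sin (ξ i/2) + ξ i|
            ≤ (|ξ i|^3/4) * (3*|ξ i|) := by
              apply mul_le_mul hb1 hb2 (abs_nonneg _)
              positivity
          _ = (3/4) * |ξ i|^4 := h8
          _ ≤ ‖ξ‖^4 := by
              have h9 : |ξ i|^4 ≤ ‖ξ‖^4 := pow_le_pow_left₀ (abs_nonneg _) (hNi i) 4
              have h10 : (0:ℝ) ≤ |ξ i|^4 := by positivity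
              linarith
      have := abs_nonneg ((Q*Q) i i)
      exact mul_le_mul_of_nonneg_left hb3 this
    have hoterm : ∀ i j, |Real.sin (ξ i) * Real.sin (ξ j) - ξ i * ξ j| ≤ 3 * ‖ξ‖^4 := by
      intro i j
      have hsplit : Real.sin (ξ i) * Real.sin (ξ j) - ξ i * ξ j
          = (Real.sin (ξ i) - ξ i) * Real.sin (ξ j) + ξ i * (Real.sin (ξ j) - ξ j) := by ring
      have hb1 : |(Real.sin (ξ i) - ξ i) * Real.sin (ξ j)| ≤ |ξ i|^3 * (2*|ξ j|) := by
        rw [abs_mul]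
        exact mul_le_mul (aux_abs_sin_sub (hi1 i)) (aux_abs_sin_le (hi1 j)) (abs_nonneg _)
          (by positivity)
      have hb2 : |ξ i * (Real.sin (ξ j) - ξ j)| ≤ |ξ i| * |ξ j|^3 := by
        rw [abs_mul]
        exact mul_le_mul_of_nonneg_left (aux_abs_sin_sub (hi1 j)) (abs_nonneg _)
      have hc1 : |ξ i|^3 * (2*|ξ j|) ≤ 2 * ‖ξ‖^4 := by
        have h1 : |ξ i|^3 * |ξ j| ≤ ‖ξ‖^3 * ‖ξ‖ := by
          apply mul_le_mul (pow_le_pow_left₀ (abs_nonneg _) (hNi i) 3) (hNi j) (abs_nonneg _)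
          positivity
        have h2 : ‖ξ‖^3 * ‖ξ‖ = ‖ξ‖^4 := by ring
        linarith
      have hc2 : |ξ i| * |ξ j|^3 ≤ ‖ξ‖^4 := by
        have h1 : |ξ i| * |ξ j|^3 ≤ ‖ξ‖ * ‖ξ‖^3 := by
          apply mul_le_mul (hNi i) (pow_le_pow_left₀ (abs_nonneg _) (hNi j) 3) (by positivity)
            hN0
        have h2 : ‖ξ‖ * ‖ξ‖^3 = ‖ξ‖^4 := by ring
        linarith
      calc |Real.sin (ξ i) * Real.sin (ξ j) - ξ i * ξ j|
          ≤ |(Real.sin (ξ i) - ξ i) * Real.sin (ξ j)| + |ξ i * (Real.sin (ξ j) - ξ j)| := by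
            rw [hsplit]; exact abs_add_le _ _
        _ ≤ |ξ i|^3 * (2*|ξ j|) + |ξ i| * |ξ j|^3 := add_le_add hb1 hb2
        _ ≤ 3 * ‖ξ‖^4 := by linarith
    -- assemble
    rw [hdiff]
    have hS1 : |∑ i, (Q*Q) i i * (4*Real.sin (ξ i/2)^2 - ξ i^2)|
        ≤ (∑ i, |(Q*Q) i i|) * ‖ξ‖^4 := by
      calc |∑ i, (Q*Q) i i * (4*Real.sin (ξ i/2)^2 - ξ i^2)|
          ≤ ∑ i, |(Q*Q) i i * (4*Real.sin (ξ i/2)^2 - ξ i^2)| :=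
            Finset.abs_sum_le_sum_abs _ _
        _ ≤ ∑ i, |(Q*Q) i i| * ‖ξ‖^4 := Finset.sum_le_sum fun i _ => hdterm i
        _ = (∑ i, |(Q*Q) i i|) * ‖ξ‖^4 := by rw [Finset.sum_mul]
    have hS2 : |∑ i, ∑ j, (if i < j
          then (Q*Q) i j * (Real.sin (ξ i)*Real.sin (ξ j) - ξ i * ξ j) else 0)|
        ≤ (∑ i, ∑ j, |(Q*Q) i j|) * (3 * ‖ξ‖^4) := by
      calc |∑ i, ∑ j, (if i < j
              then (Q*Q) i j * (Real.sin (ξ i)*Real.sin (ξ j) - ξ i * ξ j) else 0)|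
          ≤ ∑ i, |∑ j, (if i < j
              then (Q*Q) i j * (Real.sin (ξ i)*Real.sin (ξ j) - ξ i * ξ j) else 0)| :=
            Finset.abs_sum_le_sum_abs _ _
        _ ≤ ∑ i, ∑ j, |(if i < j
              then (Q*Q) i j * (Real.sin (ξ i)*Real.sin (ξ j) - ξ i * ξ j) else 0)| :=
            Finset.sum_le_sum fun i _ => Finset.abs_sum_le_sum_abs _ _
        _ ≤ ∑ i, ∑ j, |(Q*Q) i j| * (3 * ‖ξ‖^4) := by
            refine Finset.sum_le_sum fun i _ => Finset.sum_le_sum fun j _ => ?_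
            split_ifs with h
            · rw [abs_mul]
              exact mul_le_mul_of_nonneg_left (hoterm i j) (abs_nonneg _)
            · simp
              positivity
        _ = (∑ i, ∑ j, |(Q*Q) i j|) * (3 * ‖ξ‖^4) := by
            rw [Finset.sum_mul]
            exact Finset.sum_congr rfl fun i _ => by rw [Finset.sum_mul]
    have hdiagsum : (∑ i, |(Q*Q) i i|) ≤ ∑ i, ∑ j, |(Q*Q) i j| :=
      Finset.sum_le_sum fun i _ =>
        Finset.single_le_sum (f := fun j => |(Q*Q) i j|) (fun _ _ => abs_nonneg _)
          (Finset.mem_univ i)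
    have habs2 : |(2:ℝ)| = 2 := by norm_num
    have hN4 : (0:ℝ) ≤ ‖ξ‖^4 := by positivity
    calc |(∑ i, (Q*Q) i i * (4*Real.sin (ξ i/2)^2 - ξ i^2))
          + 2 * ∑ i, ∑ j, (if i < j
              then (Q*Q) i j * (Real.sin (ξ i)*Real.sin (ξ j) - ξ i * ξ j) else 0)|
        ≤ |∑ i, (Q*Q) i i * (4*Real.sin (ξ i/2)^2 - ξ i^2)|
          + |2 * ∑ i, ∑ j, (if i < j
              then (Q*Q) i j * (Real.sin (ξ i)*Real.sin (ξ j) - ξ i * ξ j) else 0)| := abs_add_le _ _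
      _ ≤ (∑ i, |(Q*Q) i i|) * ‖ξ‖^4 + 2 * ((∑ i, ∑ j, |(Q*Q) i j|) * (3 * ‖ξ‖^4)) := by
          rw [abs_mul, habs2]
          have := hS2
          nlinarith [hS1]
      _ ≤ (∑ i, ∑ j, 7 * |(Q*Q) i j|) * ‖ξ‖^4 := by
          have h1 : (∑ i, ∑ j, (7:ℝ) * |(Q*Q) i j|) = 7 * ∑ i, ∑ j, |(Q*Q) i j| := by
            rw [Finset.mul_sum]
            exact Finset.sum_congr rfl fun i _ => by rw [Finset.mul_sum]
          rw [h1]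
          have h2 : (0:ℝ) ≤ ∑ i, ∑ j, |(Q*Q) i j| :=
            Finset.sum_nonneg fun i _ => Finset.sum_nonneg fun j _ => abs_nonneg _
          nlinarith [mul_le_mul_of_nonneg_right hdiagsum hN4]

  -- the ratio G/P tends to 1 at 0 (off 0)
  have hev_ne : ∀ᶠ ξ in nhdsWithin (0 : Fin d → ℝ) {(0:Fin d → ℝ)}ᶜ, ξ ≠ 0 := by
    filter_upwards [eventually_mem_nhdsWithin] with ξ hξ
    exact hξ
  have hev_ball : ∀ (r : ℝ), 0 < r → ∀ᶠ ξ in nhdsWithin (0 : Fin d → ℝ) {(0:Fin d → ℝ)}ᶜ,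
      ‖ξ‖ < r := by
    intro r hr
    have h1 : ∀ᶠ ξ in nhds (0 : Fin d → ℝ), ‖ξ‖ < r := by
      have h2 := Metric.ball_mem_nhds (0 : Fin d → ℝ) hr
      filter_upwards [h2] with ξ hξ
      rwa [Metric.mem_ball, dist_zero_right] at hξ
    exact h1.filter_mono nhdsWithin_le_nhds
  have hrtend : Filter.Tendsto (fun ξ : Fin d → ℝ => G ξ / P ξ)
      (nhdsWithin (0 : Fin d → ℝ) {(0:Fin d → ℝ)}ᶜ) (nhds 1) := by
    have h1 : ∀ ξ : Fin d → ℝ, ξ ≠ 0 → ‖ξ‖ ≤ 1 →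
        |G ξ / P ξ - 1| ≤ ((∑ i, ∑ j, 7 * |(Q*Q) i j|)/c) * ‖ξ‖^2 := by
      intro ξ hne hn1
      have hPξ := hPpos ξ hne
      have h2 : G ξ / P ξ - 1 = (G ξ - P ξ)/P ξ := by field_simp
      rw [h2, abs_div, abs_of_pos hPξ, div_le_iff₀ hPξ]
      have h3 := hGPbound ξ hn1
      have h4 := hcoer ξ
      have h5 : (0:ℝ) ≤ ‖ξ‖^2 := by positivity
      calc |G ξ - P ξ| ≤ (∑ i, ∑ j, 7 * |(Q*Q) i j|) * ‖ξ‖^4 := h3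
        _ = ((∑ i, ∑ j, 7 * |(Q*Q) i j|)/c) * ‖ξ‖^2 * (c * ‖ξ‖^2) := by
            field_simp
        _ ≤ ((∑ i, ∑ j, 7 * |(Q*Q) i j|)/c) * ‖ξ‖^2 * P ξ := by
            have h6 : (0:ℝ) ≤ ((∑ i, ∑ j, 7 * |(Q*Q) i j|)/c) * ‖ξ‖^2 := by positivity
            exact mul_le_mul_of_nonneg_left h4 h6
    have h7 : Filter.Tendsto (fun ξ : Fin d → ℝ => ((∑ i, ∑ j, 7 * |(Q*Q) i j|)/c) * ‖ξ‖^2)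
        (nhdsWithin (0 : Fin d → ℝ) {(0:Fin d → ℝ)}ᶜ) (nhds 0) := by
      have h8 : Continuous (fun ξ : Fin d → ℝ => ((∑ i, ∑ j, 7 * |(Q*Q) i j|)/c) * ‖ξ‖^2) :=
        continuous_const.mul (continuous_norm.pow 2)
      have h9 := h8.tendsto' 0 0 (by simp)
      exact h9.mono_left nhdsWithin_le_nhds
    have h10 : Filter.Tendsto (fun ξ : Fin d → ℝ => |G ξ / P ξ - 1|)
        (nhdsWithin (0 : Fin d → ℝ) {(0:Fin d → ℝ)}ᶜ) (nhds 0) := by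
      apply squeeze_zero' (Filter.Eventually.of_forall fun _ => abs_nonneg _) _ h7
      filter_upwards [hev_ne, hev_ball 1 one_pos] with ξ hne hlt
      exact h1 ξ hne hlt.le
    rw [tendsto_iff_dist_tendsto_zero]
    simpa [Real.dist_eq] using h10
  -- continuity of ξ ↦ B ξ and punctured tendsto
  have hBcont : Continuous (fun ξ : Fin d → ℝ => (Aᵀ)⁻¹ *ᵥ ξ) := by
    apply continuous_pi
    intro i
    have : (fun ξ : Fin d → ℝ => ((Aᵀ)⁻¹ *ᵥ ξ) i) = fun ξ => ∑ j, (Aᵀ)⁻¹ i j * ξ j := by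
      funext ξ
      simp [Matrix.mulVec, dotProduct]
    rw [this]
    exact continuous_finset_sum _ fun j _ => continuous_const.mul (continuous_apply j)
  have hBtend : Filter.Tendsto (fun ξ : Fin d → ℝ => (Aᵀ)⁻¹ *ᵥ ξ)
      (nhdsWithin (0 : Fin d → ℝ) {(0:Fin d → ℝ)}ᶜ)
      (nhdsWithin (0 : Fin d → ℝ) {(0:Fin d → ℝ)}ᶜ) := by
    apply tendsto_nhdsWithin_of_tendsto_nhds_of_eventually_within
    · exact (hBcont.tendsto' 0 0 (Matrix.mulVec_zero _)).mono_left nhdsWithin_le_nhds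
    · filter_upwards [hev_ne] with ξ hne
      intro hB0
      apply hne
      have h1 : (Aᵀ)⁻¹ *ᵥ ξ = 0 := hB0
      have h2 := hIDl ξ
      rw [h1, Matrix.mulVec_zero] at h2
      exact h2.symm
  -- μ tends to 1 at 0
  have hμtend0 : Filter.Tendsto μ (nhdsWithin (0 : Fin d → ℝ) {(0:Fin d → ℝ)}ᶜ) (nhds 1) := by
    have t1 : Filter.Tendsto (fun ξ : Fin d → ℝ => m0 ((Aᵀ)⁻¹ *ᵥ ξ))
        (nhdsWithin (0 : Fin d → ℝ) {(0:Fin d → ℝ)}ᶜ) (nhds 1) := by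
      have h1 : Continuous (fun ξ : Fin d → ℝ => m0 ((Aᵀ)⁻¹ *ᵥ ξ)) := hm0cont.comp hBcont
      have h2 := h1.tendsto' 0 1 (by rw [Matrix.mulVec_zero, hm0zero])
      exact h2.mono_left nhdsWithin_le_nhds
    have t2 : Filter.Tendsto (fun ξ : Fin d → ℝ => G ((Aᵀ)⁻¹ *ᵥ ξ) / P ((Aᵀ)⁻¹ *ᵥ ξ))
        (nhdsWithin (0 : Fin d → ℝ) {(0:Fin d → ℝ)}ᶜ) (nhds 1) := hrtend.comp hBtend
    have t4 := (t1.mul t2).div hrtend (one_ne_zero)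
    norm_num at t4
    refine t4.congr' ?_
    filter_upwards [hev_ne, hev_ball (2*Real.pi) (by positivity)] with ξ hne hball
    -- ξ is not a lattice point
    have hnl : ¬ ∃ k : Fin d → ℤ, ξ = fun i => 2 * Real.pi * (k i : ℝ) := by
      rintro ⟨k, hk⟩
      have h1 : ∃ i, ξ i ≠ 0 := by
        by_contra h
        push_neg at h
        exact hne (funext h)
      obtain ⟨i, hi⟩ := h1
      have h2 : ξ i = 2 * Real.pi * (k i : ℝ) := by rw [hk]
      have h3 : (k i : ℝ) ≠ 0 := by
        intro h4
        rw [h4] at h2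
        simp at h2
        exact hi h2
      have h5 : (1:ℝ) ≤ |(k i : ℝ)| := by
        have h6 : k i ≠ 0 := by exact_mod_cast h3
        have h7 : (1:ℤ) ≤ |k i| := Int.one_le_abs h6
        calc (1:ℝ) = ((1:ℤ):ℝ) := by norm_num
          _ ≤ ((|k i| : ℤ) : ℝ) := by exact_mod_cast h7
          _ = |(k i : ℝ)| := by push_cast; rfl
      have h8 : 2 * Real.pi ≤ |ξ i| := by
        rw [h2, abs_mul, abs_of_pos (by positivity : (0:ℝ) < 2 * Real.pi)]
        nlinarith
      have h9 : |ξ i| ≤ ‖ξ‖ := by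
        have := norm_le_pi_norm ξ i
        rwa [Real.norm_eq_abs] at this
      linarith
    rw [hμ2 ξ hnl]
    -- algebraic identification
    have hξ0 : ξ ≠ 0 := hne
    have hη0 : (Aᵀ)⁻¹ *ᵥ ξ ≠ 0 := by
      intro h1
      apply hξ0
      have h2 := hIDl ξ
      rw [h1, Matrix.mulVec_zero] at h2
      exact h2.symm
    have hPξ := (hPpos ξ hξ0).ne'
    have hGξ := (hGpos ξ hnl).ne'
    have hPBξ := hPB ξ
    have hq2 : q ^ ((2:ℝ)/(d:ℝ)) = (q ^ (-(2:ℝ)/(d:ℝ)))⁻¹ :=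
      eq_inv_of_mul_eq_one_right (by rw [mul_comm]; exact hq2c2)
    simp only [Pi.div_apply]
    rw [hPBξ, hq2]
    field_simp
  -- continuity at 0
  have hμ0 : μ 0 = 1 := hμ1 0 ⟨fun _ => 0, by funext i; simp⟩
  have hcont0 : ContinuousAt μ 0 := by
    rw [ContinuousAt, hμ0, ← nhdsNE_sup_pure, Filter.tendsto_sup]
    constructor
    · exact hμtend0
    · have h1 := tendsto_pure_nhds μ 0
      rwa [hμ0] at h1
  -- continuity at lattice points
  have hcontlat : ∀ k : Fin d → ℤ, ContinuousAt μ (fun i => 2 * Real.pi * (k i : ℝ)) := by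
    intro k
    set pvec : Fin d → ℝ := fun i => 2 * Real.pi * (k i : ℝ) with hpvec
    set cvec : Fin d → ℝ := fun i => 2 * Real.pi * ((-(k i) : ℤ) : ℝ) with hcvec
    have hμshift : ∀ η : Fin d → ℝ, μ η = μ (η + cvec) := by
      intro η
      have h1 := hper (η + cvec) k
      have h2 : (η + cvec) + pvec = η := by
        funext i
        simp only [Pi.add_apply, hcvec, hpvec]
        push_cast
        ring
      rw [show (η + cvec) + (fun i => 2 * Real.pi * (k i : ℝ)) = η from h2] at h1
      exact h1
    have hpc : pvec + cvec = 0 := by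
      funext i
      simp only [Pi.add_apply, hcvec, hpvec, Pi.zero_apply]
      push_cast
      ring
    have h1 : ContinuousAt (fun η : Fin d → ℝ => η + cvec) pvec :=
      (continuous_id.add continuous_const).continuousAt
    have h2 : ContinuousAt μ (pvec + cvec) := by
      rw [hpc]
      exact hcont0
    have h3 := ContinuousAt.comp (f := fun η : Fin d → ℝ => η + cvec) (x := pvec) h2 h1
    have h5 : μ ∘ (fun η : Fin d → ℝ => η + cvec) = μ := funext fun η => (hμshift η).symm
    rwa [h5] at h3
  -- global continuity
  have hμcont : Continuous μ := by
    rw [continuous_iff_continuousAt]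
    intro x
    by_cases hx : ∃ k : Fin d → ℤ, x = fun i => 2 * Real.pi * (k i : ℝ)
    · obtain ⟨k, rfl⟩ := hx
      exact hcontlat k
    · have hLclosed : IsClosed {ξ : Fin d → ℝ | ∃ k : Fin d → ℤ,
          ξ = fun i => 2 * Real.pi * (k i : ℝ)} := by
        have h1 : {ξ : Fin d → ℝ | ∃ k : Fin d → ℤ, ξ = fun i => 2 * Real.pi * (k i : ℝ)}
            = G ⁻¹' {0} := by
          ext ξ
          simp only [Set.mem_setOf_eq, Set.mem_preimage, Set.mem_singleton_iff]
          constructor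
          · rintro ⟨k, rfl⟩
            exact hGlat k
          · intro h
            exact hGzero ξ h
        rw [h1]
        exact isClosed_singleton.preimage hGcont
      have hopen : IsOpen {ξ : Fin d → ℝ | ¬ ∃ k : Fin d → ℤ,
          ξ = fun i => 2 * Real.pi * (k i : ℝ)} := by
        have h2 : {ξ : Fin d → ℝ | ¬ ∃ k : Fin d → ℤ, ξ = fun i => 2 * Real.pi * (k i : ℝ)}
            = {ξ : Fin d → ℝ | ∃ k : Fin d → ℤ, ξ = fun i => 2 * Real.pi * (k i : ℝ)}ᶜ := rfl
        rw [h2]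
        exact hLclosed.isOpen_compl
      have hFcont : ContinuousAt (fun ξ => q ^ ((2:ℝ)/(d:ℝ)) * m0 ((Aᵀ)⁻¹ *ᵥ ξ)
          * G ((Aᵀ)⁻¹ *ᵥ ξ) / G ξ) x := by
        apply ContinuousAt.div
        · exact (((continuous_const.mul (hm0cont.comp hBcont)).mul
            (hGcont.comp hBcont))).continuousAt
        · exact hGcont.continuousAt
        · exact (hGpos x hx).ne'
      apply hFcont.congr
      filter_upwards [hopen.mem_nhds hx] with ξ hξ
      exact (hμ2 ξ hξ).symm
  
  -- bounds via compactness on the period cube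
  have hcube : IsCompact (Set.pi Set.univ (fun _ : Fin d => Set.Icc (0:ℝ) (2*Real.pi))) :=
    isCompact_univ_pi fun _ => isCompact_Icc
  have h0C : (0 : Fin d → ℝ) ∈ Set.pi Set.univ (fun _ : Fin d => Set.Icc (0:ℝ) (2*Real.pi)) :=
    Set.mem_univ_pi.mpr fun i => by
      simp only [Pi.zero_apply, Set.mem_Icc]
      constructor
      · exact le_refl 0
      · positivity
  have hcne : (Set.pi Set.univ (fun _ : Fin d => Set.Icc (0:ℝ) (2*Real.pi))).Nonempty := ⟨0, h0C⟩
  obtain ⟨a, haC, hamin⟩ := hcube.exists_isMinOn hcne hμcont.continuousOn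
  obtain ⟨b, hbC, hbmax⟩ := hcube.exists_isMaxOn hcne hμcont.continuousOn
  have hred : ∀ ξ : Fin d → ℝ,
      ∃ η ∈ Set.pi Set.univ (fun _ : Fin d => Set.Icc (0:ℝ) (2*Real.pi)), μ ξ = μ η := by
    intro ξ
    refine ⟨fun i => 2*Real.pi * Int.fract (ξ i / (2*Real.pi)), ?_, ?_⟩
    · refine Set.mem_univ_pi.mpr fun i => ?_
      simp only [Set.mem_Icc]
      constructor
      · exact mul_nonneg (by positivity) (Int.fract_nonneg _)
      · have h1 := Int.fract_lt_one (ξ i / (2*Real.pi))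
        nlinarith [Real.pi_pos, Int.fract_nonneg (ξ i / (2*Real.pi))]
    · have hξeq : ξ = (fun i => 2*Real.pi * Int.fract (ξ i / (2*Real.pi)))
          + fun i => 2*Real.pi * ((⌊ξ i / (2*Real.pi)⌋ : ℤ) : ℝ) := by
        funext i
        simp only [Pi.add_apply]
        rw [← Int.self_sub_floor]
        have h2 : (2*Real.pi) ≠ 0 := by positivity
        field_simp
        ring
      conv_lhs => rw [hξeq]
      rw [hper]
  refine ⟨hper, fun k => hμ1 _ ⟨k, rfl⟩, hμcont, μ a, μ b, hμpos a, ?_, fun ξ => ?_⟩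
  · have h1 := isMaxOn_iff.mp hbmax 0 h0C
    rwa [hμ0] at h1
  · obtain ⟨η, hηC, hηeq⟩ := hred ξ
    constructor
    · rw [hηeq]
      exact isMinOn_iff.mp hamin η hηC
    · rw [hηeq]
      exact isMaxOn_iff.mp hbmax η hηC
end

section
/- In the elliptic setup, for every ξ ∈ ℝ^d with ξ ≠ 0, the infinite product ∏_{j=1}^∞ m₀((A⁻ᵀ)^j ξ) converges and equals G(ξ)M(ξ)/P(ξ). -/
open Matrix Filter

lemma multiset_one_lt_prod (s : Multiset ℝ) (h : ∀ x ∈ s, 1 < x) (hs : s ≠ 0) : 1 < s.prod := by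
  induction s using Multiset.induction with
  | empty => exact absurd rfl hs
  | cons a t ih =>
    rcases eq_or_ne t 0 with rfl | ht
    · simpa using h a (by simp)
    · have h1 : 1 < a := h a (by simp)
      have h2 : 1 < t.prod := ih (fun x hx => h x (by simp [hx])) ht
      simp only [Multiset.prod_cons]
      nlinarith

lemma det_abs_gt_one (d : ℕ) (hd : 0 < d) (A : Matrix (Fin d) (Fin d) ℝ)
    (hAeig : ∀ z : ℂ, (Matrix.charpoly (A.map Complex.ofReal)).IsRoot z →
      1 < ‖z‖) : 1 < |A.det| := by
  set Ac := A.map Complex.ofReal with hAc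
  have hdet : Ac.det = (Matrix.charpoly Ac).roots.prod := Matrix.det_eq_prod_roots_charpoly Ac
  have hdetc : Ac.det = Complex.ofReal A.det := by
    rw [hAc]
    exact (RingHom.map_det Complex.ofRealHom A).symm
  have hmonic : (Matrix.charpoly Ac).Monic := Matrix.charpoly_monic Ac
  have hne : Matrix.charpoly Ac ≠ 0 := hmonic.ne_zero
  have hcard : Multiset.card (Matrix.charpoly Ac).roots = d := by
    rw [(Polynomial.splits_iff_card_roots).mp (IsAlgClosed.splits _)]
    simp [Matrix.charpoly_natDegree_eq_dim Ac]
  have habs : ‖Ac.det‖ = ((Matrix.charpoly Ac).roots.map (fun z : ℂ => ‖z‖)).prod := by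
    rw [hdet]; exact map_multiset_prod (normHom : ℂ →*₀ ℝ) _
  have h1 : 1 < ((Matrix.charpoly Ac).roots.map (fun z : ℂ => ‖z‖)).prod := by
    apply multiset_one_lt_prod
    · intro x hx
      obtain ⟨z, hz, rfl⟩ := Multiset.mem_map.mp hx
      exact hAeig z ((Polynomial.mem_roots hne).mp hz)
    · intro h0
      have := hcard
      rw [← Multiset.card_map (fun z : ℂ => ‖z‖), h0] at this
      simp at this
      omega
  calc 1 < ‖Ac.det‖ := habs ▸ h1
    _ = |A.det| := by rw [hdetc, Complex.norm_real, Real.norm_eq_abs]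

lemma sin_cube (t : ℝ) (h : |t| ≤ 1) : |Real.sin t - t| ≤ |t|^3 := by
  have hb := Real.sin_bound h
  have h1 : |Real.sin t - t| ≤ |Real.sin t - (t - t^3/6)| + |t^3/6| := by
    have he : Real.sin t - t = (Real.sin t - (t - t^3/6)) + (-(t^3/6)) := by ring
    rw [he]
    exact (abs_add_le _ _).trans (by rw [abs_neg])
  have h3 : |t^3/6| = |t|^3/6 := by rw [abs_div, abs_pow]; norm_num
  have h2 : |t|^4 ≤ |t|^3 := by
    calc |t|^4 = |t|^3 * |t| := by ring
    _ ≤ |t|^3 * 1 := by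
        exact mul_le_mul_of_nonneg_left h (by positivity)
    _ = |t|^3 := mul_one _
  rw [h3] at h1; linarith [pow_nonneg (abs_nonneg t) 3, pow_le_pow_of_le_one (abs_nonneg t) h (by norm_num : 3 ≤ 5)]

lemma prod_abs_le (a b S : ℝ) (hS : 0 ≤ S) (ha : a^2 ≤ S) (hb : b^2 ≤ S) : |a| * |b| ≤ S := by
  nlinarith [abs_nonneg a, abs_nonneg b, sq_abs a, sq_abs b, sq_nonneg (|a| * |b| - S),
    sq_nonneg (|a| - |b|)]

lemma term_a (x S : ℝ) (hx2 : x^2 ≤ S) (hS : S ≤ 1) : |4 * Real.sin (x/2)^2 - x^2| ≤ S^2 := by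
  have hx1 : |x/2| ≤ 1 := by
    rw [abs_div]
    have : |x| ≤ 1 := by nlinarith [abs_nonneg x, sq_abs x]
    norm_num
    linarith [abs_nonneg x, this]
  have hs := sin_cube (x/2) hx1
  have habs := Real.abs_sin_le_abs (x := x/2)
  have h1 : |4 * Real.sin (x/2)^2 - x^2| = |2*Real.sin (x/2) - x| * |2*Real.sin (x/2) + x| := by
    rw [← abs_mul]; congr 1; ring
  have h2 : |2*Real.sin (x/2) - x| ≤ 2 * |x/2|^3 := by
    have : 2*Real.sin (x/2) - x = 2*(Real.sin (x/2) - x/2) := by ring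
    rw [this, abs_mul, abs_two]
    linarith
  have h3 : |2*Real.sin (x/2) + x| ≤ 2*|x| := by
    calc |2*Real.sin (x/2) + x| ≤ |2*Real.sin (x/2)| + |x| := abs_add_le _ _
    _ = 2*|Real.sin (x/2)| + |x| := by rw [abs_mul, abs_two]
    _ ≤ 2*|x/2| + |x| := by linarith
    _ = 2*|x| := by rw [abs_div]; norm_num; ring
  have h4 : (0:ℝ) ≤ |2*Real.sin (x/2) - x| := abs_nonneg _
  have h5 : (0:ℝ) ≤ 2*|x| := by positivity
  calc |4 * Real.sin (x/2)^2 - x^2| ≤ (2*|x/2|^3) * (2*|x|) := by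
        rw [h1]; exact mul_le_mul h2 h3 (abs_nonneg _) (by positivity)
    _ = |x|^4 / 2 := by rw [abs_div, abs_two]; ring
    _ ≤ S^2 := by nlinarith [sq_abs x, sq_nonneg x, abs_nonneg x, sq_nonneg (x^2 - S)]

lemma term_b (a b S : ℝ) (hS : 0 ≤ S) (ha : a^2 ≤ S) (hb : b^2 ≤ S) (hS1 : S ≤ 1) :
    |Real.sin a * Real.sin b - a*b| ≤ 2 * S^2 := by
  have ha1 : |a| ≤ 1 := by nlinarith [abs_nonneg a, sq_abs a]
  have hb1 : |b| ≤ 1 := by nlinarith [abs_nonneg b, sq_abs b]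
  have hsa := sin_cube a ha1
  have hsb := sin_cube b hb1
  have haa := Real.abs_sin_le_abs (x := a)
  have h1 : |Real.sin a * Real.sin b - a*b| ≤
      |Real.sin a| * |Real.sin b - b| + |b| * |Real.sin a - a| := by
    have he : Real.sin a * Real.sin b - a*b
        = Real.sin a * (Real.sin b - b) + b * (Real.sin a - a) := by ring
    rw [he]
    calc _ ≤ |Real.sin a * (Real.sin b - b)| + |b * (Real.sin a - a)| := abs_add_le _ _
      _ = _ := by rw [abs_mul, abs_mul]
  have key : ∀ u v : ℝ, u^2 ≤ S → v^2 ≤ S → |u| * |v|^3 ≤ S^2 := by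
    intro u v hu hv
    have h2 : |u| * |v| ≤ S := prod_abs_le u v S hS hu hv
    have h3 : |v|^2 = v^2 := sq_abs v
    calc |u| * |v|^3 = (|u| * |v|) * v^2 := by rw [← h3]; ring
      _ ≤ S * S := mul_le_mul h2 hv (sq_nonneg v) hS
      _ = S^2 := (sq S).symm
  have h2 : |Real.sin a| * |Real.sin b - b| ≤ S^2 := by
    calc |Real.sin a| * |Real.sin b - b| ≤ |a| * |b|^3 := by
          apply mul_le_mul haa hsb (abs_nonneg _) (abs_nonneg _)
      _ ≤ S^2 := key a b ha hb
  have h3 : |b| * |Real.sin a - a| ≤ S^2 := by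
    calc |b| * |Real.sin a - a| ≤ |b| * |a|^3 := by
          apply mul_le_mul_of_nonneg_left hsa (abs_nonneg _)
      _ ≤ S^2 := key b a hb ha
  linarith

lemma quad_expand (d : ℕ) (R : Matrix (Fin d) (Fin d) ℝ) (hR : Rᵀ = R) (x : Fin d → ℝ) :
    x ⬝ᵥ (R *ᵥ x) = (∑ i, R i i * (x i)^2)
      + 2 * ∑ i, ∑ j, (if i < j then R i j * x i * x j else 0) := by
  have hsym : ∀ i j, R j i = R i j := by
    intro i j
    conv_lhs => rw [← hR]
    rfl
  have expand : x ⬝ᵥ (R *ᵥ x) = ∑ i, ∑ j, R i j * x i * x j := by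
    simp only [dotProduct, Matrix.mulVec, Finset.mul_sum]
    exact Finset.sum_congr rfl fun i _ => Finset.sum_congr rfl fun j _ => by ring
  have tri : ∀ i j : Fin d, R i j * x i * x j =
      (if i = j then R i j * x i * x j else 0)
      + ((if i < j then R i j * x i * x j else 0) + (if j < i then R i j * x i * x j else 0)) := by
    intro i j
    rcases lt_trichotomy i j with h | h | h
    · simp [h, h.ne, not_lt_of_gt h]
    · simp [h, lt_irrefl]
    · simp [h, (h.ne).symm, not_lt_of_gt h]
  have swap : (∑ i, ∑ j, (if j < i then R i j * x i * x j else 0))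
      = ∑ i, ∑ j, (if i < j then R i j * x i * x j else 0) := by
    rw [Finset.sum_comm]
    refine Finset.sum_congr rfl fun i _ => Finset.sum_congr rfl fun j _ => ?_
    split_ifs with h
    · first
      | (rw [hsym i j]; ring)
      | (rw [← hsym i j]; ring)
    · rfl
  have diag : (∑ i, ∑ j, (if i = j then R i j * x i * x j else 0)) = ∑ i, R i i * (x i)^2 := by
    refine Finset.sum_congr rfl fun i _ => ?_
    rw [Finset.sum_ite_eq]
    simp [sq]
    ring
  calc x ⬝ᵥ (R *ᵥ x) = ∑ i, ∑ j, R i j * x i * x j := expand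
    _ = ∑ i, ∑ j, ((if i = j then R i j * x i * x j else 0)
        + ((if i < j then R i j * x i * x j else 0) + (if j < i then R i j * x i * x j else 0))) := by
        exact Finset.sum_congr rfl fun i _ => Finset.sum_congr rfl fun j _ => tri i j
    _ = (∑ i, ∑ j, (if i = j then R i j * x i * x j else 0))
        + ((∑ i, ∑ j, (if i < j then R i j * x i * x j else 0))
        + (∑ i, ∑ j, (if j < i then R i j * x i * x j else 0))) := by
        simp [Finset.sum_add_distrib]
    _ = _ := by rw [diag, swap]; ring
set_option maxHeartbeats 1000000 in
/-- In the elliptic setup, for every `ξ ≠ 0` the infinite product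
`∏_{j=1}^∞ m₀((A⁻ᵀ)^j ξ)` converges and equals `G(ξ)M(ξ)/P(ξ)`. -/
theorem elliptic_stmt15
    (d : ℕ) (hd : 0 < d)
    (A U Q : Matrix (Fin d) (Fin d) ℝ)
    (hAint : ∀ i j, ∃ z : ℤ, A i j = (z : ℝ))
    (hAeig : ∀ z : ℂ, (Matrix.charpoly (A.map Complex.ofReal)).IsRoot z →
      1 < ‖z‖)
    (hAdiag : ∃ Pm D : Matrix (Fin d) (Fin d) ℂ, IsUnit Pm ∧ D.IsDiag ∧
      A.map Complex.ofReal = Pm * D * Pm⁻¹)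
    (hAiso : ∀ z w : ℂ, (Matrix.charpoly (A.map Complex.ofReal)).IsRoot z →
      (Matrix.charpoly (A.map Complex.ofReal)).IsRoot w → ‖z‖ = ‖w‖)
    (q : ℝ) (hq : q = |A.det|)
    (hU : Uᵀ * U = 1)
    (hQsym : Qᵀ = Q)
    (hQpos : ∀ x : Fin d → ℝ, x ≠ 0 → 0 < x ⬝ᵥ (Q *ᵥ x))
    (hfact : (Aᵀ)⁻¹ = (q ^ (-(1:ℝ)/(d:ℝ))) • (Q⁻¹ * U * Q))
    (P : (Fin d → ℝ) → ℝ)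
    (hP : ∀ ξ, P ξ = ξ ⬝ᵥ ((Q * Q) *ᵥ ξ))
    (G : (Fin d → ℝ) → ℝ)
    (hG : ∀ ξ, G ξ = 4 * (∑ i, (Q * Q) i i * Real.sin (ξ i / 2) ^ 2)
      + 2 * (∑ i, ∑ j, if i < j then (Q * Q) i j * Real.sin (ξ i) * Real.sin (ξ j) else 0))
    (SA : Set (Fin d → ℝ))
    (hSA : SA = {s | (∀ i, s i ∈ Set.Ico (0:ℝ) 1) ∧
      ∃ k : Fin d → ℤ, Aᵀ *ᵥ s = fun i => (k i : ℝ)})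
    (m0 : (Fin d → ℝ) → ℝ)
    (hm0 : ∀ ξ, m0 ξ = (∏ᶠ s ∈ SA \ {0}, G (ξ + (2 * Real.pi) • s)) /
      (∏ᶠ s ∈ SA \ {0}, G ((2 * Real.pi) • s)))
    (μ : (Fin d → ℝ) → ℝ)
    (hμ1 : ∀ ξ : Fin d → ℝ, (∃ k : Fin d → ℤ, ξ = fun i => 2 * Real.pi * (k i : ℝ)) →
      μ ξ = 1)
    (hμ2 : ∀ ξ : Fin d → ℝ, ¬ (∃ k : Fin d → ℤ, ξ = fun i => 2 * Real.pi * (k i : ℝ)) →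
      μ ξ = q ^ ((2:ℝ)/(d:ℝ)) * m0 ((Aᵀ)⁻¹ *ᵥ ξ) * G ((Aᵀ)⁻¹ *ᵥ ξ) / G ξ)
    (M : (Fin d → ℝ) → ℝ)
    (hM : ∀ ξ : Fin d → ℝ, Filter.Tendsto
      (fun J : ℕ => ∏ j ∈ Finset.range J, μ ((((Aᵀ)⁻¹) ^ j) *ᵥ ξ))
      Filter.atTop (nhds (M ξ)))
    :
    ∀ ξ : Fin d → ℝ, ξ ≠ 0 →
      Filter.Tendsto (fun J : ℕ => ∏ j ∈ Finset.Icc 1 J, m0 ((((Aᵀ)⁻¹) ^ j) *ᵥ ξ))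
        Filter.atTop (nhds (G ξ * M ξ / P ξ)) := by
  -- basic scalars
  have hq1 : 1 < q := hq ▸ det_abs_gt_one d hd A hAeig
  have hq0 : 0 < q := lt_trans one_pos hq1
  have hdetA : A.det ≠ 0 := by
    intro h
    rw [hq, h, abs_zero] at hq1
    linarith
  set κ : ℝ := q ^ ((2:ℝ)/(d:ℝ)) with hκdef
  have hκ1 : 1 < κ := by
    rw [hκdef]
    exact (Real.one_lt_rpow_iff_of_pos hq0).mpr (Or.inl ⟨hq1, by positivity⟩)
  have hκ0 : 0 < κ := lt_trans one_pos hκ1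
  set ρ : ℝ := κ⁻¹ with hρdef
  have hρ0 : 0 < ρ := inv_pos.mpr hκ0
  have hρ1 : ρ < 1 := by
    rw [hρdef]
    exact inv_lt_one_of_one_lt₀ hκ1
  have hκρ : κ * ρ = 1 := mul_inv_cancel₀ (ne_of_gt hκ0)
  -- matrices
  set B : Matrix (Fin d) (Fin d) ℝ := (Aᵀ)⁻¹ with hB
  have hAT : IsUnit (Aᵀ).det := by
    rw [Matrix.det_transpose]
    exact isUnit_iff_ne_zero.mpr hdetA
  have hATB : Aᵀ * B = 1 := Matrix.mul_nonsing_inv _ hAT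
  have hBAT : B * Aᵀ = 1 := Matrix.nonsing_inv_mul _ hAT
  -- Q facts
  have hQdet : IsUnit Q.det := by
    rw [isUnit_iff_ne_zero]
    intro h0
    obtain ⟨v, hvne, hv⟩ := (Matrix.exists_mulVec_eq_zero_iff).mpr h0
    have := hQpos v hvne
    rw [hv] at this
    simp at this
  have hQ2sym : (Q * Q)ᵀ = Q * Q := by rw [Matrix.transpose_mul, hQsym]
  have hPsq : ∀ x, P x = (Q *ᵥ x) ⬝ᵥ (Q *ᵥ x) := by
    intro x
    rw [hP, ← Matrix.mulVec_mulVec, dotProduct_mulVec]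
    congr 1
    rw [← hQsym, Matrix.vecMul_transpose, hQsym]
  have hPnonneg : ∀ x, 0 ≤ P x := by
    intro x
    rw [hPsq]
    simp only [dotProduct]
    exact Finset.sum_nonneg fun i _ => mul_self_nonneg _
  have hPpos : ∀ x, x ≠ 0 → 0 < P x := by
    intro x hx
    have hQx : Q *ᵥ x ≠ 0 := by
      intro h0
      have := hQpos x hx
      rw [h0] at this
      simp at this
    rcases lt_or_eq_of_le (hPnonneg x) with h | h
    · exact h
    · exfalso
      apply hQx
      rw [hPsq] at h
      exact dotProduct_self_eq_zero.mp h.symm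
  -- Cauchy-Schwarz lower bound for P
  set K : ℝ := ∑ i, ∑ j, (Q⁻¹ i j)^2 with hKdef
  have hK0 : 0 ≤ K := by positivity
  have hKP : ∀ x : Fin d → ℝ, (∑ i, (x i)^2) ≤ K * P x := by
    intro x
    have hx : Q⁻¹ *ᵥ (Q *ᵥ x) = x := by
      rw [Matrix.mulVec_mulVec, Matrix.nonsing_inv_mul Q hQdet, Matrix.one_mulVec]
    have h1 : ∀ i, (x i)^2 ≤ (∑ j, (Q⁻¹ i j)^2) * (∑ j, ((Q *ᵥ x) j)^2) := by
      intro i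
      have hxe : x i = ∑ j, Q⁻¹ i j * (Q *ᵥ x) j := by
        conv_lhs => rw [← hx]
        simp [Matrix.mulVec, dotProduct]
      rw [hxe]
      exact Finset.sum_mul_sq_le_sq_mul_sq Finset.univ _ _
    calc ∑ i, (x i)^2 ≤ ∑ i, (∑ j, (Q⁻¹ i j)^2) * (∑ j, ((Q *ᵥ x) j)^2) :=
          Finset.sum_le_sum (fun i _ => h1 i)
      _ = K * ∑ j, ((Q *ᵥ x) j)^2 := by rw [← Finset.sum_mul]
      _ = K * P x := by
          rw [hPsq x]
          congr 1
          simp [dotProduct, sq]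
  -- contraction of P
  have hPB : ∀ x, P (B *ᵥ x) = ρ * P x := by
    have hr2 : (q ^ (-(1:ℝ)/(d:ℝ))) * (q ^ (-(1:ℝ)/(d:ℝ))) = ρ := by
      rw [← Real.rpow_add hq0, hρdef, hκdef, ← Real.rpow_neg (le_of_lt hq0)]
      congr 1
      ring
    have hBT : Bᵀ = (q ^ (-(1:ℝ)/(d:ℝ))) • (Q * Uᵀ * Q⁻¹) := by
      rw [hfact, Matrix.transpose_smul]
      congr 1
      rw [Matrix.transpose_mul, Matrix.transpose_mul, Matrix.transpose_nonsing_inv, hQsym,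
        Matrix.mul_assoc]
    have hmat : Bᵀ * (Q * Q) * B = ρ • (Q * Q) := by
      rw [hBT, hfact, Matrix.smul_mul, Matrix.mul_smul, Matrix.smul_mul, smul_smul, hr2]
      congr 1
      calc Q * Uᵀ * Q⁻¹ * (Q * Q) * (Q⁻¹ * U * Q)
          = Q * Uᵀ * (Q⁻¹ * (Q * (Q * (Q⁻¹ * (U * Q))))) := by
            simp only [Matrix.mul_assoc]
        _ = Q * Uᵀ * (Q * (Q⁻¹ * (U * Q))) := by
            rw [Matrix.nonsing_inv_mul_cancel_left _ _ hQdet]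
        _ = Q * Uᵀ * (U * Q) := by
            rw [Matrix.mul_nonsing_inv_cancel_left _ _ hQdet]
        _ = Q * (Uᵀ * U) * Q := by simp only [Matrix.mul_assoc]
        _ = Q * Q := by rw [hU, Matrix.mul_one]
    intro x
    have key : (B *ᵥ x) ⬝ᵥ ((Q * Q) *ᵥ (B *ᵥ x)) = x ⬝ᵥ ((Bᵀ * (Q * Q) * B) *ᵥ x) := by
      have h1 : (Bᵀ * (Q * Q) * B) *ᵥ x = Bᵀ *ᵥ ((Q * Q) *ᵥ (B *ᵥ x)) := by
        rw [Matrix.mulVec_mulVec, Matrix.mulVec_mulVec, Matrix.mul_assoc]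
      rw [h1, dotProduct_mulVec x (Bᵀ), Matrix.vecMul_transpose]
    rw [hP, key, hmat, Matrix.smul_mulVec, dotProduct_smul, smul_eq_mul, ← hP]
  -- G on the lattice
  have hGlat : ∀ k : Fin d → ℤ, G (fun i => 2 * Real.pi * (k i : ℝ)) = 0 := by
    intro k
    rw [hG]
    have hsin : ∀ i : Fin d, Real.sin ((2 * Real.pi * ((k i : ℝ))) / 2) = 0 := by
      intro i
      rw [show (2 * Real.pi * ((k i : ℝ))) / 2 = (k i : ℝ) * Real.pi by ring]
      exact Real.sin_int_mul_pi (k i)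
    have hsin2 : ∀ i : Fin d, Real.sin (2 * Real.pi * ((k i : ℝ))) = 0 := by
      intro i
      rw [show 2 * Real.pi * ((k i : ℝ)) = ((2 * k i : ℤ) : ℝ) * Real.pi by push_cast; ring]
      exact Real.sin_int_mul_pi _
    simp [hsin, hsin2]
  -- splitting of G
  have hpt : ∀ t : ℝ, 4 * Real.sin (t/2)^2 = Real.sin t^2 + (1 - Real.cos t)^2 := by
    intro t
    have h1 := Real.sin_sq_eq_half_sub (t/2)
    rw [show 2*(t/2) = t by ring] at h1
    nlinarith [Real.sin_sq_add_cos_sq t]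
  have hGsplit : ∀ x : Fin d → ℝ,
      G x = P (fun i => Real.sin (x i)) + ∑ i, (Q * Q) i i * (1 - Real.cos (x i))^2 := by
    intro x
    rw [hG, hP, quad_expand d (Q * Q) hQ2sym]
    have hA : 4 * (∑ i, (Q * Q) i i * Real.sin (x i / 2)^2)
        = (∑ i, (Q * Q) i i * Real.sin (x i)^2) + ∑ i, (Q * Q) i i * (1 - Real.cos (x i))^2 := by
      rw [Finset.mul_sum, ← Finset.sum_add_distrib]
      refine Finset.sum_congr rfl fun i _ => ?_
      linear_combination ((Q * Q) i i) * (hpt (x i))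
    rw [hA]
    ring
  have hdiagpos : ∀ i, 0 < (Q * Q) i i := by
    intro i
    have hne : (Pi.single i (1:ℝ) : Fin d → ℝ) ≠ 0 := by
      intro h0
      have := congrFun h0 i
      simp at this
    have h := hPpos _ hne
    rw [hP] at h
    have he : (Pi.single i (1:ℝ)) ⬝ᵥ ((Q * Q) *ᵥ (Pi.single i 1)) = (Q * Q) i i := by
      simp [dotProduct, Matrix.mulVec, Pi.single_apply, Finset.mul_sum]
    rw [he] at h
    exact h
  have hGpos : ∀ x : Fin d → ℝ,
      ¬(∃ k : Fin d → ℤ, x = fun i => 2 * Real.pi * ((k i : ℝ))) → 0 < G x := by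
    intro x hx
    have hex : ∃ i, ¬∃ n : ℤ, x i = 2 * Real.pi * (n : ℝ) := by
      by_contra h
      push_neg at h
      choose kk hkk using fun i => h i
      exact hx ⟨kk, funext hkk⟩
    obtain ⟨i0, hi0⟩ := hex
    have hcos : Real.cos (x i0) ≠ 1 := by
      intro hc
      obtain ⟨n, hn⟩ := (Real.cos_eq_one_iff _).mp hc
      exact hi0 ⟨n, by rw [← hn]; ring⟩
    rw [hGsplit]
    have h1 : 0 ≤ P (fun i => Real.sin (x i)) := hPnonneg _
    have h2 : 0 < ∑ i, (Q * Q) i i * (1 - Real.cos (x i))^2 := by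
      apply Finset.sum_pos' (fun i _ => mul_nonneg (le_of_lt (hdiagpos i)) (sq_nonneg _))
      refine ⟨i0, Finset.mem_univ _, mul_pos (hdiagpos i0) (sq_pos_iff.mpr ?_)⟩
      exact sub_ne_zero_of_ne (fun h => hcos h.symm)
    linarith
  -- quartic bound for G - P
  set C : ℝ := 5 * ∑ i, ∑ j, |(Q * Q) i j| with hCdef
  have hC0 : 0 ≤ C := by positivity
  have hGbnd : ∀ x : Fin d → ℝ, (∑ i, (x i)^2) ≤ 1 →
      |G x - P x| ≤ C * (∑ i, (x i)^2)^2 := by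
    intro x hS1
    have hS0 : (0:ℝ) ≤ ∑ i, (x i)^2 := Finset.sum_nonneg fun i _ => sq_nonneg _
    have hxi : ∀ i, (x i)^2 ≤ ∑ i, (x i)^2 :=
      fun i => Finset.single_le_sum (f := fun i => (x i)^2) (fun j _ => sq_nonneg _)
        (Finset.mem_univ i)
    have hdiff : G x - P x = (∑ i, (Q * Q) i i * (4 * Real.sin (x i / 2)^2 - (x i)^2))
        + 2 * ∑ i, ∑ j, (if i < j then
            (Q * Q) i j * (Real.sin (x i) * Real.sin (x j) - x i * x j) else 0) := by
      rw [hG, hP, quad_expand d (Q * Q) hQ2sym]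
      have e1 : ∑ i, (Q * Q) i i * (4 * Real.sin (x i / 2)^2 - (x i)^2)
          = (∑ i, (Q * Q) i i * (4 * Real.sin (x i / 2)^2)) - ∑ i, (Q * Q) i i * (x i)^2 := by
        rw [← Finset.sum_sub_distrib]
        exact Finset.sum_congr rfl fun i _ => by ring
      have e2 : ∑ i, ∑ j, (if i < j then
            (Q * Q) i j * (Real.sin (x i) * Real.sin (x j) - x i * x j) else 0)
          = (∑ i, ∑ j, (if i < j then (Q * Q) i j * Real.sin (x i) * Real.sin (x j) else 0))
            - ∑ i, ∑ j, (if i < j then (Q * Q) i j * x i * x j else 0) := by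
        rw [← Finset.sum_sub_distrib]
        refine Finset.sum_congr rfl fun i _ => ?_
        rw [← Finset.sum_sub_distrib]
        refine Finset.sum_congr rfl fun j _ => ?_
        split_ifs with h
        · ring
        · ring
      rw [e1, e2]
      have e3 : 4 * (∑ i, (Q * Q) i i * Real.sin (x i / 2) ^ 2)
          = ∑ i, (Q * Q) i i * (4 * Real.sin (x i / 2)^2) := by
        rw [Finset.mul_sum]
        exact Finset.sum_congr rfl fun i _ => by ring
      rw [e3]
      ring
    have habs : |G x - P x| ≤ (∑ i, |(Q * Q) i i|) * (∑ i, (x i)^2)^2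
        + 2 * ((∑ i, ∑ j, (if i < j then |(Q * Q) i j| else 0)) * (2 * (∑ i, (x i)^2)^2)) := by
      rw [hdiff]
      have t1 : |∑ i, (Q * Q) i i * (4 * Real.sin (x i / 2)^2 - (x i)^2)|
          ≤ (∑ i, |(Q * Q) i i|) * (∑ i, (x i)^2)^2 := by
        calc |∑ i, (Q * Q) i i * (4 * Real.sin (x i / 2)^2 - (x i)^2)|
            ≤ ∑ i, |(Q * Q) i i * (4 * Real.sin (x i / 2)^2 - (x i)^2)| :=
              Finset.abs_sum_le_sum_abs _ _
          _ ≤ ∑ i, |(Q * Q) i i| * (∑ i, (x i)^2)^2 := by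
              refine Finset.sum_le_sum fun i _ => ?_
              rw [abs_mul]
              exact mul_le_mul_of_nonneg_left (term_a (x i) _ (hxi i) hS1) (abs_nonneg _)
          _ = (∑ i, |(Q * Q) i i|) * (∑ i, (x i)^2)^2 := by rw [Finset.sum_mul]
      have t2 : |∑ i, ∑ j, (if i < j then
            (Q * Q) i j * (Real.sin (x i) * Real.sin (x j) - x i * x j) else 0)|
          ≤ (∑ i, ∑ j, (if i < j then |(Q * Q) i j| else 0)) * (2 * (∑ i, (x i)^2)^2) := by
        calc |∑ i, ∑ j, (if i < j then
              (Q * Q) i j * (Real.sin (x i) * Real.sin (x j) - x i * x j) else 0)|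
            ≤ ∑ i, |∑ j, (if i < j then
              (Q * Q) i j * (Real.sin (x i) * Real.sin (x j) - x i * x j) else 0)| :=
              Finset.abs_sum_le_sum_abs _ _
          _ ≤ ∑ i, ∑ j, |(if i < j then
              (Q * Q) i j * (Real.sin (x i) * Real.sin (x j) - x i * x j) else 0)| :=
              Finset.sum_le_sum fun i _ => Finset.abs_sum_le_sum_abs _ _
          _ ≤ ∑ i, ∑ j, (if i < j then |(Q * Q) i j| else 0) * (2 * (∑ i, (x i)^2)^2) := by
              refine Finset.sum_le_sum fun i _ => Finset.sum_le_sum fun j _ => ?_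
              split_ifs with h
              · rw [abs_mul]
                exact mul_le_mul_of_nonneg_left
                  (term_b (x i) (x j) _ hS0 (hxi i) (hxi j) hS1) (abs_nonneg _)
              · simp
          _ = (∑ i, ∑ j, (if i < j then |(Q * Q) i j| else 0)) * (2 * (∑ i, (x i)^2)^2) := by
              rw [Finset.sum_mul]
              refine Finset.sum_congr rfl fun i _ => ?_
              rw [Finset.sum_mul]
      calc |(∑ i, (Q * Q) i i * (4 * Real.sin (x i / 2)^2 - (x i)^2))
          + 2 * ∑ i, ∑ j, (if i < j then
            (Q * Q) i j * (Real.sin (x i) * Real.sin (x j) - x i * x j) else 0)|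
          ≤ |∑ i, (Q * Q) i i * (4 * Real.sin (x i / 2)^2 - (x i)^2)|
            + 2 * |∑ i, ∑ j, (if i < j then
            (Q * Q) i j * (Real.sin (x i) * Real.sin (x j) - x i * x j) else 0)| := by
            have := abs_add_le (∑ i, (Q * Q) i i * (4 * Real.sin (x i / 2)^2 - (x i)^2))
              (2 * ∑ i, ∑ j, (if i < j then
                (Q * Q) i j * (Real.sin (x i) * Real.sin (x j) - x i * x j) else 0))
            rw [abs_mul, abs_two] at this
            exact this
        _ ≤ _ := by linarith [t1, t2]
    have bound1 : (∑ i, |(Q * Q) i i|) ≤ ∑ i, ∑ j, |(Q * Q) i j| :=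
      Finset.sum_le_sum fun i _ =>
        Finset.single_le_sum (f := fun j => |(Q * Q) i j|) (fun j _ => abs_nonneg _)
          (Finset.mem_univ i)
    have bound2 : (∑ i, ∑ j, (if i < j then |(Q * Q) i j| else 0)) ≤ ∑ i, ∑ j, |(Q * Q) i j| := by
      refine Finset.sum_le_sum fun i _ => Finset.sum_le_sum fun j _ => ?_
      split_ifs with h
      · exact le_refl _
      · exact abs_nonneg _
    have hsq2 : (0:ℝ) ≤ (∑ i, (x i)^2)^2 := sq_nonneg _
    rw [hCdef]
    have p1 := mul_le_mul_of_nonneg_right bound1 hsq2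
    have p2 := mul_le_mul_of_nonneg_right bound2 hsq2
    linarith [habs, p1, p2]
  -- now fix ξ
  intro ξ hξ
  set η : ℕ → (Fin d → ℝ) := fun j => (B ^ j) *ᵥ ξ with hηdef
  have hη0 : η 0 = ξ := by
    rw [hηdef]
    simp [Matrix.one_mulVec]
  have hηsucc : ∀ j, η (j+1) = B *ᵥ η j := by
    intro j
    rw [hηdef]
    simp only
    rw [Matrix.mulVec_mulVec, ← pow_succ']
  have hPη : ∀ j, P (η j) = ρ^j * P ξ := by
    intro j
    induction j with
    | zero => simp [hη0]
    | succ n ih => rw [hηsucc, hPB, ih, pow_succ]; ring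
  have hPξ : 0 < P ξ := hPpos ξ hξ
  have hηne : ∀ j, η j ≠ 0 := by
    intro j h0
    have := hPη j
    rw [h0] at this
    have hz : P (0 : Fin d → ℝ) = 0 := by
      rw [hP]
      simp
    rw [hz] at this
    have : (0:ℝ) < ρ^j * P ξ := mul_pos (pow_pos hρ0 j) hPξ
    linarith
  -- the key limit
  have hsqle : ∀ J, (∑ i, (η J i)^2) ≤ K * (ρ^J * P ξ) := by
    intro J
    calc (∑ i, (η J i)^2) ≤ K * P (η J) := hKP (η J)
      _ = K * (ρ^J * P ξ) := by rw [hPη J]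
  have hsq0 : ∀ J, (0:ℝ) ≤ ∑ i, (η J i)^2 :=
    fun J => Finset.sum_nonneg fun i _ => sq_nonneg _
  have htend0 : Filter.Tendsto (fun J : ℕ => K * (ρ^J * P ξ)) Filter.atTop (nhds 0) := by
    have h1 := tendsto_pow_atTop_nhds_zero_of_lt_one (le_of_lt hρ0) hρ1
    have h2 := (h1.mul_const (P ξ)).const_mul K
    simpa using h2
  have hev1 : ∀ᶠ J in Filter.atTop, (∑ i, (η J i)^2) ≤ 1 := by
    have h1 : ∀ᶠ J in Filter.atTop, K * (ρ^J * P ξ) < 1 :=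
      htend0.eventually_lt_const one_pos
    filter_upwards [h1] with J hJ
    linarith [hsqle J]
  have hGlim : Filter.Tendsto (fun J : ℕ => κ^J * G (η J)) Filter.atTop (nhds (P ξ)) := by
    have hbound : ∀ᶠ J in Filter.atTop,
        |κ^J * G (η J) - P ξ| ≤ (C * K^2 * (P ξ)^2) * ρ^J := by
      filter_upwards [hev1] with J hJ
      have hb := hGbnd (η J) hJ
      have hκJρ : κ^J * ρ^J = 1 := by rw [← mul_pow, hκρ, one_pow]
      have hPJc : κ^J * (ρ^J * P ξ) = P ξ := by rw [← mul_assoc, hκJρ, one_mul]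
      have he : κ^J * G (η J) - P ξ = κ^J * (G (η J) - P (η J)) := by
        rw [mul_sub, hPη J, hPJc]
      rw [he, abs_mul, abs_of_pos (pow_pos hκ0 J)]
      calc κ^J * |G (η J) - P (η J)| ≤ κ^J * (C * (∑ i, (η J i)^2)^2) :=
            mul_le_mul_of_nonneg_left hb (le_of_lt (pow_pos hκ0 J))
        _ ≤ κ^J * (C * (K * (ρ^J * P ξ))^2) := by
            have hsq : (∑ i, (η J i)^2)^2 ≤ (K * (ρ^J * P ξ))^2 := by
              have hkn : (0:ℝ) ≤ K * (ρ^J * P ξ) :=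
                mul_nonneg hK0 (mul_nonneg (le_of_lt (pow_pos hρ0 J)) (le_of_lt hPξ))
              apply sq_le_sq' _ (hsqle J)
              linarith [hsq0 J]
            exact mul_le_mul_of_nonneg_left
              (mul_le_mul_of_nonneg_left hsq hC0) (le_of_lt (pow_pos hκ0 J))
        _ = (C * K^2 * (P ξ)^2) * ρ^J := by
            have h1 : κ^J * (ρ^J * ρ^J) = ρ^J := by rw [← mul_assoc, hκJρ, one_mul]
            linear_combination (C * K^2 * (P ξ)^2) * h1
    have h0 : Filter.Tendsto (fun J : ℕ => (C * K^2 * (P ξ)^2) * ρ^J)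
        Filter.atTop (nhds 0) := by
      have h1 := tendsto_pow_atTop_nhds_zero_of_lt_one (le_of_lt hρ0) hρ1
      simpa using h1.const_mul (C * K^2 * (P ξ)^2)
    have h2 : Filter.Tendsto (fun J : ℕ => κ^J * G (η J) - P ξ) Filter.atTop (nhds 0) :=
      squeeze_zero_norm' (by simpa [Real.norm_eq_abs] using hbound) h0
    exact tendsto_sub_nhds_zero_iff.mp h2
  by_cases hall : ∀ j : ℕ, ¬(∃ k : Fin d → ℤ, η j = fun i => 2 * Real.pi * ((k i : ℝ)))
  · -- Case A: no iterate is a lattice point; telescoping works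
    have hGη : ∀ j, G (η j) ≠ 0 := fun j => ne_of_gt (hGpos _ (hall j))
    have hμη : ∀ j, μ (η j) = κ * m0 (η (j+1)) * G (η (j+1)) / G (η j) := by
      intro j
      have h2 := hμ2 (η j) (hall j)
      rw [← hηsucc j] at h2
      exact h2
    have hid : ∀ J : ℕ, (∏ j ∈ Finset.range J, μ (η j)) * G ξ
        = κ^J * (∏ j ∈ Finset.Icc 1 J, m0 (η j)) * G (η J) := by
      intro J
      induction J with
      | zero => simp [hη0]
      | succ n ih =>
        rw [Finset.prod_range_succ, Finset.prod_Icc_succ_top (Nat.succ_le_succ (Nat.zero_le n)),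
          hμη n]
        calc (∏ j ∈ Finset.range n, μ (η j)) * (κ * m0 (η (n+1)) * G (η (n+1)) / G (η n)) * G ξ
            = ((∏ j ∈ Finset.range n, μ (η j)) * G ξ)
              * (κ * m0 (η (n+1)) * G (η (n+1))) / G (η n) := by ring
          _ = (κ^n * (∏ j ∈ Finset.Icc 1 n, m0 (η j)) * G (η n))
              * (κ * m0 (η (n+1)) * G (η (n+1))) / G (η n) := by rw [ih]
          _ = κ^(n+1) * ((∏ j ∈ Finset.Icc 1 n, m0 (η j)) * m0 (η (n+1))) * G (η (n+1)) := by
              field_simp [hGη n]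
              ring
    have hfinal : ∀ J : ℕ, (∏ j ∈ Finset.Icc 1 J, m0 (η j))
        = (∏ j ∈ Finset.range J, μ (η j)) * G ξ / (κ^J * G (η J)) := by
      intro J
      rw [hid J, eq_div_iff (mul_ne_zero (ne_of_gt (pow_pos hκ0 J)) (hGη J))]
      ring
    have hnum : Filter.Tendsto (fun J : ℕ => (∏ j ∈ Finset.range J, μ (η j)) * G ξ)
        Filter.atTop (nhds (M ξ * G ξ)) := (hM ξ).mul_const _
    have hdiv := hnum.div hGlim (ne_of_gt hPξ)
    have hfin2 : Filter.Tendsto (fun J : ℕ => ∏ j ∈ Finset.Icc 1 J, m0 (η j))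
        Filter.atTop (nhds (M ξ * G ξ / P ξ)) := by
      apply hdiv.congr
      intro J
      exact (hfinal J).symm
    have hcomm : M ξ * G ξ / P ξ = G ξ * M ξ / P ξ := by ring
    rw [hcomm] at hfin2
    exact hfin2
  · -- Case B: some iterate is a lattice point
    push_neg at hall
    have hlatbig : ∀ j : ℕ, (∃ k : Fin d → ℤ, η j = fun i => 2 * Real.pi * ((k i : ℝ))) →
        (2:ℝ) ≤ ∑ i, (η j i)^2 := by
      rintro j ⟨k, hk⟩
      have hkne : ∃ i, k i ≠ 0 := by
        by_contra h
        push_neg at h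
        apply hηne j
        rw [hk]
        funext i
        simp [h i]
      obtain ⟨i0, hi0⟩ := hkne
      have h1 : (2:ℝ) ≤ (η j i0)^2 := by
        have he : η j i0 = 2 * Real.pi * ((k i0 : ℝ)) := by rw [hk]
        rw [he]
        have hπ : (3:ℝ) < Real.pi := Real.pi_gt_three
        have hk1 : (1:ℝ) ≤ |((k i0 : ℝ))| := by
          rw [← Int.cast_abs]
          exact_mod_cast Int.one_le_abs hi0
        have hc2 : (1:ℝ) ≤ ((k i0 : ℝ))^2 := by nlinarith [sq_abs ((k i0 : ℝ))]
        have hπ2 : (9:ℝ) ≤ Real.pi^2 := by nlinarith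
        have h36 := mul_le_mul hπ2 hc2 (by norm_num) (by positivity)
        nlinarith [h36]
      calc (2:ℝ) ≤ (η j i0)^2 := h1
        _ ≤ ∑ i, (η j i)^2 := Finset.single_le_sum (f := fun i => (η j i)^2)
              (fun i _ => sq_nonneg _) (Finset.mem_univ _)
    set T : Set ℕ := {j | ∃ k : Fin d → ℤ, η j = fun i => 2 * Real.pi * ((k i : ℝ))} with hT
    have hTne : T.Nonempty := hall
    have hTbdd : BddAbove T := by
      obtain ⟨N, hN⟩ := Filter.eventually_atTop.mp hev1
      refine ⟨N, fun j hj => ?_⟩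
      by_contra hc
      have hjN : N ≤ j := by omega
      have h1 := hN j hjN
      have h2 := hlatbig j hj
      linarith
    set j0 : ℕ := sSup T with hj0
    have hj0T : j0 ∈ T := Nat.sSup_mem hTne hTbdd
    have hmax : ∀ j, j0 < j → j ∉ T := fun j hj hjT => absurd (le_csSup hTbdd hjT) (not_le.mpr hj)
    obtain ⟨k, hk⟩ := hj0T
    set w : Fin d → ℝ := B *ᵥ (fun i => ((k i : ℝ))) with hw
    have hkfun : (fun i => 2 * Real.pi * ((k i : ℝ))) = (2 * Real.pi) • (fun i => ((k i : ℝ))) := by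
      funext i
      simp [Pi.smul_apply, smul_eq_mul]
    have hηj1 : η (j0+1) = (2 * Real.pi) • w := by
      rw [hηsucc, hk, hkfun, Matrix.mulVec_smul]
    have hwint : ¬∃ m : Fin d → ℤ, w = fun i => ((m i : ℝ)) := by
      rintro ⟨m, hm⟩
      apply hmax (j0+1) (Nat.lt_succ_self j0)
      refine ⟨m, ?_⟩
      rw [hηj1, hm]
      funext i
      simp [Pi.smul_apply, smul_eq_mul]
    set s0 : Fin d → ℝ := fun i => Int.fract (-(w i)) with hs0
    choose Z hZ using hAint
    have hATw : Aᵀ *ᵥ w = fun i => ((k i : ℝ)) := by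
      rw [hw, Matrix.mulVec_mulVec, hATB, Matrix.one_mulVec]
    have hs0SA : s0 ∈ SA := by
      rw [hSA]
      constructor
      · intro i
        exact ⟨Int.fract_nonneg _, Int.fract_lt_one _⟩
      · refine ⟨fun i => -(k i) - ∑ j, Z j i * ⌊-(w j)⌋, ?_⟩
        funext i
        have h1 : (Aᵀ *ᵥ s0) i = ∑ j, A j i * (-(w j) - (⌊-(w j)⌋ : ℝ)) := by
          simp only [Matrix.mulVec, dotProduct, Matrix.transpose_apply, hs0]
          refine Finset.sum_congr rfl fun j _ => ?_
          rw [← Int.self_sub_floor]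
        have h2 : ∑ j, A j i * w j = ((k i : ℝ)) := by
          have h3 := congrFun hATw i
          simpa [Matrix.mulVec, dotProduct, Matrix.transpose_apply] using h3
        have h5 : ∑ j, A j i * (-(w j) - (⌊-(w j)⌋ : ℝ))
            = (∑ j, A j i * (-(w j))) - ∑ j, A j i * ((⌊-(w j)⌋ : ℤ) : ℝ) := by
          rw [← Finset.sum_sub_distrib]
          exact Finset.sum_congr rfl fun j _ => by ring
        have h4 : ∑ j, A j i * (-(w j)) = -((k i : ℝ)) := by
          simp only [mul_neg]
          rw [Finset.sum_neg_distrib, h2]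
        rw [h1, h5, h4]
        push_cast
        congr 1
        refine Finset.sum_congr rfl fun j _ => ?_
        rw [hZ j i]
    have hs0ne : s0 ≠ 0 := by
      intro h0
      apply hwint
      refine ⟨fun i => -⌊-(w i)⌋, ?_⟩
      funext i
      have h1 : Int.fract (-(w i)) = 0 := by simpa [hs0] using congrFun h0 i
      rw [← Int.self_sub_floor] at h1
      push_cast
      linarith
    have hGzero : G (η (j0+1) + (2 * Real.pi) • s0) = 0 := by
      have he : η (j0+1) + (2 * Real.pi) • s0 = fun i => 2 * Real.pi * (((-⌊-(w i)⌋ : ℤ) : ℝ)) := by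
        funext i
        rw [hηj1]
        simp only [Pi.add_apply, Pi.smul_apply, smul_eq_mul, hs0]
        rw [← Int.self_sub_floor]
        push_cast
        ring
      rw [he]
      exact hGlat _
    -- SA is a finite set
    have hSAfin : SA.Finite := by
      set N : ℤ := ⌈∑ p, ∑ r, |A p r|⌉ with hN
      have hfinK : {kk : Fin d → ℤ | ∀ i, kk i ∈ Set.Icc (-N) N}.Finite := by
        apply Set.Finite.subset (Set.Finite.pi (fun i : Fin d => Set.finite_Icc (-N) N))
        intro kk hkk
        rw [Set.mem_pi]
        exact fun i _ => hkk i
      apply Set.Finite.subset (hfinK.image (fun kk : Fin d → ℤ => B *ᵥ (fun i => ((kk i : ℝ)))))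
      intro s hs
      rw [hSA] at hs
      obtain ⟨hsIco, kk, hkk⟩ := hs
      refine ⟨kk, ?_, ?_⟩
      · intro i
        have h1 : ∑ j, A j i * s j = ((kk i : ℝ)) := by
          have h3 := congrFun hkk i
          simpa [Matrix.mulVec, dotProduct, Matrix.transpose_apply] using h3
        have h2 : |((kk i : ℝ))| ≤ ∑ p, ∑ r, |A p r| := by
          calc |((kk i : ℝ))| = |∑ j, A j i * s j| := by rw [h1]
            _ ≤ ∑ j, |A j i * s j| := Finset.abs_sum_le_sum_abs _ _
            _ ≤ ∑ j, |A j i| := by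
                refine Finset.sum_le_sum fun j _ => ?_
                rw [abs_mul]
                have hsj := hsIco j
                have hs1 : |s j| ≤ 1 := by
                  rw [abs_of_nonneg hsj.1]
                  linarith [hsj.2]
                nlinarith [abs_nonneg (A j i)]
            _ ≤ ∑ p, ∑ r, |A p r| := by
                refine Finset.sum_le_sum fun j _ => ?_
                exact Finset.single_le_sum (f := fun r => |A j r|) (fun r _ => abs_nonneg _)
                  (Finset.mem_univ i)
        have h3 : |kk i| ≤ N := by
          have h4 : ((|kk i| : ℤ) : ℝ) ≤ ((N : ℤ) : ℝ) := by
            rw [Int.cast_abs]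
            calc |((kk i : ℝ))| ≤ ∑ p, ∑ r, |A p r| := h2
              _ ≤ ((N : ℤ) : ℝ) := Int.le_ceil _
          exact_mod_cast h4
        exact Set.mem_Icc.mpr (abs_le.mp h3)
      · show B *ᵥ (fun i => ((kk i : ℝ))) = s
        rw [← hkk, Matrix.mulVec_mulVec, hBAT, Matrix.one_mulVec]
    -- m0 vanishes at η (j0+1)
    have hm0zero : m0 (η (j0+1)) = 0 := by
      rw [hm0]
      have hfin : (SA \ {0}).Finite := hSAfin.subset Set.diff_subset
      rw [finprod_mem_eq_finite_toFinset_prod _ hfin]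
      rw [Finset.prod_eq_zero (hfin.mem_toFinset.mpr ⟨hs0SA, hs0ne⟩) hGzero]
      exact zero_div _
    -- the partial products are eventually zero
    have hLHS : ∀ᶠ J in Filter.atTop, (∏ j ∈ Finset.Icc 1 J, m0 (η j)) = 0 := by
      filter_upwards [Filter.eventually_ge_atTop (j0+1)] with J hJ
      exact Finset.prod_eq_zero (Finset.mem_Icc.mpr ⟨Nat.succ_le_succ (Nat.zero_le j0), hJ⟩)
        hm0zero
    -- the limit value is zero
    have hGM : G ξ * M ξ = 0 := by
      by_cases hξL : ∃ kk : Fin d → ℤ, ξ = fun i => 2 * Real.pi * ((kk i : ℝ))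
      · obtain ⟨kk, hkk⟩ := hξL
        rw [hkk, hGlat kk, zero_mul]
      · set j1 : ℕ := sInf T with hj1
        have hj1T : j1 ∈ T := Nat.sInf_mem hTne
        have hj1pos : j1 ≠ 0 := by
          intro h0
          apply hξL
          rw [← hη0]
          rw [h0] at hj1T
          exact hj1T
        obtain ⟨n, hn⟩ := Nat.exists_eq_succ_of_ne_zero hj1pos
        have hnT : n ∉ T := fun h => absurd (Nat.sInf_le h) (by omega)
        have hμzero : μ (η n) = 0 := by
          have h2 := hμ2 (η n) hnT
          rw [← hηsucc n] at h2
          have hGn1 : G (η (n+1)) = 0 := by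
            obtain ⟨kk, hkk⟩ := hj1T
            rw [hn] at hkk
            rw [hkk]
            exact hGlat kk
          rw [h2, hGn1]
          simp
        have hMzero : M ξ = 0 := by
          have h1 : Filter.Tendsto (fun J : ℕ => ∏ j ∈ Finset.range J, μ (η j))
              Filter.atTop (nhds 0) := by
            apply Filter.Tendsto.congr' _ tendsto_const_nhds
            filter_upwards [Filter.eventually_ge_atTop (n+1)] with J hJ
            exact (Finset.prod_eq_zero (Finset.mem_range.mpr (by omega)) hμzero).symm
          exact tendsto_nhds_unique (hM ξ) h1
        rw [hMzero, mul_zero]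
    have hval : G ξ * M ξ / P ξ = 0 := by rw [hGM, zero_div]
    rw [hval]
    apply Filter.Tendsto.congr' _ tendsto_const_nhds
    filter_upwards [hLHS] with J h
    exact h.symm
end

section
/- In the elliptic setup, let m ≥ 1 be an integer and define φ̂^m(ξ) := (G(ξ)M(ξ)/P(ξ))^m for ξ ≠ 0 and φ̂^m(0) := 1. Then φ̂^m(ξ) ≥ 0 for all ξ ∈ ℝ^d (so that the elliptic scaling function of order m is totally positive). -/
open Matrix

/-- In the elliptic setup, `φ̂^m(ξ) ≥ 0` for all `ξ`, so the elliptic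
scaling function of order `m` is totally positive. -/
theorem elliptic_stmt17
    (d : ℕ) (hd : 0 < d)
    (A U Q : Matrix (Fin d) (Fin d) ℝ)
    (hAint : ∀ i j, ∃ z : ℤ, A i j = (z : ℝ))
    (hAeig : ∀ z : ℂ, (Matrix.charpoly (A.map Complex.ofReal)).IsRoot z →
      1 < ‖z‖)
    (hAdiag : ∃ Pm D : Matrix (Fin d) (Fin d) ℂ, IsUnit Pm ∧ D.IsDiag ∧
      A.map Complex.ofReal = Pm * D * Pm⁻¹)
    (hAiso : ∀ z w : ℂ, (Matrix.charpoly (A.map Complex.ofReal)).IsRoot z →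
      (Matrix.charpoly (A.map Complex.ofReal)).IsRoot w → ‖z‖ = ‖w‖)
    (q : ℝ) (hq : q = |A.det|)
    (hU : Uᵀ * U = 1)
    (hQsym : Qᵀ = Q)
    (hQpos : ∀ x : Fin d → ℝ, x ≠ 0 → 0 < x ⬝ᵥ (Q *ᵥ x))
    (hfact : (Aᵀ)⁻¹ = (q ^ (-(1:ℝ)/(d:ℝ))) • (Q⁻¹ * U * Q))
    (P : (Fin d → ℝ) → ℝ)
    (hP : ∀ ξ, P ξ = ξ ⬝ᵥ ((Q * Q) *ᵥ ξ))
    (G : (Fin d → ℝ) → ℝ)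
    (hG : ∀ ξ, G ξ = 4 * (∑ i, (Q * Q) i i * Real.sin (ξ i / 2) ^ 2)
      + 2 * (∑ i, ∑ j, if i < j then (Q * Q) i j * Real.sin (ξ i) * Real.sin (ξ j) else 0))
    (SA : Set (Fin d → ℝ))
    (hSA : SA = {s | (∀ i, s i ∈ Set.Ico (0:ℝ) 1) ∧
      ∃ k : Fin d → ℤ, Aᵀ *ᵥ s = fun i => (k i : ℝ)})
    (m0 : (Fin d → ℝ) → ℝ)
    (hm0 : ∀ ξ, m0 ξ = (∏ᶠ s ∈ SA \ {0}, G (ξ + (2 * Real.pi) • s)) /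
      (∏ᶠ s ∈ SA \ {0}, G ((2 * Real.pi) • s)))
    (μ : (Fin d → ℝ) → ℝ)
    (hμ1 : ∀ ξ : Fin d → ℝ, (∃ k : Fin d → ℤ, ξ = fun i => 2 * Real.pi * (k i : ℝ)) →
      μ ξ = 1)
    (hμ2 : ∀ ξ : Fin d → ℝ, ¬ (∃ k : Fin d → ℤ, ξ = fun i => 2 * Real.pi * (k i : ℝ)) →
      μ ξ = q ^ ((2:ℝ)/(d:ℝ)) * m0 ((Aᵀ)⁻¹ *ᵥ ξ) * G ((Aᵀ)⁻¹ *ᵥ ξ) / G ξ)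
    (M : (Fin d → ℝ) → ℝ)
    (hM : ∀ ξ : Fin d → ℝ, Filter.Tendsto
      (fun J : ℕ => ∏ j ∈ Finset.range J, μ ((((Aᵀ)⁻¹) ^ j) *ᵥ ξ))
      Filter.atTop (nhds (M ξ)))
    (m : ℕ) (hm : 1 ≤ m)
    (phim : (Fin d → ℝ) → ℝ)
    (hphim : ∀ ξ : Fin d → ℝ, ξ ≠ 0 → phim ξ = (G ξ * M ξ / P ξ) ^ m)
    (hphim0 : phim 0 = 1) :
    ∀ ξ : Fin d → ℝ, 0 ≤ phim ξ := by

  -- entrywise symmetry of Q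
  have hQs : ∀ i j, Q i j = Q j i := by
    intro i j
    conv_rhs => rw [← hQsym]
    rfl
  -- diagonal entries of Q² are nonnegative
  have hq2ii : ∀ i, 0 ≤ (Q * Q) i i := by
    intro i
    rw [Matrix.mul_apply]
    exact Finset.sum_nonneg fun k _ => by rw [hQs i k]; exact mul_self_nonneg _
  -- the quadratic form of Q² is nonnegative
  have hquad : ∀ s : Fin d → ℝ, 0 ≤ s ⬝ᵥ ((Q * Q) *ᵥ s) := by
    intro s
    have h1 : s ⬝ᵥ ((Q * Q) *ᵥ s) = (Q *ᵥ s) ⬝ᵥ (Q *ᵥ s) := by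
      rw [← Matrix.mulVec_mulVec, Matrix.dotProduct_mulVec, ← Matrix.mulVec_transpose, hQsym]
    rw [h1]
    exact Finset.sum_nonneg fun i _ => mul_self_nonneg _
  -- symmetric double-sum splitting
  have hsplit : ∀ F : Fin d → Fin d → ℝ, (∀ i j, F i j = F j i) →
      ∑ i, ∑ j, F i j = ∑ i, F i i + 2 * ∑ i, ∑ j, (if i < j then F i j else 0) := by
    intro F hsym
    have key : ∀ i j : Fin d, F i j =
        (if i < j then F i j else 0) + (if j < i then F i j else 0)
          + (if i = j then F i j else 0) := by
      intro i j
      rcases lt_trichotomy i j with h | h | h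
      · simp [h, not_lt_of_gt h, h.ne]
      · simp [h]
      · simp [h, not_lt_of_gt h, h.ne']
    calc ∑ i, ∑ j, F i j
        = ∑ i, ∑ j, ((if i < j then F i j else 0) + (if j < i then F i j else 0)
            + (if i = j then F i j else 0)) := by
          exact Finset.sum_congr rfl fun i _ => Finset.sum_congr rfl fun j _ => key i j
      _ = (∑ i, ∑ j, (if i < j then F i j else 0)) + (∑ i, ∑ j, (if j < i then F i j else 0))
            + (∑ i, ∑ j, (if i = j then F i j else 0)) := by
          simp [Finset.sum_add_distrib]
      _ = ∑ i, F i i + 2 * ∑ i, ∑ j, (if i < j then F i j else 0) := by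
          have h2 : (∑ i, ∑ j, (if j < i then F i j else 0))
              = ∑ i, ∑ j, (if i < j then F i j else 0) := by
            rw [Finset.sum_comm]
            exact Finset.sum_congr rfl fun i _ => Finset.sum_congr rfl fun j _ => by
              rw [hsym]
          have h3 : (∑ i, ∑ j, (if i = j then F i j else 0)) = ∑ i, F i i := by
            refine Finset.sum_congr rfl fun i _ => ?_
            simp [Finset.sum_ite_eq]
          rw [h2, h3]; ring
  -- G is nonnegative
  have hGnn : ∀ ξ, 0 ≤ G ξ := by
    intro ξ
    rw [hG ξ]
    have hdot : (fun i => Real.sin (ξ i)) ⬝ᵥ ((Q * Q) *ᵥ fun i => Real.sin (ξ i))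
        = ∑ i, ∑ j, (Q * Q) i j * Real.sin (ξ i) * Real.sin (ξ j) := by
      simp only [dotProduct, Matrix.mulVec, Finset.mul_sum]
      exact Finset.sum_congr rfl fun i _ => Finset.sum_congr rfl fun j _ => by ring
    have hsym : ∀ i j, (Q * Q) i j * Real.sin (ξ i) * Real.sin (ξ j)
        = (Q * Q) j i * Real.sin (ξ j) * Real.sin (ξ i) := by
      intro i j
      have : (Q * Q) i j = (Q * Q) j i := by
        simp only [Matrix.mul_apply]
        refine Finset.sum_congr rfl fun k _ => ?_
        rw [hQs i k, hQs k j, mul_comm]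
      rw [this]; ring
    have hdot2 := hsplit (fun i j => (Q * Q) i j * Real.sin (ξ i) * Real.sin (ξ j)) hsym
    have hq0 : (0:ℝ) ≤ (fun i => Real.sin (ξ i)) ⬝ᵥ ((Q * Q) *ᵥ fun i => Real.sin (ξ i)) :=
      hquad _
    rw [hdot, hdot2] at hq0
    have hdiag : ∑ i, (Q * Q) i i * Real.sin (ξ i) * Real.sin (ξ i)
        ≤ ∑ i, (Q * Q) i i * (4 * Real.sin (ξ i / 2) ^ 2) := by
      refine Finset.sum_le_sum fun i _ => ?_
      have hsin : Real.sin (ξ i) = 2 * Real.sin (ξ i / 2) * Real.cos (ξ i / 2) := by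
        rw [← Real.sin_two_mul]; ring_nf
      have hc : Real.cos (ξ i / 2) ^ 2 ≤ 1 := Real.cos_sq_le_one _
      have hs : (0:ℝ) ≤ Real.sin (ξ i / 2) ^ 2 := sq_nonneg _
      have h4 : Real.sin (ξ i) * Real.sin (ξ i) ≤ 4 * Real.sin (ξ i / 2) ^ 2 := by
        rw [hsin]; nlinarith
      calc (Q * Q) i i * Real.sin (ξ i) * Real.sin (ξ i)
          = (Q * Q) i i * (Real.sin (ξ i) * Real.sin (ξ i)) := by ring
        _ ≤ (Q * Q) i i * (4 * Real.sin (ξ i / 2) ^ 2) :=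
            mul_le_mul_of_nonneg_left h4 (hq2ii i)
    have hsum4 : ∑ i, (Q * Q) i i * (4 * Real.sin (ξ i / 2) ^ 2)
        = 4 * ∑ i, (Q * Q) i i * Real.sin (ξ i / 2) ^ 2 := by
      rw [Finset.mul_sum]
      exact Finset.sum_congr rfl fun i _ => by ring
    rw [hsum4] at hdiag
    linarith
  -- m0 is nonnegative
  have hm0nn : ∀ ξ, 0 ≤ m0 ξ := by
    intro ξ
    rw [hm0 ξ]
    refine div_nonneg ?_ ?_
    · exact finprod_nonneg fun s => finprod_nonneg fun _ => hGnn _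
    · exact finprod_nonneg fun s => finprod_nonneg fun _ => hGnn _
  -- μ is nonnegative
  have hqnn : 0 ≤ q := hq ▸ abs_nonneg _
  have hμnn : ∀ ξ, 0 ≤ μ ξ := by
    intro ξ
    by_cases h : ∃ k : Fin d → ℤ, ξ = fun i => 2 * Real.pi * (k i : ℝ)
    · rw [hμ1 ξ h]; norm_num
    · rw [hμ2 ξ h]
      refine div_nonneg (mul_nonneg (mul_nonneg ?_ (hm0nn _)) (hGnn _)) (hGnn _)
      exact Real.rpow_nonneg hqnn _
  -- M is nonnegative
  have hMnn : ∀ ξ, 0 ≤ M ξ := by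
    intro ξ
    exact ge_of_tendsto' (hM ξ) fun J => Finset.prod_nonneg fun j _ => hμnn _
  -- conclusion
  intro ξ
  by_cases hξ : ξ = 0
  · rw [hξ, hphim0]; norm_num
  · rw [hphim ξ hξ]
    refine pow_nonneg (div_nonneg (mul_nonneg (hGnn ξ) (hMnn ξ)) ?_) m
    rw [hP]
    exact hquad ξ
end
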